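/- arXiv:2005.03078 — 8 statements merged into one kernel-verified Lean document; each statement's English description precedes it below -/
import Mathlib

section
/- For all integers q ≥ t ≥ 2 there exists an integer m₀ such that for every m ≥ m₀ there is a coloring φ of the unordered pairs of the set U = {0, 1, …, ⌊(q/(t-1))^{m/4}⌋ - 1} with q colors such that every subset of U of size m contains pairs of at least t distinct colors. -/
open Finset

private lemma count_pi_aux {α β : Type*} [Fintype α] [DecidableEq α] [Fintype β] [DecidableEq β]
    (s : Finset α) (T : Finset β) :
    (Finset.univ.filter fun f : α → β => ∀ a ∈ s, f a ∈ T).card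
      = T.card ^ s.card * (Fintype.card β) ^ (Fintype.card α - s.card) := by
  classical
  have h1 : (Finset.univ.filter fun f : α → β => ∀ a ∈ s, f a ∈ T)
      = (Finset.univ.filter fun f : α → β =>
          ∀ a, f a ∈ (if a ∈ s then T else Finset.univ)) := by
    apply filter_congr
    intro f _
    constructor
    · intro h a
      by_cases ha : a ∈ s <;> simp [ha, h a]
    · intro h a ha
      simpa [ha] using h a
  rw [h1]
  have h2 : (Finset.univ.filter fun f : α → β =>
        ∀ a, f a ∈ (if a ∈ s then T else Finset.univ)).card
      = Fintype.card {f : α → β // ∀ a, f a ∈ (if a ∈ s then T else Finset.univ)} :=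
    (Fintype.card_subtype _).symm
  rw [h2, Fintype.card_congr Equiv.subtypePiEquivPi, Fintype.card_pi]
  have h3 : ∀ a : α, Fintype.card {b : β // b ∈ (if a ∈ s then T else Finset.univ)}
      = if a ∈ s then T.card else Fintype.card β := by
    intro a
    by_cases ha : a ∈ s <;> simp [ha, Fintype.card_subtype]
  simp only [h3]
  rw [prod_ite (fun _ => T.card) (fun _ => Fintype.card β), prod_const, prod_const]
  congr 1
  · congr 1
    simp
  · congr 1
    rw [← Finset.card_compl]
    congr 1
    ext a
    simp

private lemma key_ineq_aux (q t n₀ m : ℕ) (ht : 2 ≤ t) (hq : t ≤ q)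
    (hn₀ : (q:ℝ)^(t-1) < ((q:ℝ)/((t:ℝ)-1))^n₀) (hm : 4*n₀+3 ≤ m) :
    (⌊((q:ℝ)/((t:ℝ)-1)) ^ ((m:ℝ)/4)⌋₊).choose m * q.choose (t-1) * (t-1)^(m.choose 2)
      < q ^ (m.choose 2) := by
  set r : ℝ := (q:ℝ)/((t:ℝ)-1) with hr
  set N : ℕ := ⌊r ^ ((m:ℝ)/4)⌋₊ with hNdef
  set k : ℕ := m.choose 2 with hk
  set u : ℕ := t - 1 with hu
  have hucast : (u:ℝ) = (t:ℝ) - 1 := by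
    rw [hu]; push_cast [Nat.cast_sub (by omega : 1 ≤ t)]; ring
  have ht2 : (2:ℝ) ≤ (t:ℝ) := by exact_mod_cast ht
  have hu0 : (0:ℝ) < u := by rw [hucast]; linarith
  have hq0 : (0:ℝ) < q := by exact_mod_cast (by omega : 0 < q)
  have hr1 : 1 < r := by
    rw [hr, lt_div_iff₀ (by rw [← hucast]; exact hu0)]
    have h1 : (t:ℝ) ≤ q := by exact_mod_cast hq
    linarith
  have hr0 : (0:ℝ) < r := lt_trans one_pos hr1
  have hN : (N:ℝ) ≤ r ^ ((m:ℝ)/4) := Nat.floor_le (Real.rpow_nonneg hr0.le _)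
  have hchoose1 : (N.choose m : ℝ) ≤ (N:ℝ)^m := by
    exact_mod_cast le_trans (Nat.choose_le_descFactorial N m) (Nat.descFactorial_le_pow N m)
  have hchoose2 : (q.choose u : ℝ) ≤ (q:ℝ)^u := by
    exact_mod_cast le_trans (Nat.choose_le_descFactorial q u) (Nat.descFactorial_le_pow q u)
  have hkcast : (k:ℝ) = (m:ℝ) * ((m:ℝ) - 1) / 2 := by rw [hk, Nat.cast_choose_two]
  have hexp : (m:ℝ)/4 * m + n₀ ≤ (k:ℝ) := by
    rw [hkcast]
    have hm' : (4*n₀+3 : ℝ) ≤ m := by exact_mod_cast hm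
    have hn0' : (0:ℝ) ≤ n₀ := by positivity
    nlinarith
  have hru : r * u = q := by
    rw [hr, hucast, div_mul_cancel₀]
    rw [← hucast]; exact ne_of_gt hu0
  have main : (N:ℝ)^m * (q:ℝ)^u * (u:ℝ)^k < (q:ℝ)^k := by
    have h1 : (N:ℝ)^m ≤ r ^ ((m:ℝ)/4 * m) := by
      calc (N:ℝ)^m ≤ (r ^ ((m:ℝ)/4))^m := pow_le_pow_left₀ (Nat.cast_nonneg N) hN m
        _ = r ^ ((m:ℝ)/4 * m) := by
            rw [← Real.rpow_natCast (r ^ ((m:ℝ)/4)) m, ← Real.rpow_mul hr0.le]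
    have h2 : (q:ℝ)^u < r ^ (n₀:ℝ) := by
      rw [Real.rpow_natCast]
      convert hn₀ using 2
    calc (N:ℝ)^m * (q:ℝ)^u * (u:ℝ)^k
        ≤ r ^ ((m:ℝ)/4 * m) * (q:ℝ)^u * (u:ℝ)^k := by
          have := pow_pos hu0 k
          gcongr
        _ < r ^ ((m:ℝ)/4 * m) * r ^ (n₀:ℝ) * (u:ℝ)^k := by
          have h3 : (0:ℝ) < r ^ ((m:ℝ)/4 * m) := Real.rpow_pos_of_pos hr0 _
          have h4 := pow_pos hu0 k
          gcongr
        _ = r ^ ((m:ℝ)/4 * m + (n₀:ℝ)) * (u:ℝ)^k := by rw [← Real.rpow_add hr0]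
        _ ≤ r ^ ((k:ℝ)) * (u:ℝ)^k := by
          exact mul_le_mul_of_nonneg_right
            (Real.rpow_le_rpow_of_exponent_le hr1.le hexp) (pow_nonneg hu0.le k)
        _ = (r * u)^k := by rw [Real.rpow_natCast, ← mul_pow]
        _ = (q:ℝ)^k := by rw [hru]
  have final : ((N.choose m * q.choose u * u^k : ℕ) : ℝ) < (((q:ℕ)^k : ℕ) : ℝ) := by
    push_cast
    calc (N.choose m : ℝ) * (q.choose u : ℝ) * (u:ℝ)^k
        ≤ (N:ℝ)^m * (q:ℝ)^u * (u:ℝ)^k := by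
          have hh := pow_pos hu0 k
          gcongr <;> positivity
      _ < (q:ℝ)^k := main
  exact_mod_cast final

private lemma count_bad_aux (q t N m : ℕ) (ht : 2 ≤ t) (hq : t ≤ q)
    (P : Finset (Finset ℕ)) (hP : P = (Finset.range N).powersetCard 2)
    (φof : (↥P → Fin q) → Finset ℕ → Fin q)
    (hφof : ∀ c p (h : p ∈ P), φof c p = c ⟨p, h⟩) :
    (Finset.univ.filter (fun c : ↥P → Fin q => ∃ A ∈ (Finset.range N).powersetCard m,
      ((A.powersetCard 2).image (φof c)).card < t)).card
      ≤ N.choose m * (q.choose (t-1) * ((t-1)^(m.choose 2) * q^(P.card - m.choose 2))) := by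
  classical
  set S := ((Finset.range N).powersetCard m).biUnion (fun A =>
      ((Finset.univ : Finset (Fin q)).powersetCard (t-1)).biUnion (fun T =>
        Finset.univ.filter (fun c : ↥P → Fin q => ∀ p ∈ A.powersetCard 2, φof c p ∈ T)))
    with hS
  have hsub : (Finset.univ.filter (fun c : ↥P → Fin q => ∃ A ∈ (Finset.range N).powersetCard m,
      ((A.powersetCard 2).image (φof c)).card < t)) ⊆ S := by
    intro c hc
    rw [Finset.mem_filter] at hc
    obtain ⟨-, A, hA, hcard⟩ := hc
    obtain ⟨T, hTsub, hTcard⟩ := Finset.exists_superset_card_eq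
      (show ((A.powersetCard 2).image (φof c)).card ≤ t - 1 by omega)
      (by simp [Fintype.card_fin]; omega)
    rw [hS]
    refine Finset.mem_biUnion.mpr ⟨A, hA, Finset.mem_biUnion.mpr ⟨T, ?_, ?_⟩⟩
    · rw [Finset.mem_powersetCard_univ]; exact hTcard
    · rw [Finset.mem_filter]
      exact ⟨Finset.mem_univ _, fun p hp => hTsub (Finset.mem_image_of_mem _ hp)⟩
  refine le_trans (Finset.card_le_card hsub) ?_
  refine le_trans (Finset.card_biUnion_le) ?_
  have hinner : ∀ A ∈ (Finset.range N).powersetCard m,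
      (((Finset.univ : Finset (Fin q)).powersetCard (t-1)).biUnion (fun T =>
        Finset.univ.filter (fun c : ↥P → Fin q => ∀ p ∈ A.powersetCard 2, φof c p ∈ T))).card
      ≤ q.choose (t-1) * ((t-1)^(m.choose 2) * q^(P.card - m.choose 2)) := by
    intro A hA
    rw [Finset.mem_powersetCard] at hA
    obtain ⟨hAsub, hAcard⟩ := hA
    have hpairs : A.powersetCard 2 ⊆ P := by
      rw [hP]; exact Finset.powersetCard_mono hAsub
    set s' : Finset ↥P := Finset.univ.filter (fun x : ↥P => ↑x ∈ A.powersetCard 2) with hs'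
    have hcards' : s'.card = m.choose 2 := by
      rw [← hAcard, ← Finset.card_powersetCard]
      apply Finset.card_bij (fun (x : ↥P) _ => (x : Finset ℕ))
      · intro x hx; exact (Finset.mem_filter.mp hx).2
      · intro x hx y hy hxy; exact Subtype.ext hxy
      · intro p hp
        exact ⟨⟨p, hpairs hp⟩, Finset.mem_filter.mpr ⟨Finset.mem_univ _, hp⟩, rfl⟩
    refine le_trans (Finset.card_biUnion_le) ?_
    have hTcount : ∀ T ∈ (Finset.univ : Finset (Fin q)).powersetCard (t-1),
        (Finset.univ.filter (fun c : ↥P → Fin q =>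
          ∀ p ∈ A.powersetCard 2, φof c p ∈ T)).card
        = (t-1)^(m.choose 2) * q^(P.card - m.choose 2) := by
      intro T hT
      have hTc : T.card = t - 1 := Finset.mem_powersetCard_univ.mp hT
      have heqf : (Finset.univ.filter (fun c : ↥P → Fin q =>
          ∀ p ∈ A.powersetCard 2, φof c p ∈ T))
          = Finset.univ.filter (fun c : ↥P → Fin q => ∀ x ∈ s', c x ∈ T) := by
        apply Finset.filter_congr
        intro c _
        constructor
        · intro h x hx
          have hx2 := (Finset.mem_filter.mp hx).2
          have := h ↑x hx2
          rwa [hφof c ↑x x.2, Subtype.coe_eta] at this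
        · intro h p hp
          have := h ⟨p, hpairs hp⟩ (Finset.mem_filter.mpr ⟨Finset.mem_univ _, hp⟩)
          rwa [hφof c p (hpairs hp)]
      rw [heqf, count_pi_aux s' T, hcards', hTc, Fintype.card_fin, Fintype.card_coe]
    refine le_of_eq ?_
    rw [Finset.sum_congr rfl hTcount, Finset.sum_const, smul_eq_mul,
      Finset.card_powersetCard, Finset.card_univ, Fintype.card_fin]
  refine le_trans (Finset.sum_le_sum hinner) (le_of_eq ?_)
  rw [Finset.sum_const, smul_eq_mul, Finset.card_powersetCard, Finset.card_range]

/-- For all integers q ≥ t ≥ 2 there is m₀ such that for every m ≥ m₀ there is a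
q-coloring of the pairs of U = {0,…,⌊(q/(t-1))^{m/4}⌋-1} with every m-subset inducing ≥ t colors. -/
theorem stmt_0 (q t : ℕ) (ht : 2 ≤ t) (hq : t ≤ q) :
    ∃ m₀ : ℕ, ∀ m : ℕ, m₀ ≤ m →
      ∃ φ : Finset ℕ → Fin q,
        ∀ A ⊆ Finset.range ⌊((q : ℝ) / ((t : ℝ) - 1)) ^ ((m : ℝ) / 4)⌋₊,
          A.card = m → t ≤ ((Finset.powersetCard 2 A).image φ).card := by
  classical
  have ht2 : (2:ℝ) ≤ (t:ℝ) := by exact_mod_cast ht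
  have hq' : (t:ℝ) ≤ q := by exact_mod_cast hq
  have hr1 : 1 < (q:ℝ)/((t:ℝ)-1) := by
    rw [lt_div_iff₀ (by linarith)]; linarith
  obtain ⟨n₀, hn₀⟩ := pow_unbounded_of_one_lt ((q:ℝ)^(t-1)) hr1
  refine ⟨4*n₀+3, fun m hm => ?_⟩
  set N : ℕ := ⌊((q:ℝ)/((t:ℝ)-1)) ^ ((m:ℝ)/4)⌋₊ with hNdef
  set P : Finset (Finset ℕ) := (Finset.range N).powersetCard 2 with hP
  set k : ℕ := m.choose 2 with hk
  have hq2 : 2 ≤ q := le_trans ht hq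
  set φof : (↥P → Fin q) → Finset ℕ → Fin q :=
    fun c p => if h : p ∈ P then c ⟨p, h⟩ else ⟨0, by omega⟩ with hφofdef
  have hφof : ∀ c p (h : p ∈ P), φof c p = c ⟨p, h⟩ := by
    intro c p h
    simp [hφofdef, h]
  set Bad : Finset (↥P → Fin q) :=
    Finset.univ.filter (fun c => ∃ A ∈ (Finset.range N).powersetCard m,
      ((A.powersetCard 2).image (φof c)).card < t) with hBad
  have htot : Fintype.card (↥P → Fin q) = q ^ P.card := by
    rw [Fintype.card_fun, Fintype.card_fin, Fintype.card_coe]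
  have hbound := count_bad_aux q t N m ht hq P hP φof hφof
  have key : Bad.card < Fintype.card (↥P → Fin q) := by
    rw [htot]
    rcases lt_or_ge N m with hNm | hNm
    · have h0 : N.choose m = 0 := Nat.choose_eq_zero_of_lt hNm
      have : Bad.card ≤ 0 := by
        refine le_trans hbound ?_
        rw [h0]; simp
      have hpos : 0 < q ^ P.card := pow_pos (by omega) _
      omega
    · have hkP : k ≤ P.card := by
        rw [hP, Finset.card_powersetCard, Finset.card_range, hk]
        exact Nat.choose_le_choose 2 hNm
      have hki := key_ineq_aux q t n₀ m ht hq hn₀ hm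
      calc Bad.card ≤ N.choose m * (q.choose (t-1) * ((t-1)^k * q^(P.card - k))) := hbound
        _ = (N.choose m * q.choose (t-1) * (t-1)^k) * q^(P.card - k) := by ring
        _ < q^k * q^(P.card - k) := by
            exact mul_lt_mul_of_pos_right hki (pow_pos (by omega) _)
        _ = q ^ P.card := by rw [← pow_add]; congr 1; omega
  have hne : ∃ c, c ∉ Bad := by
    by_contra hcon
    push_neg at hcon
    have hsub : Finset.univ ⊆ Bad := fun c _ => hcon c
    have := Finset.card_le_card hsub
    rw [Finset.card_univ] at this
    omega
  obtain ⟨c, hc⟩ := hne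
  refine ⟨φof c, fun A hA hAcard => ?_⟩
  by_contra hlt
  push_neg at hlt
  apply hc
  rw [hBad, Finset.mem_filter]
  exact ⟨Finset.mem_univ _, A, Finset.mem_powersetCard.mpr ⟨hA, hAcard⟩, hlt⟩
end

section
/- For every integer r > 3, there exists a 3-coloring of the 3-element subsets of V₃ = {0, 1, …, ⌊2^{r²/24}⌋ - 1} such that every subset of V₃ of size r contains triples of at least three distinct colors. -/
open Finset

lemma key_ineq' (r : ℕ) (hr : 4 ≤ r) :
    3 * ((2 ^ ((r ^ 2 + 23) / 24)).choose r) * 2 ^ (r.choose 3) < 3 ^ (r.choose 3) := by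
  rcases le_or_gt r 8 with h8 | h8
  · interval_cases r <;> norm_num [Nat.choose]
  · -- r ≥ 9
    obtain ⟨m, rfl⟩ : ∃ m, r = m + 9 := ⟨r - 9, by omega⟩
    set r := m + 9 with hrdef
    set s := (r ^ 2 + 23) / 24 with hs
    set t := r.choose 3 with ht
    have h6t' : 6 * t = (m + 9) * (m + 8) * (m + 7) := by
      have h2 : r.descFactorial 3 = 6 * t := by
        have := Nat.descFactorial_eq_factorial_mul_choose r 3
        simpa [Nat.factorial] using this
      have h3 : r.descFactorial 3 = (m + 7) * ((m + 8) * ((m + 9) * 1)) := rfl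
      rw [h2] at h3
      rw [h3]; ring
    have hchoose : (2 ^ s).choose r ≤ 2 ^ (s * r) := by
      calc (2 ^ s).choose r ≤ (2 ^ s) ^ r := Nat.choose_le_pow _ _
        _ = 2 ^ (s * r) := by rw [← pow_mul]
    have h24s : 24 * s ≤ r ^ 2 + 23 := Nat.mul_div_le _ _
    -- main exponent inequality : s * r + 2 ≤ 7 * (t / 12)
    have hexp : s * r + 2 ≤ 7 * (t / 12) := by
      have h12 : 12 * (t / 12) + 11 ≥ t := by omega
      have hq := Nat.div_add_mod t 12
      set q := t / 12 with hq'
      have hsr := Nat.mul_le_mul_right (m + 9) h24s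
      rw [hrdef] at hsr ⊢
      nlinarith [sq_nonneg m, Nat.zero_le m, Nat.zero_le (m * m * m), Nat.zero_le (m * m)]
    calc 3 * ((2 ^ s).choose r) * 2 ^ t ≤ 3 * 2 ^ (s * r) * 2 ^ t :=
          Nat.mul_le_mul_right _ (Nat.mul_le_mul_left _ hchoose)
      _ < 2 ^ (s * r + 2) * 2 ^ t := by
          have hp : (0:ℕ) < 2 ^ (s*r) := Nat.pow_pos (by norm_num)
          have h4 : (2:ℕ) ^ (s * r + 2) = 2 ^ (s*r) * 2 * 2 := by ring
          have hpt : (0:ℕ) < 2 ^ t := Nat.pow_pos (by norm_num)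
          rw [h4]
          have : 3 * 2 ^ (s*r) < 2 ^ (s*r) * 2 * 2 := by omega
          exact Nat.mul_lt_mul_of_lt_of_le this (le_refl _) hpt
      _ ≤ 2 ^ (7 * (t / 12)) * 2 ^ t := by
          exact Nat.mul_le_mul_right _ (Nat.pow_le_pow_right (by norm_num) hexp)
      _ ≤ 3 ^ t := by
          have key2 : ∀ u v : ℕ, 2 ^ (7 * u) * 2 ^ (12 * u + v) ≤ 3 ^ (12 * u + v) := by
            intro u v
            calc 2 ^ (7 * u) * 2 ^ (12 * u + v) = (2 ^ 19) ^ u * 2 ^ v := by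
                  rw [← pow_mul, ← pow_add, ← pow_add]; congr 1; ring
              _ ≤ (3 ^ 12) ^ u * 3 ^ v :=
                  Nat.mul_le_mul (Nat.pow_le_pow_left (by norm_num) _)
                    (Nat.pow_le_pow_left (by norm_num) _)
              _ = 3 ^ (12 * u + v) := by rw [← pow_mul, ← pow_add]
          have ht2 : 12 * (t / 12) + t % 12 = t := Nat.div_add_mod t 12
          have := key2 (t / 12) (t % 12)
          rwa [ht2] at this

lemma card_filter_attach' {α : Type*} [DecidableEq α] (D S : Finset α) (h : S ⊆ D) :
    (D.attach.filter (fun x : ↥D => (x : α) ∈ S)).card = S.card := by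
  refine Finset.card_bij (fun x _ => (x : α)) ?_ ?_ ?_
  · intro a ha; exact (Finset.mem_filter.1 ha).2
  · intro a _ b _ hab; exact Subtype.ext hab
  · intro b hb; exact ⟨⟨b, h hb⟩, Finset.mem_filter.2 ⟨Finset.mem_attach _ _, hb⟩, rfl⟩

lemma card_badset {D S : Finset (Finset ℕ)} [DecidableEq ↥D] (hS : S ⊆ D) (c : Fin 3) :
    (Fintype.piFinset (fun x : ↥D =>
      if (x : Finset ℕ) ∈ S then ({c}ᶜ : Finset (Fin 3)) else Finset.univ)).card
      = 2 ^ S.card * 3 ^ (D.card - S.card) := by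
  classical
  rw [Fintype.card_piFinset]
  have h1 : ∀ x : ↥D, (if (x : Finset ℕ) ∈ S then ({c}ᶜ : Finset (Fin 3)) else Finset.univ).card
      = if (x : Finset ℕ) ∈ S then 2 else 3 := by
    intro x; split_ifs <;> simp [Finset.card_compl]
  calc ∏ x : ↥D, (if (x : Finset ℕ) ∈ S then ({c}ᶜ : Finset (Fin 3)) else Finset.univ).card
      = ∏ x : ↥D, (if (x : Finset ℕ) ∈ S then 2 else 3) := Finset.prod_congr rfl (fun x _ => h1 x)
    _ = 2 ^ S.card * 3 ^ (D.card - S.card) := by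
        rw [Finset.prod_ite, Finset.prod_const, Finset.prod_const]
        have h2 : (Finset.univ.filter (fun x : ↥D => (x : Finset ℕ) ∈ S)).card = S.card := by
          rw [Finset.univ_eq_attach]; exact card_filter_attach' D S hS
        have h3 : (Finset.univ.filter (fun x : ↥D => ¬ (x : Finset ℕ) ∈ S)).card
            = D.card - S.card := by
          have := Finset.card_filter_add_card_filter_not
            (s := (Finset.univ : Finset ↥D)) (p := fun x : ↥D => (x : Finset ℕ) ∈ S)
          rw [Finset.card_univ, Fintype.card_coe] at this
          omega
        rw [h2, h3]

/-- a 3-coloring of triples of {0,…,⌊2^{r²/24}⌋-1} with every r-subset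
inducing at least three colors. -/
theorem stmt_2 (r : ℕ) (hr : 3 < r) :
    ∃ χ : Finset ℕ → Fin 3,
      ∀ A ⊆ Finset.range ⌊(2 : ℝ) ^ ((r : ℝ) ^ 2 / 24)⌋₊,
        A.card = r → 3 ≤ ((Finset.powersetCard 3 A).image χ).card := by
  classical
  set N := ⌊(2 : ℝ) ^ ((r : ℝ) ^ 2 / 24)⌋₊ with hNdef
  set s := (r ^ 2 + 23) / 24 with hs
  set t := r.choose 3 with ht
  by_contra hcon
  push_neg at hcon
  set D := (Finset.range N).powersetCard 3 with hD
  set T := D.card with hT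
  let ext : (↥D → Fin 3) → (Finset ℕ → Fin 3) :=
    fun f S => if h : S ∈ D then f ⟨S, h⟩ else 0
  let bad : Finset ℕ → Fin 3 → Finset (↥D → Fin 3) := fun A c =>
    Fintype.piFinset (fun x : ↥D =>
      if (x : Finset ℕ) ∈ A.powersetCard 3 then ({c}ᶜ : Finset (Fin 3)) else Finset.univ)
  have htriples : ∀ A ∈ (Finset.range N).powersetCard r, A.powersetCard 3 ⊆ D := by
    intro A hA T' hT'
    rw [Finset.mem_powersetCard] at hA hT'
    rw [hD, Finset.mem_powersetCard]
    exact ⟨hT'.1.trans hA.1, hT'.2⟩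
  have hsubset : (Finset.univ : Finset (↥D → Fin 3)) ⊆
      ((Finset.range N).powersetCard r).biUnion
        (fun A => Finset.univ.biUnion (fun c => bad A c)) := by
    intro f _
    obtain ⟨A, hA, hAcard, hAim⟩ := hcon (ext f)
    have h3 : ∃ c : Fin 3, c ∉ (A.powersetCard 3).image (ext f) := by
      by_contra hc
      push_neg at hc
      have h4 : (Finset.univ : Finset (Fin 3)) ⊆ (A.powersetCard 3).image (ext f) :=
        fun c _ => hc c
      have h5 := Finset.card_le_card h4
      simp only [Finset.card_univ, Fintype.card_fin] at h5
      omega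
    obtain ⟨c, hc⟩ := h3
    refine Finset.mem_biUnion.2 ⟨A, Finset.mem_powersetCard.2 ⟨hA, hAcard⟩,
      Finset.mem_biUnion.2 ⟨c, Finset.mem_univ _, ?_⟩⟩
    rw [Fintype.mem_piFinset]
    intro x
    split_ifs with hx
    · simp only [Finset.mem_compl, Finset.mem_singleton]
      intro hfx
      apply hc
      refine Finset.mem_image.2 ⟨(x : Finset ℕ), hx, ?_⟩
      show ext f (x : Finset ℕ) = c
      have : ext f (x : Finset ℕ) = f x := by
        simp only [ext, dif_pos x.2]
      rw [this, hfx]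
    · exact Finset.mem_univ _
  have hbadcard : ∀ A ∈ (Finset.range N).powersetCard r, ∀ c : Fin 3,
      (bad A c).card = 2 ^ t * 3 ^ (T - t) := by
    intro A hA c
    have h1 : (A.powersetCard 3).card = t := by
      rw [Finset.card_powersetCard, (Finset.mem_powersetCard.1 hA).2]
    have := card_badset (htriples A hA) c
    rw [h1] at this
    exact this
  have hcard : (3 : ℕ) ^ T ≤ N.choose r * (3 * (2 ^ t * 3 ^ (T - t))) := by
    have h1 : (Finset.univ : Finset (↥D → Fin 3)).card = 3 ^ T := by
      rw [Finset.card_univ, Fintype.card_fun, Fintype.card_fin, Fintype.card_coe]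
    calc (3:ℕ) ^ T = (Finset.univ : Finset (↥D → Fin 3)).card := h1.symm
      _ ≤ (((Finset.range N).powersetCard r).biUnion
            (fun A => Finset.univ.biUnion (fun c => bad A c))).card :=
          Finset.card_le_card hsubset
      _ ≤ ∑ A ∈ (Finset.range N).powersetCard r,
            (Finset.univ.biUnion (fun c => bad A c)).card := Finset.card_biUnion_le
      _ ≤ ∑ A ∈ (Finset.range N).powersetCard r, ∑ c : Fin 3, (bad A c).card :=
          Finset.sum_le_sum (fun A _ => Finset.card_biUnion_le)
      _ = ∑ A ∈ (Finset.range N).powersetCard r, (3 * (2 ^ t * 3 ^ (T - t))) := by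
          apply Finset.sum_congr rfl
          intro A hA
          rw [Finset.sum_congr rfl (fun c _ => hbadcard A hA c), Finset.sum_const]
          simp [Finset.card_univ, mul_comm]
      _ = N.choose r * (3 * (2 ^ t * 3 ^ (T - t))) := by
          rw [Finset.sum_const, Finset.card_powersetCard, Finset.card_range, smul_eq_mul]
  -- N ≤ 2 ^ s
  have hNs : N ≤ 2 ^ s := by
    have hr24 : (r : ℝ) ^ 2 / 24 ≤ (s : ℝ) := by
      rw [div_le_iff₀ (by norm_num : (0:ℝ) < 24)]
      have hnat : r ^ 2 ≤ s * 24 := by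
        have h1 := Nat.div_add_mod (r ^ 2 + 23) 24
        have h2 := Nat.mod_lt (r ^ 2 + 23) (show 0 < 24 by norm_num)
        omega
      exact_mod_cast hnat
    have hle : (2 : ℝ) ^ ((r : ℝ) ^ 2 / 24) ≤ ((2 ^ s : ℕ) : ℝ) := by
      push_cast
      calc (2 : ℝ) ^ ((r : ℝ) ^ 2 / 24) ≤ (2 : ℝ) ^ (s : ℝ) :=
            Real.rpow_le_rpow_of_exponent_le one_le_two hr24
        _ = (2 : ℝ) ^ s := Real.rpow_natCast 2 s
    calc N ≤ ⌊((2 ^ s : ℕ) : ℝ)⌋₊ := Nat.floor_le_floor hle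
      _ = 2 ^ s := Nat.floor_natCast _
  have hkey := key_ineq' r (by omega)
  have hch : 3 * N.choose r * 2 ^ t < 3 ^ t :=
    lt_of_le_of_lt
      (by
        have := Nat.choose_le_choose r hNs
        exact Nat.mul_le_mul_right _ (Nat.mul_le_mul_left _ this)) hkey
  rcases le_or_gt r N with hrN | hrN
  · have htT : t ≤ T := by
      rw [hT, hD, Finset.card_powersetCard, Finset.card_range]
      exact Nat.choose_le_choose _ hrN
    have h2 : N.choose r * (3 * (2 ^ t * 3 ^ (T - t))) = (3 * N.choose r * 2 ^ t) * 3 ^ (T - t) := by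
      ring
    have hpos : 0 < 3 ^ (T - t) := Nat.pow_pos (by norm_num)
    have h3 : (3 * N.choose r * 2 ^ t) * 3 ^ (T - t) < 3 ^ t * 3 ^ (T - t) :=
      Nat.mul_lt_mul_of_lt_of_le hch (le_refl _) hpos
    have h4 : (3:ℕ) ^ t * 3 ^ (T - t) = 3 ^ T := by
      rw [← pow_add]
      congr 1
      omega
    rw [h2] at hcard
    omega
  · have h0 : N.choose r = 0 := Nat.choose_eq_zero_of_lt hrN
    rw [h0, Nat.zero_mul] at hcard
    have : 0 < (3:ℕ) ^ T := Nat.pow_pos (by norm_num)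
    omega
end

section
/- For every integer s > 3, there exists a 3-coloring of the 2-element subsets of V₂ = {0, 1, …, ⌊2^{s/4}⌋} such that every subset of V₂ of size s contains pairs of at least three distinct colors. -/
open Finset

lemma myChoose_le_two_pow (n k : ℕ) : n.choose k ≤ 2 ^ n := by
  rcases le_or_gt k n with h | h
  · calc n.choose k ≤ ∑ m ∈ Finset.range (n+1), n.choose m :=
        Finset.single_le_sum (f := fun m => n.choose m) (fun _ _ => Nat.zero_le _)
          (Finset.mem_range.2 (by omega))
    _ = 2 ^ n := Nat.sum_range_choose n
  · rw [Nat.choose_eq_zero_of_lt h]; exact Nat.zero_le _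

lemma myPow12 {C a K : ℕ} (hC : C ≤ 2 ^ a) (h : 20 + 12 * a + 12 * K < 19 * K) :
    3 * C * 2 ^ K < 3 ^ K := by
  have h1 : (3 * C * 2 ^ K) ^ 12 < (3 ^ K) ^ 12 := by
    calc (3 * C * 2 ^ K) ^ 12 = 3 ^ 12 * C ^ 12 * (2 ^ K) ^ 12 := by ring
      _ ≤ 2 ^ 20 * (2 ^ a) ^ 12 * (2 ^ K) ^ 12 :=
        Nat.mul_le_mul (Nat.mul_le_mul (by norm_num) (Nat.pow_le_pow_left hC 12)) le_rfl
      _ = 2 ^ (20 + 12 * a + 12 * K) := by rw [← pow_mul, ← pow_mul, ← pow_add, ← pow_add]; ring_nf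
      _ < 2 ^ (19 * K) := Nat.pow_lt_pow_right one_lt_two h
      _ = (2 ^ 19) ^ K := by rw [← pow_mul]
      _ ≤ (3 ^ 12) ^ K := Nat.pow_le_pow_left (by norm_num) K
      _ = (3 ^ K) ^ 12 := by rw [← pow_mul, ← pow_mul, Nat.mul_comm]
  exact lt_of_pow_lt_pow_left₀ 12 (by positivity) h1

lemma myFacBound : ∀ s : ℕ, 20 ≤ s → (8:ℕ) ^ s ≤ Nat.factorial s := by
  intro s hs
  induction s with
  | zero => omega
  | succ n ih =>
    rcases Nat.lt_or_ge n 20 with h | h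
    · have : n = 19 := by omega
      subst this
      norm_num [Nat.factorial]
    · calc (8:ℕ) ^ (n+1) = 8 * 8 ^ n := by ring
        _ ≤ (n+1) * Nat.factorial n := Nat.mul_le_mul (by omega) (ih (by omega))
        _ = Nat.factorial (n+1) := (Nat.factorial_succ n).symm

lemma myKeyIneq (s : ℕ) (hs : 3 < s) :
    3 * ((⌊(2:ℝ) ^ ((s:ℝ) / 4)⌋₊ + 1).choose s) * 2 ^ s.choose 2 < 3 ^ s.choose 2 := by
  set f := ⌊(2:ℝ) ^ ((s:ℝ) / 4)⌋₊ with hf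
  set K := s.choose 2 with hK
  have hx0 : (0:ℝ) ≤ (2:ℝ) ^ ((s:ℝ) / 4) := le_of_lt (Real.rpow_pos_of_pos two_pos _)
  have hpow4 : ((2:ℝ) ^ ((s:ℝ) / 4)) ^ (4:ℕ) = ((2 ^ s : ℕ) : ℝ) := by
    rw [← Real.rpow_natCast ((2:ℝ) ^ ((s:ℝ) / 4)) 4, ← Real.rpow_mul (by norm_num)]
    have h44 : (s:ℝ) / 4 * ((4:ℕ):ℝ) = ((s:ℕ):ℝ) := by push_cast; field_simp
    rw [h44, Real.rpow_natCast]
    push_cast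
    ring
  rcases lt_or_ge s 16 with h16 | h16
  · -- vacuous: f + 1 < s
    have hnat : 2 ^ s < (s - 1) ^ 4 := by interval_cases s <;> norm_num
    have h1 : (2:ℝ) ^ ((s:ℝ) / 4) < ((s - 1 : ℕ) : ℝ) := by
      apply lt_of_pow_lt_pow_left₀ 4 (by positivity)
      rw [hpow4]
      exact_mod_cast hnat
    have hfs : f < s - 1 := Nat.floor_lt hx0 |>.mpr h1
    rw [Nat.choose_eq_zero_of_lt (by omega)]
    simpa using pow_pos (by norm_num : (0:ℕ) < 3) K
  rcases lt_or_ge s 20 with h20 | h20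
  · -- 16 ≤ s ≤ 19 : f ≤ 26
    have hnat : ((2 ^ s : ℕ) : ℝ) < ((27 ^ 4 : ℕ) : ℝ) := by
      have : (2:ℕ) ^ s ≤ 2 ^ 19 := Nat.pow_le_pow_right (by norm_num) (by omega)
      exact_mod_cast lt_of_le_of_lt this (by norm_num)
    have h1 : (2:ℝ) ^ ((s:ℝ) / 4) < ((27 : ℕ) : ℝ) := by
      apply lt_of_pow_lt_pow_left₀ 4 (by positivity)
      rw [hpow4]
      exact_mod_cast hnat
    have hf27 : f < 27 := Nat.floor_lt hx0 |>.mpr h1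
    have hC : (f + 1).choose s ≤ 2 ^ 27 :=
      le_trans (myChoose_le_two_pow _ _) (Nat.pow_le_pow_right (by norm_num) (by omega))
    apply myPow12 hC
    have hK120 : 120 ≤ K := by
      have : Nat.choose 16 2 ≤ s.choose 2 := Nat.choose_le_choose 2 (by omega)
      simpa [hK, show Nat.choose 16 2 = 120 from rfl] using this
    omega
  · -- s ≥ 20
    have h8fac : (8:ℕ) ^ s ≤ Nat.factorial s := myFacBound s h20
    have hdesc : (f + 1).choose s * Nat.factorial s ≤ (f + 1) ^ s := by
      rw [mul_comm, ← Nat.descFactorial_eq_factorial_mul_choose]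
      exact Nat.descFactorial_le_pow _ _
    set C := (f + 1).choose s with hC
    have hC8 : C * 2 ^ (3 * s) ≤ (f + 1) ^ s := by
      have h8 : (2:ℕ) ^ (3 * s) = 8 ^ s := by rw [pow_mul]; norm_num
      rw [h8]
      exact le_trans (Nat.mul_le_mul_left _ h8fac) hdesc
    have hf4 : f ^ 4 ≤ 2 ^ s := by
      have h1 : (f:ℝ) ≤ (2:ℝ) ^ ((s:ℝ) / 4) := Nat.floor_le hx0
      have h2 : ((f:ℝ)) ^ (4:ℕ) ≤ ((2:ℝ) ^ ((s:ℝ) / 4)) ^ (4:ℕ) :=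
        pow_le_pow_left₀ (by positivity) h1 4
      rw [hpow4] at h2
      exact_mod_cast h2
    have hN4 : (f + 1) ^ 4 ≤ 16 * 2 ^ s := by
      have hf1 : 1 ≤ f := by
        rw [hf, Nat.le_floor_iff hx0]
        have : (1:ℝ) ≤ (2:ℝ) ^ ((s:ℝ) / 4) :=
          Real.one_le_rpow (by norm_num) (by positivity)
        simpa using this
      calc (f + 1) ^ 4 ≤ (2 * f) ^ 4 := Nat.pow_le_pow_left (by omega) 4
        _ = 16 * f ^ 4 := by ring
        _ ≤ 16 * 2 ^ s := Nat.mul_le_mul_left 16 hf4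
    have h4 : C ^ 4 * 2 ^ (12 * s) ≤ 2 ^ (s * s + 4 * s) := by
      calc C ^ 4 * 2 ^ (12 * s) = (C * 2 ^ (3 * s)) ^ 4 := by
            rw [mul_pow, ← pow_mul]; ring_nf
        _ ≤ ((f + 1) ^ s) ^ 4 := Nat.pow_le_pow_left hC8 4
        _ = ((f + 1) ^ 4) ^ s := by rw [← pow_mul, ← pow_mul, Nat.mul_comm]
        _ ≤ (16 * 2 ^ s) ^ s := Nat.pow_le_pow_left hN4 s
        _ = 2 ^ (s * s + 4 * s) := by
            rw [mul_pow, ← pow_mul, show (16:ℕ) = 2 ^ 4 from rfl, ← pow_mul, ← pow_add]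
            ring_nf
    have h8s : 8 * s ≤ s * s := Nat.mul_le_mul_right s (by omega)
    have h5 : C ^ 4 ≤ 2 ^ (s * s - 8 * s) := by
      have heq : (2:ℕ) ^ (s * s + 4 * s) = 2 ^ (s * s - 8 * s) * 2 ^ (12 * s) := by
        rw [← pow_add]; congr 1; omega
      rw [heq] at h4
      exact Nat.le_of_mul_le_mul_right h4 (Nat.pow_pos (by norm_num))
    set a := (s * s - 8 * s) / 4 + 1 with ha
    have hCa : C ≤ 2 ^ a := by
      have h6 : C ^ 4 ≤ (2 ^ a) ^ 4 := by
        refine le_trans h5 ?_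
        rw [← pow_mul]
        exact Nat.pow_le_pow_right (by norm_num) (by omega)
      exact le_of_pow_le_pow_left₀ (by norm_num) (by positivity) h6
    apply myPow12 hCa
    -- arithmetic
    have hc2 : K * 2 = s * (s - 1) := by
      rw [hK, Nat.choose_two_right]
      apply Nat.div_mul_cancel
      have h := Nat.even_mul_succ_self (s - 1)
      rw [Nat.sub_add_cancel (by omega)] at h
      rw [mul_comm]
      exact h.two_dvd
    have hqr : s * (s - 1) + s = s * s := by
      cases s with
      | zero => omega
      | succ t => simp [Nat.succ_sub_one]; ring
    have h20q : 20 * s ≤ s * s := Nat.mul_le_mul_right s h20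
    obtain ⟨q, hq⟩ : ∃ q, s * s = q := ⟨_, rfl⟩
    obtain ⟨r, hr⟩ : ∃ r, s * (s - 1) = r := ⟨_, rfl⟩
    rw [hq] at hqr h20q ha
    rw [hr] at hc2 hqr
    omega

/-- a 3-coloring of pairs of {0,…,⌊2^{s/4}⌋} with every s-subset
inducing at least three colors. -/
theorem stmt_3 (s : ℕ) (hs : 3 < s) :
    ∃ φ : Finset ℕ → Fin 3,
      ∀ A ⊆ Finset.range (⌊(2 : ℝ) ^ ((s : ℝ) / 4)⌋₊ + 1),
        A.card = s → 3 ≤ ((Finset.powersetCard 2 A).image φ).card := by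
  classical
  set N := ⌊(2 : ℝ) ^ ((s : ℝ) / 4)⌋₊ + 1 with hN
  set V := Finset.range N with hV
  set P := Finset.powersetCard 2 V with hP
  set K := s.choose 2 with hK
  -- Bad colorings for a given s-set A and missed color i
  set Bad : Finset ℕ → Fin 3 → Finset ({x // x ∈ P} → Fin 3) := fun A i =>
    Fintype.piFinset (fun q => if (q : Finset ℕ) ∈ Finset.powersetCard 2 A
      then ({i}ᶜ : Finset (Fin 3)) else Finset.univ) with hBad
  have hsub : ∀ A ∈ Finset.powersetCard s V, Finset.powersetCard 2 A ⊆ P := by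
    intro A hA
    exact Finset.powersetCard_mono (Finset.mem_powersetCard.1 hA).1
  have hBadcard : ∀ A ∈ Finset.powersetCard s V, ∀ i : Fin 3,
      (Bad A i).card = 2 ^ K * 3 ^ (P.card - K) := by
    intro A hA i
    have hAV : A ⊆ V := (Finset.mem_powersetCard.1 hA).1
    have hAc : A.card = s := (Finset.mem_powersetCard.1 hA).2
    have hpairs : Finset.powersetCard 2 A ⊆ P := hsub A hA
    have hKcard : (Finset.powersetCard 2 A).card = K := by
      rw [Finset.card_powersetCard, hAc]
    rw [hBad]
    rw [Fintype.card_piFinset]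
    have h1 : ∀ q : {x // x ∈ P},
        ((if (q : Finset ℕ) ∈ Finset.powersetCard 2 A
          then ({i}ᶜ : Finset (Fin 3)) else Finset.univ)).card
        = if (q : Finset ℕ) ∈ Finset.powersetCard 2 A then 2 else 3 := by
      intro q
      split
      · simp [Finset.card_compl]
      · simp
    simp only [h1]
    rw [Finset.univ_eq_attach, Finset.prod_attach P
      (fun p => if p ∈ Finset.powersetCard 2 A then 2 else 3)]
    rw [Finset.prod_ite, Finset.prod_const, Finset.prod_const]
    have hfil : P.filter (fun p => p ∈ Finset.powersetCard 2 A) = Finset.powersetCard 2 A := by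
      rw [Finset.filter_mem_eq_inter, Finset.inter_eq_right.mpr hpairs]
    have hfil2 : (P.filter (fun p => ¬ p ∈ Finset.powersetCard 2 A)).card = P.card - K := by
      have := Finset.card_filter_add_card_filter_not
        (s := P) (p := fun p => p ∈ Finset.powersetCard 2 A)
      rw [hfil, hKcard] at this
      omega
    rw [hfil, hfil2, hKcard]
  -- union bound
  set B := (Finset.powersetCard s V).biUnion
    (fun A => (Finset.univ : Finset (Fin 3)).biUnion (fun i => Bad A i)) with hB
  have hBcard : B.card < (Finset.univ : Finset ({x // x ∈ P} → Fin 3)).card := by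
    have hcardU : (Finset.univ : Finset ({x // x ∈ P} → Fin 3)).card = 3 ^ P.card := by
      rw [Finset.card_univ, Fintype.card_fun, Fintype.card_fin, Fintype.card_coe]
    have h2 : B.card ≤ N.choose s * (3 * (2 ^ K * 3 ^ (P.card - K))) := by
      calc B.card ≤ ∑ A ∈ Finset.powersetCard s V,
            ((Finset.univ : Finset (Fin 3)).biUnion (fun i => Bad A i)).card :=
          Finset.card_biUnion_le
        _ ≤ ∑ A ∈ Finset.powersetCard s V, (3 * (2 ^ K * 3 ^ (P.card - K))) := by
          apply Finset.sum_le_sum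
          intro A hA
          calc ((Finset.univ : Finset (Fin 3)).biUnion (fun i => Bad A i)).card
              ≤ ∑ i : Fin 3, (Bad A i).card := Finset.card_biUnion_le
            _ = 3 * (2 ^ K * 3 ^ (P.card - K)) := by
              rw [Finset.sum_congr rfl (fun i _ => hBadcard A hA i)]
              simp [Finset.sum_const, mul_comm]
        _ = N.choose s * (3 * (2 ^ K * 3 ^ (P.card - K))) := by
          rw [Finset.sum_const, Finset.card_powersetCard, Finset.card_range, smul_eq_mul]
    rw [hcardU]
    rcases Nat.eq_zero_or_pos (N.choose s) with hz | hpos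
    · rw [hz, Nat.zero_mul] at h2
      exact lt_of_le_of_lt h2 (pow_pos (by norm_num) _)
    · have hsN : s ≤ N := by
        by_contra hcon
        rw [Nat.choose_eq_zero_of_lt (by omega)] at hpos
        omega
      have hKm : K ≤ P.card := by
        rw [hP, Finset.card_powersetCard, Finset.card_range, hK]
        exact Nat.choose_le_choose 2 hsN
      have key := myKeyIneq s hs
      calc B.card ≤ N.choose s * (3 * (2 ^ K * 3 ^ (P.card - K))) := h2
        _ = (3 * N.choose s * 2 ^ K) * 3 ^ (P.card - K) := by ring
        _ < 3 ^ K * 3 ^ (P.card - K) :=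
          Nat.mul_lt_mul_of_pos_right key (pow_pos (by norm_num : (0:ℕ) < 3) _)
        _ = 3 ^ P.card := by rw [← pow_add]; congr 1; omega
  obtain ⟨c, hc⟩ : ∃ c : {x // x ∈ P} → Fin 3, c ∉ B := by
    by_contra hcon
    push_neg at hcon
    have : (Finset.univ : Finset ({x // x ∈ P} → Fin 3)) ⊆ B := fun c _ => hcon c
    have := Finset.card_le_card this
    omega
  refine ⟨fun p => if h : p ∈ P then c ⟨p, h⟩ else 0, ?_⟩
  intro A hAV hAc
  have hA : A ∈ Finset.powersetCard s V := Finset.mem_powersetCard.2 ⟨hAV, hAc⟩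
  have hall : ∀ i : Fin 3, i ∈ (Finset.powersetCard 2 A).image
      (fun p => if h : p ∈ P then c ⟨p, h⟩ else 0) := by
    intro i
    have hnotbad : c ∉ Bad A i := by
      intro hmem
      exact hc (Finset.mem_biUnion.2 ⟨A, hA, Finset.mem_biUnion.2
        ⟨i, Finset.mem_univ i, hmem⟩⟩)
    rw [hBad, Fintype.mem_piFinset] at hnotbad
    push_neg at hnotbad
    obtain ⟨q, hq⟩ := hnotbad
    by_cases hmem : (q : Finset ℕ) ∈ Finset.powersetCard 2 A
    · rw [if_pos hmem] at hq
      have hcq : c q = i := by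
        simpa using hq
      refine Finset.mem_image.2 ⟨(q : Finset ℕ), hmem, ?_⟩
      rw [dif_pos q.2, Subtype.coe_eta, hcq]
    · rw [if_neg hmem] at hq
      exact absurd (Finset.mem_univ _) hq
  have huniv : (Finset.univ : Finset (Fin 3)) ⊆ (Finset.powersetCard 2 A).image
      (fun p => if h : p ∈ P then c ⟨p, h⟩ else 0) := fun i _ => hall i
  calc (3:ℕ) = (Finset.univ : Finset (Fin 3)).card := by simp
    _ ≤ _ := Finset.card_le_card huniv
end

section
/- Let M ≥ 1, U = {0,…,M-1}, V = {0,…,2^M - 1}, and let φ be any q-coloring of the pairs of U. Define a q-coloring χ of triples of V by χ(v₁,v₂,v₃) = φ(δ(v₁,v₂), δ(v₂,v₃)) for v₁ < v₂ < v₃, where δ(u,v) is the most significant bit where u,v differ. Then for every m ≥ 2 and every set of n = 2^m vertices v₁ < ⋯ < v_n in V, there is a subset B of {δ(v_i, v_{i+1}) : 1 ≤ i ≤ n-1} with at least m distinct elements such that for every pair {δ_r, δ_s} from B, some triple v_i < v_j < v_k among the chosen vertices satisfies χ(v_i,v_j,v_k) = φ(δ_r, δ_s). -/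
namespace Stmt8Aux

def Hδ (δ : ℕ → ℕ → ℕ) : Prop := ∀ u v : ℕ, u ≠ v →
  (Nat.testBit u (δ u v) ≠ Nat.testBit v (δ u v) ∧
    ∀ i, Nat.testBit u i ≠ Nat.testBit v i → i ≤ δ u v)

lemma bitA {δ : ℕ → ℕ → ℕ} (hδ : Hδ δ) {u w : ℕ} (huv : u < w) :
    Nat.testBit u (δ u w) = false ∧ Nat.testBit w (δ u w) = true := by
  obtain ⟨hne, hmax⟩ := hδ u w huv.ne
  cases hu : Nat.testBit u (δ u w) <;> cases hv : Nat.testBit w (δ u w)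
  · rw [hu, hv] at hne; exact absurd rfl hne
  · exact ⟨rfl, rfl⟩
  · exfalso
    have hlt : w < u := Nat.lt_of_testBit (δ u w) hv hu (fun j hj => by
      by_contra h
      exact absurd (hmax j (fun h' => h h'.symm)) (by omega))
    omega
  · rw [hu, hv] at hne; exact absurd rfl hne

lemma agree {δ : ℕ → ℕ → ℕ} (hδ : Hδ δ) {u w : ℕ} (huv : u ≠ w) {j : ℕ}
    (hj : δ u w < j) : Nat.testBit u j = Nat.testBit w j := by
  by_contra h
  exact absurd ((hδ u w huv).2 j h) (by omega)

lemma localMax {δ : ℕ → ℕ → ℕ} (hδ : Hδ δ) {u x w : ℕ} (h1 : u < x) (h2 : x < w) :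
    δ u x ≠ δ x w ∧ δ u w = max (δ u x) (δ x w) := by
  obtain ⟨hu0, hx1⟩ := bitA hδ h1
  obtain ⟨hx0, hw1⟩ := bitA hδ h2
  have hne : δ u x ≠ δ x w := by
    intro h; rw [h, hx0] at hx1; simp at hx1
  refine ⟨hne, ?_⟩
  have huw : u ≠ w := (h1.trans h2).ne
  rcases lt_or_gt_of_ne hne with hlt | hlt
  · -- δ u w = δ x w
    have hub : Nat.testBit u (δ x w) = false := by
      rw [agree hδ h1.ne hlt, hx0]
    have hdiff : Nat.testBit u (δ x w) ≠ Nat.testBit w (δ x w) := by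
      rw [hub, hw1]; simp
    have hle : δ x w ≤ δ u w := (hδ u w huw).2 _ hdiff
    have hge : δ u w ≤ δ x w := by
      by_contra hc
      push_neg at hc
      have e1 : Nat.testBit u (δ u w) = Nat.testBit x (δ u w) :=
        agree hδ h1.ne (by omega)
      have e2 : Nat.testBit x (δ u w) = Nat.testBit w (δ u w) :=
        agree hδ h2.ne hc
      exact (hδ u w huw).1 (e1.trans e2)
    omega
  · -- δ u w = δ u x
    have hwb : Nat.testBit w (δ u x) = true := by
      rw [← agree hδ h2.ne hlt, hx1]
    have hdiff : Nat.testBit u (δ u x) ≠ Nat.testBit w (δ u x) := by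
      rw [hu0, hwb]; simp
    have hle : δ u x ≤ δ u w := (hδ u w huw).2 _ hdiff
    have hge : δ u w ≤ δ u x := by
      by_contra hc
      push_neg at hc
      have e1 : Nat.testBit u (δ u w) = Nat.testBit x (δ u w) :=
        agree hδ h1.ne hc
      have e2 : Nat.testBit x (δ u w) = Nat.testBit w (δ u w) :=
        agree hδ h2.ne (by omega)
      exact (hδ u w huw).1 (e1.trans e2)
    omega

section Seq

variable {δ : ℕ → ℕ → ℕ} {v : ℕ → ℕ} {n : ℕ}

lemma intMax (hδ : Hδ δ) (hmono : ∀ i j, i < j → j < n → v i < v j) :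
    ∀ k a, a + k + 1 < n → ∃ p, a ≤ p ∧ p < a + k + 1 ∧
      δ (v a) (v (a + k + 1)) = δ (v p) (v (p + 1)) ∧
      ∀ j, a ≤ j → j < a + k + 1 → δ (v j) (v (j + 1)) ≤ δ (v p) (v (p + 1)) := by
  intro k
  induction k with
  | zero =>
    intro a h
    refine ⟨a, le_refl _, by omega, rfl, ?_⟩
    intro j h1 h2
    have : j = a := by omega
    subst this; exact le_refl _
  | succ k ih =>
    intro a h
    have he : a + (k + 1) + 1 = (a + 1) + k + 1 := by omega
    obtain ⟨p, hp1, hp2, hp3, hp4⟩ := ih (a + 1) (by omega)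
    have h1 : v a < v (a + 1) := hmono a (a + 1) (by omega) (by omega)
    have h2 : v (a + 1) < v (a + (k + 1) + 1) := hmono _ _ (by omega) h
    obtain ⟨hne, hmax⟩ := localMax hδ h1 h2
    rw [he] at hmax hne ⊢
    rw [hp3] at hmax hne
    rcases lt_or_gt_of_ne hne with hlt | hlt
    · refine ⟨p, by omega, by omega, by rw [hmax]; omega, ?_⟩
      intro j hj1 hj2
      rcases Nat.eq_or_lt_of_le hj1 with hj | hj
      · subst hj; omega
      · exact hp4 j (by omega) (by omega)
    · refine ⟨a, le_refl _, by omega, by rw [hmax]; omega, ?_⟩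
      intro j hj1 hj2
      rcases Nat.eq_or_lt_of_le hj1 with hj | hj
      · subst hj; exact le_refl _
      · have := hp4 j (by omega) (by omega); omega

lemma intMax' (hδ : Hδ δ) (hmono : ∀ i j, i < j → j < n → v i < v j)
    {a b : ℕ} (hab : a < b) (hbn : b < n) : ∃ p, a ≤ p ∧ p < b ∧
      δ (v a) (v b) = δ (v p) (v (p + 1)) ∧
      ∀ j, a ≤ j → j < b → δ (v j) (v (j + 1)) ≤ δ (v p) (v (p + 1)) := by
  have hb : b = a + (b - a - 1) + 1 := by omega
  rw [hb]
  exact intMax hδ hmono (b - a - 1) a (by omega)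

lemma descend (f : ℕ → Bool) : ∀ j i, i < j → f i = true → f j = false →
    ∃ k, i ≤ k ∧ k < j ∧ f k = true ∧ f (k + 1) = false := by
  intro j
  induction j with
  | zero => omega
  | succ j ih =>
    intro i hij hfi hfj
    rcases Nat.lt_or_ge i j with h | h
    · cases hfjj : f j
      · obtain ⟨k, h1, h2, h3, h4⟩ := ih i h hfi hfjj
        exact ⟨k, h1, by omega, h3, h4⟩
      · exact ⟨j, by omega, by omega, hfjj, hfj⟩
    · have hij' : i = j := by omega
      subst hij'
      exact ⟨i, le_refl _, by omega, hfi, hfj⟩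

lemma uniq (hδ : Hδ δ) (hmono : ∀ i j, i < j → j < n → v i < v j)
    {i j : ℕ} (hij : i < j) (hjn : j + 1 < n)
    (heq : δ (v i) (v (i + 1)) = δ (v j) (v (j + 1))) :
    ∃ k, i < k ∧ k < j ∧ δ (v i) (v (i + 1)) < δ (v k) (v (k + 1)) := by
  have hvi : v i < v (i + 1) := hmono i (i + 1) (by omega) (by omega)
  have hvj : v j < v (j + 1) := hmono j (j + 1) (by omega) hjn
  have h1 : Nat.testBit (v (i + 1)) (δ (v i) (v (i + 1))) = true := (bitA hδ hvi).2
  have h2 : Nat.testBit (v j) (δ (v i) (v (i + 1))) = false := by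
    rw [heq]; exact (bitA hδ hvj).1
  rcases Nat.lt_or_ge (i + 1) j with hlt | hge
  · obtain ⟨k, hk1, hk2, hk3, hk4⟩ :=
      descend (fun k => Nat.testBit (v k) (δ (v i) (v (i + 1)))) j (i + 1) hlt h1 h2
    have hkn : k + 1 < n := by omega
    have hvk : v k < v (k + 1) := hmono k (k + 1) (by omega) hkn
    have hD : δ (v i) (v (i + 1)) ≤ δ (v k) (v (k + 1)) := by
      refine (hδ _ _ hvk.ne).2 _ ?_
      rw [hk3, hk4]; simp
    rcases Nat.eq_or_lt_of_le hD with hD' | hD'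
    · exfalso
      have := (bitA hδ hvk).1
      rw [← hD'] at this
      rw [hk3] at this; simp at this
    · exact ⟨k, by omega, hk2, hD'⟩
  · exfalso
    have hj : i + 1 = j := by omega
    subst hj
    rw [h1] at h2; simp at h2

lemma recMain (hδ : Hδ δ) (hmono : ∀ i j, i < j → j < n → v i < v j) :
    ∀ t a b, a ≤ b → b < n → 2 ^ t ≤ b - a + 1 →
    ∃ B : Finset ℕ,
      (∀ e ∈ B, ∃ p, a ≤ p ∧ p < b ∧ e = δ (v p) (v (p + 1))) ∧
      t ≤ B.card ∧
      (∀ δr ∈ B, ∀ δs ∈ B, δr ≠ δs → ∃ i j k, i < j ∧ j < k ∧ k < n ∧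
        ({δ (v i) (v j), δ (v j) (v k)} : Finset ℕ) = {δr, δs}) := by
  intro t
  induction t with
  | zero =>
    intro a b _ _ _
    exact ⟨∅, by simp, by simp, by simp⟩
  | succ t ih =>
    intro a b hab hbn hsz
    have h2t : 2 ^ (t + 1) = 2 ^ t + 2 ^ t := by rw [pow_succ]; ring
    have h1t : 1 ≤ 2 ^ t := Nat.one_le_two_pow
    have hab' : a < b := by omega
    obtain ⟨p, hpmem, hpmax⟩ := (Finset.Ico a b).exists_max_image
      (fun i => δ (v i) (v (i + 1))) ⟨a, Finset.mem_Ico.2 ⟨le_refl _, hab'⟩⟩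
    simp only [Finset.mem_Ico] at hpmem
    have hmax' : ∀ j, a ≤ j → j < b → δ (v j) (v (j + 1)) ≤ δ (v p) (v (p + 1)) :=
      fun j hj1 hj2 => hpmax j (Finset.mem_Ico.2 ⟨hj1, hj2⟩)
    have hstrict : ∀ j, a ≤ j → j < b → j ≠ p →
        δ (v j) (v (j + 1)) < δ (v p) (v (p + 1)) := by
      intro j hj1 hj2 hjp
      rcases Nat.eq_or_lt_of_le (hmax' j hj1 hj2) with hq | hq
      · exfalso
        rcases Nat.lt_or_ge j p with hlt | hge
        · obtain ⟨k, hk1, hk2, hk3⟩ := uniq hδ hmono hlt (by omega) hq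
          have := hmax' k (by omega) (by omega); omega
        · have hpj : p < j := by omega
          obtain ⟨k, hk1, hk2, hk3⟩ := uniq hδ hmono hpj (by omega) hq.symm
          have := hmax' k (by omega) (by omega); omega
      · exact hq
    rcases le_or_gt (2 ^ t) (b - p) with hside | hside
    · -- right side [p+1, b]
      obtain ⟨B', hB1, hB2, hB3⟩ := ih (p + 1) b (by omega) hbn (by omega)
      have hnotin : δ (v p) (v (p + 1)) ∉ B' := by
        intro hmem
        obtain ⟨r, h1, h2, h3⟩ := hB1 _ hmem
        have := hstrict r (by omega) h2 (by omega); omega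
      refine ⟨insert (δ (v p) (v (p + 1))) B', ?_, ?_, ?_⟩
      · intro e he
        rcases Finset.mem_insert.1 he with h | h
        · exact ⟨p, hpmem.1, hpmem.2, h⟩
        · obtain ⟨r, h1, h2, h3⟩ := hB1 e h
          exact ⟨r, by omega, h2, h3⟩
      · rw [Finset.card_insert_of_notMem hnotin]; omega
      · have key : ∀ e ∈ B', ∃ i j k, i < j ∧ j < k ∧ k < n ∧
            ({δ (v i) (v j), δ (v j) (v k)} : Finset ℕ)
              = {δ (v p) (v (p + 1)), e} := by
          intro e he
          obtain ⟨r, h1, h2, h3⟩ := hB1 _ he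
          obtain ⟨q, hq1, hq2, hq3, hq4⟩ := intMax' hδ hmono (show p < r by omega)
            (show r < n by omega)
          have hpr : δ (v p) (v r) = δ (v p) (v (p + 1)) := by
            have e1 := hmax' q (by omega) (by omega)
            have e2 := hq4 p (le_refl _) (by omega)
            omega
          exact ⟨p, r, r + 1, by omega, by omega, by omega, by rw [hpr, h3]⟩
        intro δr hδr δs hδs hrs
        rcases Finset.mem_insert.1 hδr with hr1 | hr1 <;>
          rcases Finset.mem_insert.1 hδs with hs1 | hs1
        · exact absurd (hr1.trans hs1.symm) hrs
        · obtain ⟨i, j, k, g1, g2, g3, g4⟩ := key δs hs1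
          exact ⟨i, j, k, g1, g2, g3, by rw [g4, hr1]⟩
        · obtain ⟨i, j, k, g1, g2, g3, g4⟩ := key δr hr1
          exact ⟨i, j, k, g1, g2, g3, by rw [g4, hs1, Finset.pair_comm]⟩
        · exact hB3 _ hr1 _ hs1 hrs
    · -- left side [a, p]
      obtain ⟨B', hB1, hB2, hB3⟩ := ih a p hpmem.1 (by omega) (by omega)
      have hnotin : δ (v p) (v (p + 1)) ∉ B' := by
        intro hmem
        obtain ⟨r, h1, h2, h3⟩ := hB1 _ hmem
        have := hstrict r h1 (by omega) (by omega); omega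
      refine ⟨insert (δ (v p) (v (p + 1))) B', ?_, ?_, ?_⟩
      · intro e he
        rcases Finset.mem_insert.1 he with h | h
        · exact ⟨p, hpmem.1, hpmem.2, h⟩
        · obtain ⟨r, h1, h2, h3⟩ := hB1 e h
          exact ⟨r, h1, by omega, h3⟩
      · rw [Finset.card_insert_of_notMem hnotin]; omega
      · have key : ∀ e ∈ B', ∃ i j k, i < j ∧ j < k ∧ k < n ∧
            ({δ (v i) (v j), δ (v j) (v k)} : Finset ℕ)
              = {δ (v p) (v (p + 1)), e} := by
          intro e he
          obtain ⟨r, h1, h2, h3⟩ := hB1 _ he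
          obtain ⟨q, hq1, hq2, hq3, hq4⟩ := intMax' hδ hmono
            (show r + 1 < p + 1 by omega) (show p + 1 < n by omega)
          have hpr : δ (v (r + 1)) (v (p + 1)) = δ (v p) (v (p + 1)) := by
            have e1 := hmax' q (by omega) (by omega)
            have e2 := hq4 p (by omega) (by omega)
            omega
          refine ⟨r, r + 1, p + 1, by omega, by omega, by omega, ?_⟩
          rw [hpr, h3, Finset.pair_comm]
        intro δr hδr δs hδs hrs
        rcases Finset.mem_insert.1 hδr with hr1 | hr1 <;>
          rcases Finset.mem_insert.1 hδs with hs1 | hs1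
        · exact absurd (hr1.trans hs1.symm) hrs
        · obtain ⟨i, j, k, g1, g2, g3, g4⟩ := key δs hs1
          exact ⟨i, j, k, g1, g2, g3, by rw [g4, hr1]⟩
        · obtain ⟨i, j, k, g1, g2, g3, g4⟩ := key δr hr1
          exact ⟨i, j, k, g1, g2, g3, by rw [g4, hs1, Finset.pair_comm]⟩
        · exact hB3 _ hr1 _ hs1 hrs

end Seq

end Stmt8Aux

/-- the stepping-up lemma: for the coloring χ(v₁,v₂,v₃) = φ{δ(v₁,v₂),δ(v₂,v₃)}
of triples of {0,…,2^M-1}, any 2^m increasing vertices admit m distinct consecutive δ-values B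
such that every pair of colors φ(δ_r,δ_s), for {δ_r,δ_s} ⊆ B, is realized by some triple. -/
theorem stmt_8 (M q : ℕ) (hM : 1 ≤ M) (δ : ℕ → ℕ → ℕ)
    (hδ : ∀ u v : ℕ, u ≠ v →
      (Nat.testBit u (δ u v) ≠ Nat.testBit v (δ u v) ∧
        ∀ i, Nat.testBit u i ≠ Nat.testBit v i → i ≤ δ u v))
    (φ : Finset ℕ → Fin q) (m : ℕ) (hm : 2 ≤ m) (n : ℕ) (hn : n = 2 ^ m)
    (v : ℕ → ℕ) (hmono : ∀ i j, i < j → j < n → v i < v j)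
    (hbound : ∀ i, i < n → v i < 2 ^ M) :
    ∃ B : Finset ℕ,
      B ⊆ (Finset.range (n - 1)).image (fun i => δ (v i) (v (i + 1))) ∧
      m ≤ B.card ∧
      ∀ δr ∈ B, ∀ δs ∈ B, δr ≠ δs →
        ∃ i j k, i < j ∧ j < k ∧ k < n ∧
          φ {δ (v i) (v j), δ (v j) (v k)} = φ {δr, δs} := by
  have hn4 : 4 ≤ n := by
    rw [hn]
    calc 4 = 2 ^ 2 := by norm_num
    _ ≤ 2 ^ m := Nat.pow_le_pow_right (by norm_num) hm
  have hsz : 2 ^ m ≤ (n - 1) - 0 + 1 := by rw [hn] at *; omega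
  obtain ⟨B, hB1, hB2, hB3⟩ := Stmt8Aux.recMain hδ hmono m 0 (n - 1)
    (by omega) (by omega) hsz
  refine ⟨B, ?_, hB2, ?_⟩
  · intro e he
    obtain ⟨p, h1, h2, h3⟩ := hB1 e he
    exact Finset.mem_image.2 ⟨p, Finset.mem_range.2 (by omega), h3.symm⟩
  · intro δr hδr δs hδs hrs
    obtain ⟨i, j, k, g1, g2, g3, g4⟩ := hB3 δr hδr δs hδs hrs
    exact ⟨i, j, k, g1, g2, g3, congrArg φ g4⟩
end

section
/- For all integers n > q ≥ 9, f(n;q,3) ≥ f(⌊n/log₂ n⌋; q-6, 3)^{⌊n^{1/4}/2⌋} (a recursive lower bound: a q-coloring with the 3-color property on a ground set of that size exists). -/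
/-- `hasColoring N n q t` : there is a q-coloring of the triples of an N-element set in which
every n-element subset induces at least t distinct colors. -/
def hasColoring (N n q t : ℕ) : Prop :=
  ∃ χ : Finset ℕ → Fin q, ∀ A ⊆ Finset.range N, A.card = n →
    t ≤ ((Finset.powersetCard 3 A).image χ).card

/-- `f n q t` is the maximum N admitting such a coloring. -/
noncomputable def f (n q t : ℕ) : ℕ := sSup {N | hasColoring N n q t}

namespace EH


open Finset

/-- downward closure -/
lemma hasColoring_mono {N N' n q t : ℕ} (h : hasColoring N n q t) (hle : N' ≤ N) :
    hasColoring N' n q t := by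
  obtain ⟨χ, hχ⟩ := h
  exact ⟨χ, fun A hA hc => hχ A (hA.trans (Finset.range_subset_range.2 hle)) hc⟩

/-- vacuous coloring when N < n -/
lemma hasColoring_vac {N n q t : ℕ} (hq : 0 < q) (h : N < n) : hasColoring N n q t := by
  refine ⟨fun _ => ⟨0, hq⟩, fun A hA hc => ?_⟩
  have h1 := Finset.card_le_card hA
  rw [Finset.card_range] at h1
  omega

section Ramsey

variable (q : ℕ)

lemma fiber (hq : 0 < q) (g : ℕ → Fin q) (S : Finset ℕ) (r : ℕ) (h : q * r ≤ S.card) :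
    ∃ c, r ≤ (S.filter (fun y => g y = c)).card := by
  obtain ⟨c, _, hc⟩ := Finset.exists_le_card_fiber_of_mul_le_card_of_maps_to
    (t := (Finset.univ : Finset (Fin q))) (f := g)
    (fun a _ => Finset.mem_univ _) ⟨⟨0, hq⟩, Finset.mem_univ _⟩ (by simpa using h)
  exact ⟨c, hc⟩

def P2 : ℕ → ℕ
  | 0 => 0
  | s+1 => q * P2 s + 1

/-- min-homogeneous for pairs -/
def MH2 (g : Finset ℕ → Fin q) (T : Finset ℕ) : Prop :=
  ∀ a ∈ T, ∀ b ∈ T, ∀ d ∈ T, a < b → a < d → g {a, b} = g {a, d}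

lemma minhom2 (hq : 0 < q) (g : Finset ℕ → Fin q) :
    ∀ s (S : Finset ℕ), P2 q s ≤ S.card → ∃ T ⊆ S, T.card = s ∧ MH2 q g T := by
  intro s
  induction s with
  | zero => exact fun S _ => ⟨∅, Finset.empty_subset _, Finset.card_empty, by simp [MH2]⟩
  | succ s ih =>
    intro S hS
    have hne : S.Nonempty := Finset.card_pos.1 (by simp [P2] at hS; omega)
    set a := S.min' hne with ha
    have haS : a ∈ S := S.min'_mem hne
    have hcard : q * P2 q s ≤ (S.erase a).card := by
      rw [Finset.card_erase_of_mem haS]; simp [P2] at hS; omega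
    obtain ⟨c, hc⟩ := fiber q hq (fun y => g {a, y}) (S.erase a) (P2 q s) hcard
    obtain ⟨T', hT'sub, hT'card, hT'mh⟩ := ih _ hc
    have hT'S : T' ⊆ S.erase a := hT'sub.trans (Finset.filter_subset _ _)
    have haT' : a ∉ T' := fun hmem => (Finset.mem_erase.1 (hT'S hmem)).1 rfl
    refine ⟨insert a T', Finset.insert_subset haS (hT'S.trans (Finset.erase_subset _ _)), ?_, ?_⟩
    · rw [Finset.card_insert_of_notMem haT', hT'card]
    · intro x hx b hb d hd hxb hxd
      rcases Finset.mem_insert.1 hx with rfl | hx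
      · have hb' : b ∈ T' := by
          rcases Finset.mem_insert.1 hb with rfl | hb'
          · omega
          · exact hb'
        have hd' : d ∈ T' := by
          rcases Finset.mem_insert.1 hd with rfl | hd'
          · omega
          · exact hd'
        have h1 := (Finset.mem_filter.1 (hT'sub hb')).2
        have h2 := (Finset.mem_filter.1 (hT'sub hd')).2
        rw [h1, h2]
      · have hxa : x ∈ S := (Finset.erase_subset _ _) (hT'S hx)
        have hax : a ≤ x := S.min'_le x hxa
        have hb' : b ∈ T' := by
          rcases Finset.mem_insert.1 hb with rfl | hb'
          · omega
          · exact hb'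
        have hd' : d ∈ T' := by
          rcases Finset.mem_insert.1 hd with rfl | hd'
          · omega
          · exact hd'
        exact hT'mh x hx b hb' d hd' hxb hxd

lemma mono2 (hq : 0 < q) (g : Finset ℕ → Fin q) (nn : ℕ) (S : Finset ℕ)
    (hS : P2 q (q * nn + 1) ≤ S.card) :
    ∃ U ⊆ S, U.card = nn ∧ ∃ c, ∀ a ∈ U, ∀ b ∈ U, a < b → g {a, b} = c := by
  obtain ⟨T, hTS, hTcard, hTmh⟩ := minhom2 q hq g (q * nn + 1) S hS
  have hTne : T.Nonempty := Finset.card_pos.1 (by omega)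
  set t1 := T.max' hTne with ht1
  have ht1T : t1 ∈ T := T.max'_mem hTne
  have hcard : q * nn ≤ (T.erase t1).card := by
    rw [Finset.card_erase_of_mem ht1T]; omega
  obtain ⟨c, hc⟩ := fiber q hq (fun y => g {y, t1}) (T.erase t1) nn hcard
  obtain ⟨U, hUF, hUcard⟩ := Finset.exists_subset_card_eq hc
  have hUT' : U ⊆ T.erase t1 := hUF.trans (Finset.filter_subset _ _)
  refine ⟨U, (hUT'.trans (Finset.erase_subset _ _)).trans hTS, hUcard, c, ?_⟩
  intro a ha b hb hab
  have haT : a ∈ T := (Finset.erase_subset _ _) (hUT' ha)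
  have hbT : b ∈ T := (Finset.erase_subset _ _) (hUT' hb)
  have hat1 : a < t1 := lt_of_le_of_ne (T.le_max' a haT) (Finset.mem_erase.1 (hUT' ha)).1
  have := hTmh a haT b hbT t1 ht1T hab hat1
  rw [this]
  exact (Finset.mem_filter.1 (hUF ha)).2

end Ramsey


open Finset

/-- sort a 3-element finset -/
lemma sort3 {B : Finset ℕ} (hB : B.card = 3) :
    ∃ a b c, a < b ∧ b < c ∧ B = {a, b, c} := by
  obtain ⟨x, y, z, hxy, hxz, hyz, rfl⟩ := Finset.card_eq_three.1 hB
  have perm : ∀ u v w : ℕ, ({x, y, z} : Finset ℕ) = {u, v, w} ∨ True := fun _ _ _ => Or.inr trivial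
  rcases lt_trichotomy x y with h1 | h1 | h1
  · rcases lt_trichotomy y z with h2 | h2 | h2
    · exact ⟨x, y, z, h1, h2, rfl⟩
    · omega
    · rcases lt_trichotomy x z with h3 | h3 | h3
      · exact ⟨x, z, y, h3, h2, by ext t; simp; tauto⟩
      · omega
      · exact ⟨z, x, y, h3, h1, by ext t; simp; tauto⟩
  · omega
  · rcases lt_trichotomy x z with h2 | h2 | h2
    · exact ⟨y, x, z, h1, h2, by ext t; simp; tauto⟩
    · omega
    · rcases lt_trichotomy y z with h3 | h3 | h3
      · exact ⟨y, z, x, h3, h2, by ext t; simp; tauto⟩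
      · omega
      · exact ⟨z, y, x, h3, h1, by ext t; simp; tauto⟩

lemma mem3 {a b c : ℕ} {B : Finset ℕ} (h : B = ({a,b,c} : Finset ℕ)) :
    a ∈ B ∧ b ∈ B ∧ c ∈ B := by subst h; refine ⟨?_, ?_, ?_⟩ <;> simp

lemma card3 {a b c : ℕ} (h1 : a < b) (h2 : b < c) : ({a,b,c} : Finset ℕ).card = 3 := by
  rw [Finset.card_insert_of_notMem (by simp; omega), Finset.card_insert_of_notMem (by simp; omega),
    Finset.card_singleton]


open Finset


def P3 (q : ℕ) : ℕ → ℕ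
  | 0 => 0
  | s+1 => P2 q (q * P3 q s + 1) + 1

def MH3 (q : ℕ) (χ : Finset ℕ → Fin q) (T : Finset ℕ) : Prop :=
  ∀ a ∈ T, ∀ b ∈ T, ∀ c ∈ T, ∀ b' ∈ T, ∀ c' ∈ T,
    a < b → b < c → a < b' → b' < c' → χ {a, b, c} = χ {a, b', c'}

lemma minhom3 (q : ℕ) (hq : 0 < q) (χ : Finset ℕ → Fin q) :
    ∀ s (S : Finset ℕ), P3 q s ≤ S.card → ∃ T ⊆ S, T.card = s ∧ MH3 q χ T := by
  intro s
  induction s with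
  | zero => exact fun S _ => ⟨∅, Finset.empty_subset _, Finset.card_empty, by simp [MH3]⟩
  | succ s ih =>
    intro S hS
    rw [P3] at hS
    have hne : S.Nonempty := Finset.card_pos.1 (by omega)
    set a := S.min' hne with ha
    have haS : a ∈ S := S.min'_mem hne
    have hcard : P2 q (q * P3 q s + 1) ≤ (S.erase a).card := by
      rw [Finset.card_erase_of_mem haS]; omega
    obtain ⟨U, hUsub, hUcard, c, hc⟩ := mono2 q hq (fun B => χ (insert a B)) (P3 q s) (S.erase a)
      hcard
    obtain ⟨T', hT'sub, hT'card, hT'mh⟩ := ih U (by omega)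
    have hT'S : T' ⊆ S.erase a := hT'sub.trans hUsub
    have haT' : a ∉ T' := fun hmem => (Finset.mem_erase.1 (hT'S hmem)).1 rfl
    refine ⟨insert a T', Finset.insert_subset haS (hT'S.trans (Finset.erase_subset _ _)), ?_, ?_⟩
    · rw [Finset.card_insert_of_notMem haT', hT'card]
    · intro x hx b hb c' hc' b' hb' c'' hc'' hxb hbc hxb' hb'c
      have hmem : ∀ y ∈ insert a T', x < y → y ∈ T' := by
        intro y hy hxy
        rcases Finset.mem_insert.1 hy with rfl | hy'
        · exfalso
          rcases Finset.mem_insert.1 hx with h | hx'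
          · omega
          · have : a ≤ x := S.min'_le x ((Finset.erase_subset _ _) (hT'S hx'))
            omega
        · exact hy'
      rcases Finset.mem_insert.1 hx with hxa | hx'
      · subst hxa
        have e1 : χ {a, b, c'} = c := by
          have := hc b (hT'sub (hmem b hb hxb)) c' (hT'sub (hmem c' hc' (by omega))) hbc
          simpa using this
        have e2 : χ {a, b', c''} = c := by
          have := hc b' (hT'sub (hmem b' hb' hxb')) c'' (hT'sub (hmem c'' hc'' (by omega))) hb'c
          simpa using this
        rw [e1, e2]
      · exact hT'mh x hx' b (hmem b hb hxb) c' (hmem c' hc' (by omega)) b' (hmem b' hb' hxb')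
          c'' (hmem c'' hc'' (by omega)) hxb hbc hxb' hb'c

/-- Ramsey for triples: big enough sets contain monochromatic n-sets -/
lemma ram3 (q nn : ℕ) (hq : 0 < q) (χ : Finset ℕ → Fin q) (S : Finset ℕ)
    (hS : P3 q (q * nn + 2) ≤ S.card) :
    ∃ T ⊆ S, T.card = nn ∧ ∃ c, ∀ B ∈ Finset.powersetCard 3 T, χ B = c := by
  obtain ⟨T₀, hT₀S, hT₀card, hmh⟩ := minhom3 q hq χ (q * nn + 2) S hS
  have hne0 : T₀.Nonempty := Finset.card_pos.1 (by omega)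
  set m1 := T₀.max' hne0 with hm1
  have hm1T : m1 ∈ T₀ := T₀.max'_mem hne0
  set T₁ := T₀.erase m1 with hT₁
  have hT₁card : T₁.card = q * nn + 1 := by rw [hT₁, Finset.card_erase_of_mem hm1T]; omega
  have hne1 : T₁.Nonempty := Finset.card_pos.1 (by omega)
  set m2 := T₁.max' hne1 with hm2
  have hm2T : m2 ∈ T₁ := T₁.max'_mem hne1
  set T₂ := T₁.erase m2 with hT₂
  have hT₂card : q * nn ≤ T₂.card := by rw [hT₂, Finset.card_erase_of_mem hm2T]; omega
  obtain ⟨c, hc⟩ := fiber q hq (fun y => χ {y, m2, m1}) T₂ nn hT₂card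
  obtain ⟨U, hUF, hUcard⟩ := Finset.exists_subset_card_eq hc
  have hUT₂ : U ⊆ T₂ := hUF.trans (Finset.filter_subset _ _)
  have hUT₀ : U ⊆ T₀ := fun u hu => (Finset.erase_subset _ _) ((Finset.erase_subset _ _) (hUT₂ hu))
  have hm2m1 : m2 < m1 := lt_of_le_of_ne (T₀.le_max' m2 ((Finset.erase_subset _ _) hm2T))
    (Finset.mem_erase.1 hm2T).1
  refine ⟨U, hUT₀.trans hT₀S, hUcard, c, ?_⟩
  intro B hB
  obtain ⟨hBU, hBcard⟩ := Finset.mem_powersetCard.1 hB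
  obtain ⟨x, y, z, hxy, hyz, hBeq⟩ := sort3 hBcard
  have hx : x ∈ U := hBU (by rw [hBeq]; simp)
  have hy : y ∈ U := hBU (by rw [hBeq]; simp)
  have hz : z ∈ U := hBU (by rw [hBeq]; simp)
  have hxm2 : x < m2 := by
    have h1 : x ≤ m2 := T₁.le_max' x ((Finset.erase_subset _ _) (hUT₂ hx))
    have h2 : x ≠ m2 := (Finset.mem_erase.1 (hUT₂ hx)).1
    omega
  have e1 : χ {x, y, z} = χ {x, m2, m1} :=
    hmh x (hUT₀ hx) y (hUT₀ hy) z (hUT₀ hz) m2 ((Finset.erase_subset _ _) hm2T) m1 hm1T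
      hxy hyz hxm2 hm2m1
  have e2 : χ {x, m2, m1} = c := (Finset.mem_filter.1 (hUF hx)).2
  rw [hBeq, e1, e2]



lemma noColoring (q nn : ℕ) (hq : 0 < q) (hn : 3 ≤ nn) :
    ¬ hasColoring (P3 q (q * nn + 2)) nn q 3 := by
  rintro ⟨χ, hχ⟩
  set R := P3 q (q * nn + 2) with hR
  obtain ⟨T, hTS, hTcard, c, hc⟩ := ram3 q nn hq χ (Finset.range R) (by rw [Finset.card_range])
  have h3 := hχ T hTS hTcard
  have himg : (Finset.powersetCard 3 T).image χ ⊆ {c} := by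
    intro v hv
    obtain ⟨B, hB, rfl⟩ := Finset.mem_image.1 hv
    rw [hc B hB]; exact Finset.mem_singleton_self c
  have := Finset.card_le_card himg
  simp at this
  omega

lemma bddf (q nn : ℕ) (hq : 0 < q) (hn : 3 ≤ nn) : BddAbove {N | hasColoring N nn q 3} := by
  refine ⟨P3 q (q * nn + 2), fun N hN => ?_⟩
  by_contra hlt
  push_neg at hlt
  exact noColoring q nn hq hn (hasColoring_mono hN (le_of_lt hlt))

lemma le_f {N q nn : ℕ} (hq : 0 < q) (hn : 3 ≤ nn) (h : hasColoring N nn q 3) :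
    N ≤ f nn q 3 := le_csSup (bddf q nn hq hn) h

lemma f_mem (q nn : ℕ) (hq : 0 < q) (hn : 3 ≤ nn) : hasColoring (f nn q 3) nn q 3 := by
  have h0 : (0 : ℕ) ∈ {N | hasColoring N nn q 3} := by
    rw [Set.mem_setOf_eq]
    exact hasColoring_vac hq (by omega)
  exact Nat.sSup_mem ⟨0, h0⟩ (bddf q nn hq hn)

lemma two_le_f (q nn : ℕ) (hq : 0 < q) (hn : 3 ≤ nn) : 2 ≤ f nn q 3 :=
  le_f hq hn (hasColoring_vac (N := 2) (n := nn) hq (by omega))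


open Finset

def d1 (k : ℕ) : ℕ := 2 * Nat.log 2 k + 1

lemma two_pow_succ_le : ∀ a, 2 ≤ a → 2 ^ (a+1) ≤ 3 ^ a := by
  intro a
  induction a with
  | zero => omega
  | succ a ih =>
    intro ha
    rcases Nat.lt_or_ge a 2 with h | h
    · interval_cases a
      · omega
      · norm_num
    · calc 2 ^ (a+1+1) = 2 * 2 ^ (a+1) := by ring
        _ ≤ 2 * 3 ^ a := by have := ih h; omega
        _ ≤ 3 * 3 ^ a := by have : 0 < 3 ^ a := Nat.pow_pos (by norm_num); omega
        _ = 3 ^ (a+1) := by ring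

lemma aux_pow (b : ℕ) (hb : 2 ≤ b) : 2 ^ (2 * (b+1)^2 + 2) ≤ 3 ^ ((b+1) * (2*b+1)) := by
  induction b with
  | zero => omega
  | succ b ih =>
    rcases Nat.lt_or_ge b 2 with hb2 | hb2
    · interval_cases b
      · omega
      · norm_num
    · have h1 := ih hb2
      calc 2^(2*(b+1+1)^2+2) = 2^(2*(b+1)^2+2) * 2^(4*b+6) := by
              rw [show 2*(b+1+1)^2+2 = (2*(b+1)^2+2)+(4*b+6) from by ring, pow_add]
        _ ≤ 3^((b+1)*(2*b+1)) * 3^(4*b+5) :=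
              Nat.mul_le_mul h1 (two_pow_succ_le (4*b+5) (by omega))
        _ = 3^((b+1+1)*(2*(b+1)+1)) := by
              rw [show (b+1+1)*(2*(b+1)+1) = ((b+1)*(2*b+1))+(4*b+5) from by ring, pow_add]
              ring

lemma psi_exists (k : ℕ) : ∃ ψ : ℕ → ℕ → Fin 3,
    ∀ T ⊆ Finset.range k, ∀ x : Fin 3,
      (∀ s ∈ T, ∀ t ∈ T, t < s → ψ s t = x) → T.card ≤ d1 k := by
  rcases Nat.lt_or_ge (d1 k) k with hk | hk
  swap
  · exact ⟨fun _ _ => 0, fun T hT x _ =>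
      le_trans (le_trans (Finset.card_le_card hT) (by rw [Finset.card_range])) hk⟩
  have hk4 : 4 ≤ k := by
    rcases Nat.lt_or_ge k 4 with h | h
    · exfalso
      have hd : k ≤ d1 k := by
        rcases Nat.lt_or_ge k 2 with h2 | h2
        · simp [d1]; omega
        · have : 0 < Nat.log 2 k := Nat.log_pos (by norm_num) h2
          simp only [d1]; omega
      omega
    · exact h
  set b := Nat.log 2 k with hbdef
  have hb2 : 2 ≤ b := by
    have h1 : Nat.log 2 4 ≤ Nat.log 2 k := Nat.log_mono_right hk4
    have h2 : Nat.log 2 4 = 2 := Nat.log_eq_of_pow_le_of_lt_pow (by norm_num) (by norm_num)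
    omega
  set s0 := d1 k + 1 with hs0def
  have hs0 : s0 = 2*b + 2 := by simp [hs0def, d1, hbdef]
  have hs0k : s0 ≤ k := by omega
  set E : ℕ := (b+1) * (2*b+1) with hEdef
  classical
  set PT : Finset (Fin k) → Finset (Fin k × Fin k) :=
    fun T => (T ×ˢ T).filter (fun p => p.2 < p.1) with hPT
  have cardPT : ∀ T : Finset (Fin k), T.card = s0 → (PT T).card = E := by
    intro T hT
    have hbij : (PT T).card = (Finset.powersetCard 2 T).card := by
      apply Finset.card_bij (fun p _ => ({p.2, p.1} : Finset (Fin k)))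
      · intro p hp
        simp only [hPT, Finset.mem_filter, Finset.mem_product] at hp
        refine Finset.mem_powersetCard.2 ⟨?_, ?_⟩
        · intro u hu
          rcases Finset.mem_insert.1 hu with rfl | hu
          · exact hp.1.2
          · rw [Finset.mem_singleton.1 hu]; exact hp.1.1
        · rw [Finset.card_insert_of_notMem (by simp; exact Fin.ne_of_lt hp.2),
            Finset.card_singleton]
      · intro p hp p' hp' heq
        simp only [hPT, Finset.mem_filter, Finset.mem_product] at hp hp'
        have h1 : p.1 ∈ ({p'.2, p'.1} : Finset (Fin k)) := by rw [← heq]; simp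
        have h2 : p.2 ∈ ({p'.2, p'.1} : Finset (Fin k)) := by rw [← heq]; simp
        simp only [Finset.mem_insert, Finset.mem_singleton] at h1 h2
        have hlt := hp.2; have hlt' := hp'.2
        rw [Fin.lt_def] at hlt hlt'
        have h1v : p.1.val = p'.2.val ∨ p.1.val = p'.1.val := by
          rcases h1 with h | h
          · exact Or.inl (congrArg Fin.val h)
          · exact Or.inr (congrArg Fin.val h)
        have h2v : p.2.val = p'.2.val ∨ p.2.val = p'.1.val := by
          rcases h2 with h | h
          · exact Or.inl (congrArg Fin.val h)
          · exact Or.inr (congrArg Fin.val h)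
        have hv : p.1.val = p'.1.val ∧ p.2.val = p'.2.val := by omega
        exact Prod.ext (Fin.ext hv.1) (Fin.ext hv.2)
      · intro B hB
        obtain ⟨hBT, hBcard⟩ := Finset.mem_powersetCard.1 hB
        obtain ⟨u, v, huv, rfl⟩ := Finset.card_eq_two.1 hBcard
        have hu : u ∈ T := hBT (by simp)
        have hv : v ∈ T := hBT (by simp)
        rcases lt_or_gt_of_ne huv with h | h
        · refine ⟨(v, u), ?_, rfl⟩
          simp only [hPT, Finset.mem_filter, Finset.mem_product]
          exact ⟨⟨hv, hu⟩, h⟩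
        · refine ⟨(u, v), ?_, by rw [Finset.pair_comm]⟩
          simp only [hPT, Finset.mem_filter, Finset.mem_product]
          exact ⟨⟨hu, hv⟩, h⟩
    rw [hbij, Finset.card_powersetCard, hT, hs0, Nat.choose_two_right]
    have e : 2*b+2-1 = 2*b+1 := by omega
    rw [e]
    have e2 : (2*b+2)*(2*b+1) = 2*((b+1)*(2*b+1)) := by ring
    rw [e2, Nat.mul_div_cancel_left _ (by norm_num)]
  have cardBad : ∀ (T : Finset (Fin k)) (c : Fin 3), T.card = s0 →
      ((Finset.univ : Finset (Fin k × Fin k → Fin 3)).filter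
        (fun g => ∀ p ∈ PT T, g p = c)).card = 3 ^ (k*k - E) := by
    intro T c hT
    have heq : (Finset.univ.filter (fun g : Fin k × Fin k → Fin 3 => ∀ p ∈ PT T, g p = c))
        = Fintype.piFinset (fun p => if p ∈ PT T then ({c} : Finset (Fin 3)) else Finset.univ) := by
      ext g
      simp only [Finset.mem_filter, Finset.mem_univ, true_and, Fintype.mem_piFinset]
      constructor
      · intro h p
        by_cases hp : p ∈ PT T
        · simp [hp, h p hp]
        · simp [hp]
      · intro h p hp
        have := h p
        simp [hp] at this
        exact this
    rw [heq, Fintype.card_piFinset]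
    have hcards : ∀ p : Fin k × Fin k,
        ((if p ∈ PT T then ({c} : Finset (Fin 3)) else Finset.univ)).card
        = if p ∈ PT T then 1 else 3 := by
      intro p; split <;> simp
    rw [Finset.prod_congr rfl (fun p _ => hcards p), Finset.prod_ite]
    simp only [Finset.prod_const_one, Finset.prod_const, one_mul]
    congr 1
    have h1 : (Finset.univ.filter (fun p : Fin k × Fin k => p ∈ PT T)) = PT T := by
      ext p; simp
    have h2 := Finset.card_filter_add_card_filter_not
      (s := (Finset.univ : Finset (Fin k × Fin k))) (fun p => p ∈ PT T)
    rw [h1] at h2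
    have h3 : (Finset.univ : Finset (Fin k × Fin k)).card = k * k := by
      simp [Finset.card_univ]
    have h4 := cardPT T hT
    omega
  have hEk : E ≤ k * k := by
    have h1 : E ≤ s0 * s0 := by rw [hEdef, hs0]; nlinarith
    have h2 : s0 * s0 ≤ k * k := Nat.mul_le_mul hs0k hs0k
    omega
  have key : (Nat.choose k s0) * (3 * 3 ^ (k*k - E)) < 3 ^ (k*k) := by
    have h1 : Nat.choose k s0 ≤ k ^ s0 := Nat.choose_le_pow k s0
    have h2 : k ^ s0 < 2 ^ ((b+1) * s0) := by
      rw [pow_mul]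
      exact Nat.pow_lt_pow_left (Nat.lt_pow_succ_log_self (by norm_num) k) (by omega)
    have h3 : (2:ℕ) ^ ((b+1) * s0) * 3 ≤ 2 ^ ((b+1)*s0 + 2) := by
      rw [pow_add]
      have : (0:ℕ) < 2 ^ ((b+1)*s0) := Nat.pow_pos (by norm_num)
      nlinarith
    have h4 : (b+1)*s0 + 2 = 2 * (b+1)^2 + 2 := by rw [hs0]; ring
    have h5 : (2:ℕ) ^ ((b+1)*s0 + 2) ≤ 3 ^ E := by rw [h4, hEdef]; exact aux_pow b hb2
    have h6 : Nat.choose k s0 * 3 < 3 ^ E := by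
      calc Nat.choose k s0 * 3 ≤ k ^ s0 * 3 := by nlinarith
        _ < 2 ^ ((b+1)*s0) * 3 := by
            have h3' : (0:ℕ) < 3 := by norm_num
            exact mul_lt_mul_of_pos_right h2 h3'
        _ ≤ 2 ^ ((b+1)*s0 + 2) := h3
        _ ≤ 3 ^ E := h5
    calc Nat.choose k s0 * (3 * 3 ^ (k*k - E)) = (Nat.choose k s0 * 3) * 3 ^ (k*k - E) := by ring
      _ < 3 ^ E * 3 ^ (k*k - E) := by
          exact mul_lt_mul_of_pos_right h6 (Nat.pow_pos (by norm_num))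
      _ = 3 ^ (k*k) := by rw [← pow_add]; congr 1; omega
  obtain ⟨g0, hg0⟩ : ∃ g0 : Fin k × Fin k → Fin 3,
      ∀ T ∈ Finset.powersetCard s0 (Finset.univ : Finset (Fin k)), ∀ c : Fin 3,
        ¬ (∀ p ∈ PT T, g0 p = c) := by
    by_contra hcon
    push_neg at hcon
    have hsub : (Finset.univ : Finset (Fin k × Fin k → Fin 3)) ⊆
        (Finset.powersetCard s0 (Finset.univ : Finset (Fin k))).biUnion
          (fun T => (Finset.univ : Finset (Fin 3)).biUnion
            (fun c => Finset.univ.filter (fun g => ∀ p ∈ PT T, g p = c))) := by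
      intro g _
      obtain ⟨T, hT, c, hc⟩ := hcon g
      exact Finset.mem_biUnion.2 ⟨T, hT, Finset.mem_biUnion.2
        ⟨c, Finset.mem_univ c, Finset.mem_filter.2 ⟨Finset.mem_univ g, hc⟩⟩⟩
    have hcard := Finset.card_le_card hsub
    have hle : ((Finset.powersetCard s0 (Finset.univ : Finset (Fin k))).biUnion
          (fun T => (Finset.univ : Finset (Fin 3)).biUnion
            (fun c => Finset.univ.filter (fun g : Fin k × Fin k → Fin 3 =>
              ∀ p ∈ PT T, g p = c)))).card ≤ (Nat.choose k s0) * (3 * 3^(k*k - E)) := by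
      refine le_trans Finset.card_biUnion_le ?_
      have hbound : ∀ T ∈ Finset.powersetCard s0 (Finset.univ : Finset (Fin k)),
          ((Finset.univ : Finset (Fin 3)).biUnion
            (fun c => Finset.univ.filter (fun g : Fin k × Fin k → Fin 3 =>
              ∀ p ∈ PT T, g p = c))).card ≤ 3 * 3^(k*k - E) := by
        intro T hT
        refine le_trans Finset.card_biUnion_le ?_
        have : ∀ c : Fin 3, (Finset.univ.filter (fun g : Fin k × Fin k → Fin 3 =>
            ∀ p ∈ PT T, g p = c)).card = 3^(k*k-E) :=
          fun c => cardBad T c (Finset.mem_powersetCard.1 hT).2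
        rw [Finset.sum_congr rfl (fun c _ => this c), Finset.sum_const]
        simp [Finset.card_univ]
      refine le_trans (Finset.sum_le_sum hbound) ?_
      rw [Finset.sum_const, Finset.card_powersetCard]
      simp [Finset.card_univ]
    have huniv : (Finset.univ : Finset (Fin k × Fin k → Fin 3)).card = 3^(k*k) := by
      rw [Finset.card_univ, Fintype.card_fun]
      simp
    have hfin : (3:ℕ)^(k*k) ≤ (Nat.choose k s0) * (3 * 3^(k*k - E)) := by
      rw [← huniv]
      exact hcard.trans hle
    exact absurd key (not_lt.2 hfin)
  refine ⟨fun s t => if hs : s < k then if ht : t < k then g0 (⟨s,hs⟩, ⟨t,ht⟩) else 0 else 0, ?_⟩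
  intro T hT x hmono
  by_contra hbig
  push_neg at hbig
  obtain ⟨T', hT'T, hT'card⟩ := Finset.exists_subset_card_eq (show s0 ≤ T.card by omega)
  have hT'k : ∀ m ∈ T', m < k := fun m hm => Finset.mem_range.1 (hT (hT'T hm))
  set T'' := T'.attachFin hT'k with hT''
  have hT''card : T''.card = s0 := by rw [hT'', Finset.card_attachFin, hT'card]
  have hmem : T'' ∈ Finset.powersetCard s0 (Finset.univ : Finset (Fin k)) :=
    Finset.mem_powersetCard.2 ⟨Finset.subset_univ _, hT''card⟩
  apply hg0 T'' hmem x
  intro p hp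
  simp only [hPT, Finset.mem_filter, Finset.mem_product, hT'', Finset.mem_attachFin] at hp
  have hlt : p.2.val < p.1.val := hp.2
  have := hmono p.1.val (hT'T hp.1.1) p.2.val (hT'T hp.1.2) hlt
  have h1k : p.1.val < k := p.1.isLt
  have h2k : p.2.val < k := p.2.isLt
  dsimp only at this
  rw [dif_pos h1k, dif_pos h2k] at this
  simpa using this


open Finset


variable (M k : ℕ)

def dg (j a : ℕ) : ℕ := a / M^j % M

def DD (a b : ℕ) : ℕ := Nat.findGreatest (fun t => a / M^t ≠ b / M^t) k

section DigitLemmas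

variable {M k : ℕ}

lemma dd_spec {a b : ℕ} (hab : a ≠ b) : a / M^(DD M k a b) ≠ b / M^(DD M k a b) := by
  unfold DD
  exact Nat.findGreatest_spec (P := fun t => a / M ^ t ≠ b / M ^ t) (m := 0) (Nat.zero_le k)
    (by simpa using hab)

lemma dd_le : ∀ a b, DD M k a b ≤ k := fun a b => Nat.findGreatest_le k

lemma dd_lt_k {a b : ℕ} (ha : a < M^k) (hb : b < M^k) (hab : a ≠ b) : DD M k a b < k := by
  rcases Nat.lt_or_ge (DD M k a b) k with h | h
  · exact h
  · exfalso
    have he : DD M k a b = k := le_antisymm (dd_le a b) h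
    have := dd_spec (M := M) (k := k) hab
    rw [he, Nat.div_eq_of_lt ha, Nat.div_eq_of_lt hb] at this
    exact this rfl

lemma dd_high {a b : ℕ} (hM : 1 ≤ M) (ha : a < M^k) (hb : b < M^k) :
    ∀ t, DD M k a b < t → a / M^t = b / M^t := by
  intro t ht
  rcases le_or_gt t k with htk | htk
  · by_contra hne
    have h1 := Nat.le_findGreatest (P := fun t => a / M ^ t ≠ b / M ^ t) htk hne
    have h2 : t ≤ DD M k a b := h1
    omega
  · have hle : M^k ≤ M^t := Nat.pow_le_pow_right hM (le_of_lt htk)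
    rw [Nat.div_eq_of_lt (lt_of_lt_of_le ha hle), Nat.div_eq_of_lt (lt_of_lt_of_le hb hle)]

lemma dd_compute {a b j : ℕ} (hjk : j < k)
    (h1 : a / M^(j+1) = b / M^(j+1)) (h2 : a / M^j ≠ b / M^j) : DD M k a b = j := by
  have hab : a ≠ b := fun h => h2 (by rw [h])
  apply le_antisymm
  · by_contra hgt
    push_neg at hgt
    have hspec := dd_spec (M := M) (k := k) hab
    set D := DD M k a b with hD
    have e1 : a / M^D = a / M^(j+1) / M^(D - (j+1)) := by
      rw [Nat.div_div_eq_div_mul, ← pow_add]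
      congr 2
      omega
    have e2 : b / M^D = b / M^(j+1) / M^(D - (j+1)) := by
      rw [Nat.div_div_eq_div_mul, ← pow_add]
      congr 2
      omega
    rw [e1, e2, h1] at hspec
    exact hspec rfl
  · have h1 := Nat.le_findGreatest (P := fun t => a / M ^ t ≠ b / M ^ t) (le_of_lt hjk) h2
    exact h1

lemma dd_lt_of_eq_div {a b j : ℕ} (h : a / M^j = b / M^j) (hab : a ≠ b) : DD M k a b < j := by
  by_contra hge
  push_neg at hge
  have hspec := dd_spec (M := M) (k := k) hab
  set D := DD M k a b with hD
  have e1 : a / M^D = a / M^j / M^(D - j) := by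
    rw [Nat.div_div_eq_div_mul, ← pow_add]
    congr 2
    omega
  have e2 : b / M^D = b / M^j / M^(D - j) := by
    rw [Nat.div_div_eq_div_mul, ← pow_add]
    congr 2
    omega
  rw [e1, e2, h] at hspec
  exact hspec rfl

lemma div_pow_succ (j a : ℕ) : a / M^j = M * (a / M^(j+1)) + dg M j a := by
  have h := Nat.div_add_mod (a / M^j) M
  rw [Nat.div_div_eq_div_mul, ← pow_succ] at h
  exact h.symm

lemma dd_digit_lt {a b : ℕ} (hM : 1 ≤ M) (ha : a < M^k) (hb : b < M^k) (hab : a < b) :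
    dg M (DD M k a b) a < dg M (DD M k a b) b := by
  have hne := dd_spec (M := M) (k := k) (Nat.ne_of_lt hab)
  have heq := dd_high (M := M) (k := k) hM ha hb (DD M k a b + 1) (Nat.lt_succ_self _)
  set D := DD M k a b with hD
  have e1 := div_pow_succ (M := M) D a
  have e2 := div_pow_succ (M := M) D b
  have hle : a / M^D ≤ b / M^D := Nat.div_le_div_right (le_of_lt hab)
  rw [heq] at e1
  set c := M * (b / M ^ (D + 1)) with hc
  omega

lemma lt_of_dg_lt {a b j : ℕ} (hpref : a / M^(j+1) = b / M^(j+1))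
    (hdg : dg M j a < dg M j b) : a < b := by
  have e1 := div_pow_succ (M := M) j a
  have e2 := div_pow_succ (M := M) j b
  rw [hpref] at e1
  set c := M * (b / M ^ (j + 1)) with hc
  have hdiv : a / M^j < b / M^j := by omega
  by_contra hge
  push_neg at hge
  exact absurd (Nat.div_le_div_right (c := M^j) hge) (by omega)

lemma div_ne_of_dg {a b j : ℕ} (hpref : a / M^(j+1) = b / M^(j+1))
    (hdg : dg M j a ≠ dg M j b) : a / M^j ≠ b / M^j := by
  have e1 := div_pow_succ (M := M) j a
  have e2 := div_pow_succ (M := M) j b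
  rw [hpref] at e1
  set c := M * (b / M ^ (j + 1)) with hc
  omega

lemma dg_lt_M {j a : ℕ} (hM : 1 ≤ M) : dg M j a < M := Nat.mod_lt _ (by omega)

end DigitLemmas


open Finset


variable (M k q' : ℕ) (φ : Finset ℕ → Fin q') (ψ : ℕ → ℕ → Fin 3)

def emb (c : Fin q') : Fin (q' + 6) := ⟨c.val, by have := c.isLt; omega⟩
def spA (e : Fin 3) : Fin (q' + 6) := ⟨q' + e.val, by have := e.isLt; omega⟩
def spB (e : Fin 3) : Fin (q' + 6) := ⟨q' + 3 + e.val, by have := e.isLt; omega⟩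

lemma emb_inj : Function.Injective (emb q') := by
  intro x y h
  have := congrArg Fin.val h
  simp [emb] at this
  exact Fin.ext this

lemma spA_inj {e e' : Fin 3} (h : spA q' e = spA q' e') : e = e' := by
  have := congrArg Fin.val h
  simp [spA] at this
  exact Fin.ext this

lemma spB_inj {e e' : Fin 3} (h : spB q' e = spB q' e') : e = e' := by
  have := congrArg Fin.val h
  simp [spB] at this
  exact Fin.ext this

lemma emb_ne_spA (c : Fin q') (e : Fin 3) : emb q' c ≠ spA q' e := by
  intro h
  have := congrArg Fin.val h
  have hc := c.isLt
  simp [emb, spA] at this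
  omega

lemma emb_ne_spB (c : Fin q') (e : Fin 3) : emb q' c ≠ spB q' e := by
  intro h
  have := congrArg Fin.val h
  have hc := c.isLt
  simp [emb, spB] at this
  omega

lemma spA_ne_spB (e e' : Fin 3) : spA q' e ≠ spB q' e' := by
  intro h
  have := congrArg Fin.val h
  have he := e.isLt
  simp [spA, spB] at this
  omega

def colT (a b c : ℕ) : Fin (q' + 6) :=
  if DD M k a b = DD M k b c then
    emb q' (φ {dg M (DD M k a b) a, dg M (DD M k a b) b, dg M (DD M k a b) c})
  else if DD M k a b < DD M k b c then spA q' (ψ (DD M k b c) (DD M k a b))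
  else spB q' (ψ (DD M k a b) (DD M k b c))

def col (A : Finset ℕ) : Fin (q' + 6) :=
  match A.sort (· ≤ ·) with
  | [a, b, c] => colT M k q' φ ψ a b c
  | _ => ⟨0, by omega⟩

lemma sort_triple {a b c : ℕ} (h1 : a < b) (h2 : b < c) :
    ({a,b,c} : Finset ℕ).sort (· ≤ ·) = [a,b,c] := by
  have hval : ({a,b,c} : Finset ℕ).val = ↑[a,b,c] := by
    rw [Finset.insert_val_of_notMem (by simp; omega),
      Finset.insert_val_of_notMem (by simp; omega)]
    rfl
  have hperm : (({a,b,c} : Finset ℕ).sort (· ≤ ·)).Perm [a,b,c] := by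
    rw [← Multiset.coe_eq_coe, Finset.sort_eq, hval]
  refine hperm.eq_of_pairwise' (Finset.pairwise_sort _ _) ?_
  simp [List.pairwise_cons]
  omega

lemma col_eq {a b c : ℕ} (h1 : a < b) (h2 : b < c) :
    col M k q' φ ψ {a,b,c} = colT M k q' φ ψ a b c := by
  unfold col
  rw [sort_triple h1 h2]

def RC (S : Finset ℕ) : Finset (Fin (q' + 6)) :=
  (Finset.powersetCard 3 S).image (col M k q' φ ψ)

lemma card3' {a b c : ℕ} (h1 : a < b) (h2 : b < c) : ({a,b,c} : Finset ℕ).card = 3 := by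
  rw [Finset.card_insert_of_notMem (by simp; omega),
    Finset.card_insert_of_notMem (by simp; omega), Finset.card_singleton]

lemma colT_mem {S : Finset ℕ} {a b c : ℕ} (ha : a ∈ S) (hb : b ∈ S) (hc : c ∈ S)
    (h1 : a < b) (h2 : b < c) : colT M k q' φ ψ a b c ∈ RC M k q' φ ψ S := by
  refine Finset.mem_image.2 ⟨{a,b,c}, ?_, col_eq M k q' φ ψ h1 h2⟩
  refine Finset.mem_powersetCard.2 ⟨?_, card3' h1 h2⟩
  intro u hu
  rcases Finset.mem_insert.1 hu with rfl | hu
  · exact ha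
  rcases Finset.mem_insert.1 hu with rfl | hu
  · exact hb
  · rw [Finset.mem_singleton.1 hu]; exact hc

lemma colT_phi {a b c : ℕ} (h : DD M k a b = DD M k b c) :
    colT M k q' φ ψ a b c =
      emb q' (φ {dg M (DD M k a b) a, dg M (DD M k a b) b, dg M (DD M k a b) c}) := by
  unfold colT
  rw [if_pos h]

lemma colT_A {a b c : ℕ} (h : DD M k a b < DD M k b c) :
    colT M k q' φ ψ a b c = spA q' (ψ (DD M k b c) (DD M k a b)) := by
  unfold colT
  rw [if_neg (by omega), if_pos h]

lemma colT_B {a b c : ℕ} (h : DD M k b c < DD M k a b) :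
    colT M k q' φ ψ a b c = spB q' (ψ (DD M k a b) (DD M k b c)) := by
  unfold colT
  rw [if_neg (by omega), if_neg (by omega)]

lemma RC_mono {S S' : Finset ℕ} (h : S' ⊆ S) : RC M k q' φ ψ S' ⊆ RC M k q' φ ψ S :=
  Finset.image_subset_image (Finset.powersetCard_mono h)

lemma three_le_card {α : Type*} [DecidableEq α] {u v w : α} {s : Finset α}
    (hu : u ∈ s) (hv : v ∈ s) (hw : w ∈ s) (h1 : u ≠ v) (h2 : u ≠ w) (h3 : v ≠ w) :
    3 ≤ s.card := by
  have hsub : ({u,v,w} : Finset α) ⊆ s := by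
    intro x hx
    rcases Finset.mem_insert.1 hx with rfl | hx
    · exact hu
    rcases Finset.mem_insert.1 hx with rfl | hx
    · exact hv
    · rw [Finset.mem_singleton.1 hx]; exact hw
  have : ({u,v,w} : Finset α).card = 3 := by
    rw [Finset.card_insert_of_notMem (by simp [h1, h2]),
      Finset.card_insert_of_notMem (by simp [h3]), Finset.card_singleton]
  calc 3 = ({u,v,w} : Finset α).card := this.symm
    _ ≤ s.card := Finset.card_le_card hsub


section Construction

variable {M k q' m d1k : ℕ} {φ : Finset ℕ → Fin q'} {ψ : ℕ → ℕ → Fin 3}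

def Pref (M j : ℕ) (S : Finset ℕ) : Prop := ∀ a ∈ S, ∀ b ∈ S, a / M^j = b / M^j

lemma pref_step {M j a b : ℕ} (h : a / M^(j+1) = b / M^(j+1)) (hdg : dg M j a = dg M j b) :
    a / M^j = b / M^j := by
  rw [div_pow_succ (M := M) j a, div_pow_succ (M := M) j b, h, hdg]

lemma jk_lt (hM : 1 ≤ M) {j : ℕ} {S : Finset ℕ} (hSr : S ⊆ Finset.range (M^k))
    {a b : ℕ} (ha : a ∈ S) (hb : b ∈ S) (hdg : dg M j a ≠ dg M j b) : j < k := by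
  have hpq : a / M^j ≠ b / M^j := by
    intro h
    have e1 := div_pow_succ (M := M) j a
    have e2 := div_pow_succ (M := M) j b
    have e3 : a / M ^ (j+1) = a / M^j / M := by rw [Nat.div_div_eq_div_mul, ← pow_succ]
    have e4 : b / M ^ (j+1) = b / M^j / M := by rw [Nat.div_div_eq_div_mul, ← pow_succ]
    apply hdg
    unfold dg
    rw [h]
  by_contra hge
  push_neg at hge
  have h1 : M^k ≤ M^j := Nat.pow_le_pow_right hM hge
  have har : a < M^k := Finset.mem_range.1 (hSr ha)
  have hbr : b < M^k := Finset.mem_range.1 (hSr hb)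
  rw [Nat.div_eq_of_lt (lt_of_lt_of_le har h1), Nat.div_eq_of_lt (lt_of_lt_of_le hbr h1)] at hpq
  exact hpq rfl

lemma real_A (hM : 1 ≤ M) {j : ℕ} {S : Finset ℕ} (hSr : S ⊆ Finset.range (M^k))
    (hpref : Pref M (j+1) S) {a b c : ℕ} (ha : a ∈ S) (hb : b ∈ S) (hc : c ∈ S)
    (hab : a < b) (hdgab : dg M j a = dg M j b) (hdgc : dg M j a < dg M j c) :
    spA q' (ψ j (DD M k a b)) ∈ RC M k q' φ ψ S ∧ DD M k a b < j ∧ j < k := by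
  have hbc : b < c := lt_of_dg_lt (hpref b hb c hc) (by omega)
  have hABlt : DD M k a b < j :=
    dd_lt_of_eq_div (pref_step (hpref a ha b hb) hdgab) (Nat.ne_of_lt hab)
  have hjk : j < k := jk_lt hM hSr hb hc (by omega)
  have hdvne : b / M^j ≠ c / M^j := div_ne_of_dg (hpref b hb c hc) (by omega)
  have hBC : DD M k b c = j := dd_compute hjk (hpref b hb c hc) hdvne
  have hcol := colT_A M k q' φ ψ (a := a) (b := b) (c := c) (by omega)
  rw [hBC] at hcol
  exact ⟨hcol ▸ colT_mem M k q' φ ψ ha hb hc hab hbc, hABlt, hjk⟩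

lemma real_B (hM : 1 ≤ M) {j : ℕ} {S : Finset ℕ} (hSr : S ⊆ Finset.range (M^k))
    (hpref : Pref M (j+1) S) {a b c : ℕ} (ha : a ∈ S) (hb : b ∈ S) (hc : c ∈ S)
    (hbc : b < c) (hdgbc : dg M j b = dg M j c) (hdga : dg M j a < dg M j b) :
    spB q' (ψ j (DD M k b c)) ∈ RC M k q' φ ψ S ∧ DD M k b c < j ∧ j < k := by
  have hab : a < b := lt_of_dg_lt (hpref a ha b hb) hdga
  have hBClt : DD M k b c < j :=
    dd_lt_of_eq_div (pref_step (hpref b hb c hc) hdgbc) (Nat.ne_of_lt hbc)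
  have hjk : j < k := jk_lt hM hSr ha hb (by omega)
  have hdvne : a / M^j ≠ b / M^j := div_ne_of_dg (hpref a ha b hb) (by omega)
  have hAB : DD M k a b = j := dd_compute hjk (hpref a ha b hb) hdvne
  have hcol := colT_B M k q' φ ψ (a := a) (b := b) (c := c) (by omega)
  rw [hAB] at hcol
  exact ⟨hcol ▸ colT_mem M k q' φ ψ ha hb hc hab hbc, hBClt, hjk⟩

lemma real_phi (hM : 1 ≤ M) {j : ℕ} {S : Finset ℕ} (hSr : S ⊆ Finset.range (M^k))
    (hpref : Pref M (j+1) S) {a b c : ℕ} (ha : a ∈ S) (hb : b ∈ S) (hc : c ∈ S)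
    (h1 : dg M j a < dg M j b) (h2 : dg M j b < dg M j c) :
    emb q' (φ {dg M j a, dg M j b, dg M j c}) ∈ RC M k q' φ ψ S := by
  have hab : a < b := lt_of_dg_lt (hpref a ha b hb) h1
  have hbc : b < c := lt_of_dg_lt (hpref b hb c hc) h2
  have hjk : j < k := jk_lt hM hSr ha hb (by omega)
  have hAB : DD M k a b = j := dd_compute hjk (hpref a ha b hb)
    (div_ne_of_dg (hpref a ha b hb) (by omega))
  have hBC : DD M k b c = j := dd_compute hjk (hpref b hb c hc)
    (div_ne_of_dg (hpref b hb c hc) (by omega))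
  have hcol := colT_phi M k q' φ ψ (a := a) (b := b) (c := c) (by omega)
  rw [hAB] at hcol
  exact hcol ▸ colT_mem M k q' φ ψ ha hb hc hab hbc

lemma phirich (hM : 1 ≤ M)
    (hphi : ∀ A ⊆ Finset.range M, A.card = m → 3 ≤ ((Finset.powersetCard 3 A).image φ).card)
    {j : ℕ} {S : Finset ℕ} (hSr : S ⊆ Finset.range (M^k)) (hpref : Pref M (j+1) S)
    (h2 : (RC M k q' φ ψ S).card ≤ 2) : (S.image (dg M j)).card ≤ m - 1 := by
  by_contra hbig
  push_neg at hbig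
  obtain ⟨D', hD'sub, hD'card⟩ := Finset.exists_subset_card_eq
    (show m ≤ (S.image (dg M j)).card by omega)
  have hD'range : D' ⊆ Finset.range M := by
    intro d hd
    obtain ⟨a, haS, rfl⟩ := Finset.mem_image.1 (hD'sub hd)
    exact Finset.mem_range.2 (dg_lt_M hM)
  have h3 := hphi D' hD'range hD'card
  have hsub : ((Finset.powersetCard 3 D').image φ).image (emb q') ⊆ RC M k q' φ ψ S := by
    intro v hv
    obtain ⟨w, hw, rfl⟩ := Finset.mem_image.1 hv
    obtain ⟨B, hB, rfl⟩ := Finset.mem_image.1 hw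
    obtain ⟨hBD, hBcard⟩ := Finset.mem_powersetCard.1 hB
    obtain ⟨xx, yy, zz, hxy, hyz, hBeq⟩ := sort3 hBcard
    obtain ⟨hxB, hyB, hzB⟩ := mem3 hBeq
    obtain ⟨a, haS, hadg⟩ := Finset.mem_image.1 (hD'sub (hBD hxB))
    obtain ⟨b, hbS, hbdg⟩ := Finset.mem_image.1 (hD'sub (hBD hyB))
    obtain ⟨c, hcS, hcdg⟩ := Finset.mem_image.1 (hD'sub (hBD hzB))
    have hmem := real_phi (φ := φ) (ψ := ψ) hM hSr hpref haS hbS hcS (by omega) (by omega)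
    rw [hadg, hbdg, hcdg, ← hBeq] at hmem
    exact hmem
  have hcard3 : 3 ≤ (RC M k q' φ ψ S).card := by
    have hc1 : (((Finset.powersetCard 3 D').image φ).image (emb q')).card
        = ((Finset.powersetCard 3 D').image φ).card :=
      Finset.card_image_of_injective _ (emb_inj q')
    calc 3 ≤ ((Finset.powersetCard 3 D').image φ).card := h3
      _ = (((Finset.powersetCard 3 D').image φ).image (emb q')).card := hc1.symm
      _ ≤ (RC M k q' φ ψ S).card := Finset.card_le_card hsub
  omega

lemma dset_le_two (hM : 1 ≤ M) {j : ℕ} {S : Finset ℕ} (hSr : S ⊆ Finset.range (M^k))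
    (hpref : Pref M (j+1) S)
    (hNoPhi : ∀ cc, emb q' cc ∉ RC M k q' φ ψ S) : (S.image (dg M j)).card ≤ 2 := by
  by_contra hbig
  push_neg at hbig
  obtain ⟨D3, hD3sub, hD3card⟩ := Finset.exists_subset_card_eq
    (show 3 ≤ (S.image (dg M j)).card by omega)
  obtain ⟨xx, yy, zz, hxy, hyz, hD3eq⟩ := sort3 hD3card
  obtain ⟨hxB, hyB, hzB⟩ := mem3 hD3eq
  obtain ⟨a, haS, hadg⟩ := Finset.mem_image.1 (hD3sub hxB)
  obtain ⟨b, hbS, hbdg⟩ := Finset.mem_image.1 (hD3sub hyB)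
  obtain ⟨c, hcS, hcdg⟩ := Finset.mem_image.1 (hD3sub hzB)
  exact hNoPhi _ (real_phi (φ := φ) (ψ := ψ) hM hSr hpref haS hbS hcS (by omega) (by omega))

end Construction

section MainLemmas

variable {M k q' m d1k : ℕ} {φ : Finset ℕ → Fin q'} {ψ : ℕ → ℕ → Fin 3}

lemma spn (hM : 1 ≤ M) (hm : 3 ≤ m)
    (hphi : ∀ A ⊆ Finset.range M, A.card = m → 3 ≤ ((Finset.powersetCard 3 A).image φ).card)
    (hpsi : ∀ T ⊆ Finset.range k, ∀ x : Fin 3,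
      (∀ s ∈ T, ∀ t ∈ T, t < s → ψ s t = x) → T.card ≤ d1k)
    (x : Fin 3) :
    ∀ j (S X : Finset ℕ), S ⊆ Finset.range (M^k) → Pref M j S →
      (RC M k q' φ ψ S).card ≤ 2 →
      (∀ e, spA q' e ∈ RC M k q' φ ψ S → e = x) →
      (∀ e, spB q' e ∉ RC M k q' φ ψ S) →
      X ⊆ Finset.range k → (∀ t ∈ X, j ≤ t) →
      (∀ s ∈ X, ∀ t ∈ X, t < s → ψ s t = x) →
      (∀ t ∈ X, ∀ a ∈ S, ∀ b ∈ S, a < b → ψ t (DD M k a b) = x) →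
      S.card ≤ (d1k - X.card) * (m - 2) + (m - 1) := by
  intro j
  induction j with
  | zero =>
    intro S X hSr hpref h2 hA hNoB hXr hXge hXcl hXlink
    have h1 : S.card ≤ 1 := Finset.card_le_one.2 (fun a ha b hb => by
      have := hpref a ha b hb
      simpa using this)
    omega
  | succ j ih =>
    intro S X hSr hpref h2 hA hNoB hXr hXge hXcl hXlink
    rcases S.eq_empty_or_nonempty with rfl | hSe
    · simp only [Finset.card_empty]
      exact Nat.zero_le _
    have hDne : (S.image (dg M j)).Nonempty := hSe.image _
    have hr : (S.image (dg M j)).card ≤ m - 1 := phirich hM hphi hSr hpref h2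
    set dmin := (S.image (dg M j)).min' hDne with hdmin
    obtain ⟨a0, ha0S, ha0dg⟩ := Finset.mem_image.1 ((S.image (dg M j)).min'_mem hDne)
    set Slow := S.filter (fun a => dg M j a = dmin) with hSlowdef
    set Shigh := S.filter (fun a => ¬ dg M j a = dmin) with hShighdef
    have hsplit : Slow.card + Shigh.card = S.card :=
      Finset.card_filter_add_card_filter_not _
    have hSlowS : Slow ⊆ S := Finset.filter_subset _ _
    have hShighS : Shigh ⊆ S := Finset.filter_subset _ _
    have hdgmin : ∀ a ∈ S, dmin ≤ dg M j a := fun a ha =>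
      (S.image (dg M j)).min'_le _ (Finset.mem_image_of_mem _ ha)
    have ha0low : a0 ∈ Slow := Finset.mem_filter.2 ⟨ha0S, ha0dg⟩
    have hinj : Set.InjOn (dg M j) Shigh := by
      intro a ha b hb hdg
      by_contra hne
      have haS := hShighS ha
      have hbS := hShighS hb
      have hadmin : dmin < dg M j a := lt_of_le_of_ne (hdgmin a haS)
        (fun h => (Finset.mem_filter.1 ha).2 h.symm)
      rcases lt_or_gt_of_ne hne with hlt | hlt
      · exact hNoB _ (real_B (φ := φ) (ψ := ψ) hM hSr hpref ha0S haS hbS hlt hdg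
          (by rw [ha0dg]; omega)).1
      · exact hNoB _ (real_B (φ := φ) (ψ := ψ) hM hSr hpref ha0S hbS haS hlt hdg.symm
          (by rw [ha0dg]; omega)).1
    have hShighcard : Shigh.card ≤ m - 2 := by
      have h1 : (Shigh.image (dg M j)).card = Shigh.card := Finset.card_image_of_injOn hinj
      have h2' : Shigh.image (dg M j) ⊆ (S.image (dg M j)).erase dmin := by
        intro d hd
        obtain ⟨a, ha, rfl⟩ := Finset.mem_image.1 hd
        exact Finset.mem_erase.2 ⟨(Finset.mem_filter.1 ha).2,
          Finset.mem_image_of_mem _ (hShighS ha)⟩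
      have h3' := Finset.card_le_card h2'
      have h4' : ((S.image (dg M j)).erase dmin).card = (S.image (dg M j)).card - 1 :=
        Finset.card_erase_of_mem ((S.image (dg M j)).min'_mem hDne)
      have h5' : 1 ≤ (S.image (dg M j)).card := Finset.card_pos.2 hDne
      omega
    rcases Shigh.eq_empty_or_nonempty with hSh0 | hShne
    · have hall : ∀ a ∈ S, dg M j a = dmin := by
        intro a ha
        by_contra hne
        have : a ∈ Shigh := Finset.mem_filter.2 ⟨ha, hne⟩
        rw [hSh0] at this
        exact absurd this (Finset.notMem_empty a)
      have hprefS : Pref M j S := fun a ha b hb =>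
        pref_step (hpref a ha b hb) (by rw [hall a ha, hall b hb])
      exact ih S X hSr hprefS h2 hA hNoB hXr
        (fun t ht => le_trans (Nat.le_succ j) (hXge t ht)) hXcl hXlink
    · obtain ⟨c0, hc0⟩ := hShne
      have hc0S := hShighS hc0
      have hc0dg : dmin < dg M j c0 := lt_of_le_of_ne (hdgmin c0 hc0S)
        (fun h => (Finset.mem_filter.1 hc0).2 h.symm)
      rcases le_or_gt Slow.card 1 with hlow | hlow
      · omega
      · have ha1dg : dg M j a0 = dmin := ha0dg
        have hpair : ∀ a ∈ Slow, ∀ b ∈ Slow, a < b →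
            ψ j (DD M k a b) = x ∧ DD M k a b < j := by
          intro a ha b hb hab
          have h := real_A (φ := φ) (ψ := ψ) hM hSr hpref (hSlowS ha) (hSlowS hb) hc0S hab
            (by rw [(Finset.mem_filter.1 ha).2, (Finset.mem_filter.1 hb).2])
            (by rw [(Finset.mem_filter.1 ha).2]; exact hc0dg)
          exact ⟨hA _ h.1, h.2.1⟩
        have hjk : j < k := jk_lt hM hSr ha0S hc0S (by omega)
        have hDDa0c0 : DD M k a0 c0 = j := dd_compute hjk (hpref a0 ha0S c0 hc0S)
          (div_ne_of_dg (hpref a0 ha0S c0 hc0S) (by omega))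
        have ha0c0 : a0 < c0 := lt_of_dg_lt (hpref a0 ha0S c0 hc0S) (by omega)
        have hjX : j ∉ X := fun h => by have := hXge j h; omega
        have hX'card : (insert j X).card = X.card + 1 := Finset.card_insert_of_notMem hjX
        have hX'r : insert j X ⊆ Finset.range k :=
          Finset.insert_subset (Finset.mem_range.2 hjk) hXr
        have hX'cl : ∀ s ∈ insert j X, ∀ t ∈ insert j X, t < s → ψ s t = x := by
          intro s hs t ht hts
          rcases Finset.mem_insert.1 hs with hsj | hs'
          · exfalso
            rcases Finset.mem_insert.1 ht with htj | ht'
            · omega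
            · have := hXge t ht'; omega
          · rcases Finset.mem_insert.1 ht with htj | ht'
            · rw [htj]
              have := hXlink s hs' a0 ha0S c0 hc0S ha0c0
              rwa [hDDa0c0] at this
            · exact hXcl s hs' t ht' hts
        have hX'le : (insert j X).card ≤ d1k := hpsi (insert j X) hX'r x hX'cl
        have hprefSlow : Pref M j Slow := fun a ha b hb =>
          pref_step (hpref a (hSlowS ha) b (hSlowS hb))
            (by rw [(Finset.mem_filter.1 ha).2, (Finset.mem_filter.1 hb).2])
        have hlink' : ∀ t ∈ insert j X, ∀ a ∈ Slow, ∀ b ∈ Slow, a < b →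
            ψ t (DD M k a b) = x := by
          intro t ht a ha b hb hab
          rcases Finset.mem_insert.1 ht with rfl | ht
          · exact (hpair a ha b hb hab).1
          · exact hXlink t ht a (hSlowS ha) b (hSlowS hb) hab
        have hrec := ih Slow (insert j X) (hSlowS.trans hSr) hprefSlow
          (le_trans (Finset.card_le_card (RC_mono M k q' φ ψ hSlowS)) h2)
          (fun e he => hA e (RC_mono M k q' φ ψ hSlowS he))
          (fun e he => hNoB e (RC_mono M k q' φ ψ hSlowS he))
          hX'r
          (fun t ht => by
            rcases Finset.mem_insert.1 ht with rfl | ht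
            · omega
            · have := hXge t ht; omega)
          hX'cl hlink'
        rw [hX'card] at hrec
        have harith : (d1k - (X.card + 1)) * (m-2) + (m-2) = (d1k - X.card) * (m-2) := by
          have h1 : X.card + 1 ≤ d1k := by rw [← hX'card]; exact hX'le
          have e : d1k - X.card = (d1k - (X.card+1)) + 1 := by omega
          rw [e, add_mul, one_mul]
        omega

lemma spn' (hM : 1 ≤ M) (hm : 3 ≤ m)
    (hphi : ∀ A ⊆ Finset.range M, A.card = m → 3 ≤ ((Finset.powersetCard 3 A).image φ).card)
    (hpsi : ∀ T ⊆ Finset.range k, ∀ x : Fin 3,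
      (∀ s ∈ T, ∀ t ∈ T, t < s → ψ s t = x) → T.card ≤ d1k)
    (x : Fin 3) :
    ∀ j (S X : Finset ℕ), S ⊆ Finset.range (M^k) → Pref M j S →
      (RC M k q' φ ψ S).card ≤ 2 →
      (∀ e, spB q' e ∈ RC M k q' φ ψ S → e = x) →
      (∀ e, spA q' e ∉ RC M k q' φ ψ S) →
      X ⊆ Finset.range k → (∀ t ∈ X, j ≤ t) →
      (∀ s ∈ X, ∀ t ∈ X, t < s → ψ s t = x) →
      (∀ t ∈ X, ∀ a ∈ S, ∀ b ∈ S, a < b → ψ t (DD M k a b) = x) →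
      S.card ≤ (d1k - X.card) * (m - 2) + (m - 1) := by
  intro j
  induction j with
  | zero =>
    intro S X hSr hpref h2 hB hNoA hXr hXge hXcl hXlink
    have h1 : S.card ≤ 1 := Finset.card_le_one.2 (fun a ha b hb => by
      have := hpref a ha b hb
      simpa using this)
    omega
  | succ j ih =>
    intro S X hSr hpref h2 hB hNoA hXr hXge hXcl hXlink
    rcases S.eq_empty_or_nonempty with rfl | hSe
    · simp only [Finset.card_empty]
      exact Nat.zero_le _
    have hDne : (S.image (dg M j)).Nonempty := hSe.image _
    have hr : (S.image (dg M j)).card ≤ m - 1 := phirich hM hphi hSr hpref h2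
    set dmax := (S.image (dg M j)).max' hDne with hdmax
    obtain ⟨c1, hc1S, hc1dg⟩ := Finset.mem_image.1 ((S.image (dg M j)).max'_mem hDne)
    set Smax := S.filter (fun a => dg M j a = dmax) with hSmaxdef
    set SlowN := S.filter (fun a => ¬ dg M j a = dmax) with hSlowNdef
    have hsplit : Smax.card + SlowN.card = S.card :=
      Finset.card_filter_add_card_filter_not _
    have hSmaxS : Smax ⊆ S := Finset.filter_subset _ _
    have hSlowNS : SlowN ⊆ S := Finset.filter_subset _ _
    have hdgmax : ∀ a ∈ S, dg M j a ≤ dmax := fun a ha =>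
      (S.image (dg M j)).le_max' _ (Finset.mem_image_of_mem _ ha)
    have hc1max : c1 ∈ Smax := Finset.mem_filter.2 ⟨hc1S, hc1dg⟩
    have hinj : Set.InjOn (dg M j) SlowN := by
      intro a ha b hb hdg
      by_contra hne
      have haS := hSlowNS ha
      have hbS := hSlowNS hb
      have hamax : dg M j a < dmax := lt_of_le_of_ne (hdgmax a haS)
        (Finset.mem_filter.1 ha).2
      rcases lt_or_gt_of_ne hne with hlt | hlt
      · exact hNoA _ (real_A (φ := φ) (ψ := ψ) hM hSr hpref haS hbS hc1S hlt hdg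
          (by rw [hc1dg]; omega)).1
      · exact hNoA _ (real_A (φ := φ) (ψ := ψ) hM hSr hpref hbS haS hc1S hlt hdg.symm
          (by rw [hc1dg, ← hdg]; omega)).1
    have hSlowNcard : SlowN.card ≤ m - 2 := by
      have h1 : (SlowN.image (dg M j)).card = SlowN.card := Finset.card_image_of_injOn hinj
      have h2' : SlowN.image (dg M j) ⊆ (S.image (dg M j)).erase dmax := by
        intro d hd
        obtain ⟨a, ha, rfl⟩ := Finset.mem_image.1 hd
        exact Finset.mem_erase.2 ⟨(Finset.mem_filter.1 ha).2,
          Finset.mem_image_of_mem _ (hSlowNS ha)⟩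
      have h3' := Finset.card_le_card h2'
      have h4' : ((S.image (dg M j)).erase dmax).card = (S.image (dg M j)).card - 1 :=
        Finset.card_erase_of_mem ((S.image (dg M j)).max'_mem hDne)
      have h5' : 1 ≤ (S.image (dg M j)).card := Finset.card_pos.2 hDne
      omega
    rcases SlowN.eq_empty_or_nonempty with hSl0 | hSlne
    · have hall : ∀ a ∈ S, dg M j a = dmax := by
        intro a ha
        by_contra hne
        have : a ∈ SlowN := Finset.mem_filter.2 ⟨ha, hne⟩
        rw [hSl0] at this
        exact absurd this (Finset.notMem_empty a)
      have hprefS : Pref M j S := fun a ha b hb =>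
        pref_step (hpref a ha b hb) (by rw [hall a ha, hall b hb])
      exact ih S X hSr hprefS h2 hB hNoA hXr
        (fun t ht => le_trans (Nat.le_succ j) (hXge t ht)) hXcl hXlink
    · obtain ⟨a1, ha1⟩ := hSlne
      have ha1S := hSlowNS ha1
      have ha1dg : dg M j a1 < dmax := lt_of_le_of_ne (hdgmax a1 ha1S)
        (Finset.mem_filter.1 ha1).2
      rcases le_or_gt Smax.card 1 with hsm | hsm
      · omega
      · have hpair : ∀ b ∈ Smax, ∀ c ∈ Smax, b < c →
            ψ j (DD M k b c) = x ∧ DD M k b c < j := by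
          intro b hb c hc hbc
          have h := real_B (φ := φ) (ψ := ψ) hM hSr hpref ha1S (hSmaxS hb) (hSmaxS hc) hbc
            (by rw [(Finset.mem_filter.1 hb).2, (Finset.mem_filter.1 hc).2])
            (by rw [(Finset.mem_filter.1 hb).2]; exact ha1dg)
          exact ⟨hB _ h.1, h.2.1⟩
        have hjk : j < k := jk_lt hM hSr ha1S hc1S (by omega)
        have hDDa1c1 : DD M k a1 c1 = j := dd_compute hjk (hpref a1 ha1S c1 hc1S)
          (div_ne_of_dg (hpref a1 ha1S c1 hc1S) (by omega))
        have ha1c1 : a1 < c1 := lt_of_dg_lt (hpref a1 ha1S c1 hc1S) (by omega)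
        have hjX : j ∉ X := fun h => by have := hXge j h; omega
        have hX'card : (insert j X).card = X.card + 1 := Finset.card_insert_of_notMem hjX
        have hX'r : insert j X ⊆ Finset.range k :=
          Finset.insert_subset (Finset.mem_range.2 hjk) hXr
        have hX'cl : ∀ s ∈ insert j X, ∀ t ∈ insert j X, t < s → ψ s t = x := by
          intro s hs t ht hts
          rcases Finset.mem_insert.1 hs with hsj | hs'
          · exfalso
            rcases Finset.mem_insert.1 ht with htj | ht'
            · omega
            · have := hXge t ht'; omega
          · rcases Finset.mem_insert.1 ht with htj | ht'
            · rw [htj]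
              have := hXlink s hs' a1 ha1S c1 hc1S ha1c1
              rwa [hDDa1c1] at this
            · exact hXcl s hs' t ht' hts
        have hX'le : (insert j X).card ≤ d1k := hpsi (insert j X) hX'r x hX'cl
        have hprefSmax : Pref M j Smax := fun a ha b hb =>
          pref_step (hpref a (hSmaxS ha) b (hSmaxS hb))
            (by rw [(Finset.mem_filter.1 ha).2, (Finset.mem_filter.1 hb).2])
        have hlink' : ∀ t ∈ insert j X, ∀ a ∈ Smax, ∀ b ∈ Smax, a < b →
            ψ t (DD M k a b) = x := by
          intro t ht a ha b hb hab
          rcases Finset.mem_insert.1 ht with htj | ht'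
          · rw [htj]
            exact (hpair a ha b hb hab).1
          · exact hXlink t ht' a (hSmaxS ha) b (hSmaxS hb) hab
        have hrec := ih Smax (insert j X) (hSmaxS.trans hSr) hprefSmax
          (le_trans (Finset.card_le_card (RC_mono M k q' φ ψ hSmaxS)) h2)
          (fun e he => hB e (RC_mono M k q' φ ψ hSmaxS he))
          (fun e he => hNoA e (RC_mono M k q' φ ψ hSmaxS he))
          hX'r
          (fun t ht => by
            rcases Finset.mem_insert.1 ht with htj | ht'
            · omega
            · have := hXge t ht'; omega)
          hX'cl hlink'
        rw [hX'card] at hrec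
        have harith : (d1k - (X.card + 1)) * (m-2) + (m-2) = (d1k - X.card) * (m-2) := by
          have h1 : X.card + 1 ≤ d1k := by rw [← hX'card]; exact hX'le
          have e : d1k - X.card = (d1k - (X.card+1)) + 1 := by omega
          rw [e, add_mul, one_mul]
        omega

lemma spn2 (hM : 1 ≤ M) :
    ∀ j (S : Finset ℕ), S ⊆ Finset.range (M^k) → Pref M j S →
      (∀ cc, emb q' cc ∉ RC M k q' φ ψ S) →
      (∀ e, spB q' e ∉ RC M k q' φ ψ S) →
      S.card ≤ j + 1 := by
  intro j
  induction j with
  | zero =>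
    intro S hSr hpref _ _
    exact Finset.card_le_one.2 (fun a ha b hb => by
      have := hpref a ha b hb
      simpa using this)
  | succ j ih =>
    intro S hSr hpref hNoPhi hNoB
    rcases S.eq_empty_or_nonempty with rfl | hSe
    · simp only [Finset.card_empty]
      exact Nat.zero_le _
    have hDne : (S.image (dg M j)).Nonempty := hSe.image _
    have hD2 : (S.image (dg M j)).card ≤ 2 := dset_le_two hM hSr hpref hNoPhi
    set dmin := (S.image (dg M j)).min' hDne with hdmin
    obtain ⟨a0, ha0S, ha0dg⟩ := Finset.mem_image.1 ((S.image (dg M j)).min'_mem hDne)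
    set Slow := S.filter (fun a => dg M j a = dmin) with hSlowdef
    set Shigh := S.filter (fun a => ¬ dg M j a = dmin) with hShighdef
    have hsplit : Slow.card + Shigh.card = S.card :=
      Finset.card_filter_add_card_filter_not _
    have hSlowS : Slow ⊆ S := Finset.filter_subset _ _
    have hShighS : Shigh ⊆ S := Finset.filter_subset _ _
    have hdgmin : ∀ a ∈ S, dmin ≤ dg M j a := fun a ha =>
      (S.image (dg M j)).min'_le _ (Finset.mem_image_of_mem _ ha)
    have hinj : Set.InjOn (dg M j) Shigh := by
      intro a ha b hb hdg
      by_contra hne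
      have haS := hShighS ha
      have hbS := hShighS hb
      have hadmin : dmin < dg M j a := lt_of_le_of_ne (hdgmin a haS)
        (fun h => (Finset.mem_filter.1 ha).2 h.symm)
      rcases lt_or_gt_of_ne hne with hlt | hlt
      · exact hNoB _ (real_B (φ := φ) (ψ := ψ) hM hSr hpref ha0S haS hbS hlt hdg
          (by rw [ha0dg]; omega)).1
      · exact hNoB _ (real_B (φ := φ) (ψ := ψ) hM hSr hpref ha0S hbS haS hlt hdg.symm
          (by rw [ha0dg]; omega)).1
    have hShighcard : Shigh.card ≤ 1 := by
      have h1 : (Shigh.image (dg M j)).card = Shigh.card := Finset.card_image_of_injOn hinj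
      have h2' : Shigh.image (dg M j) ⊆ (S.image (dg M j)).erase dmin := by
        intro d hd
        obtain ⟨a, ha, rfl⟩ := Finset.mem_image.1 hd
        exact Finset.mem_erase.2 ⟨(Finset.mem_filter.1 ha).2,
          Finset.mem_image_of_mem _ (hShighS ha)⟩
      have h3' := Finset.card_le_card h2'
      have h4' : ((S.image (dg M j)).erase dmin).card = (S.image (dg M j)).card - 1 :=
        Finset.card_erase_of_mem ((S.image (dg M j)).min'_mem hDne)
      omega
    have hprefSlow : Pref M j Slow := fun a ha b hb =>
      pref_step (hpref a (hSlowS ha) b (hSlowS hb))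
        (by rw [(Finset.mem_filter.1 ha).2, (Finset.mem_filter.1 hb).2])
    have hrec := ih Slow (hSlowS.trans hSr) hprefSlow
      (fun cc hc => hNoPhi cc (RC_mono M k q' φ ψ hSlowS hc))
      (fun e he => hNoB e (RC_mono M k q' φ ψ hSlowS he))
    omega

lemma spn2' (hM : 1 ≤ M) :
    ∀ j (S : Finset ℕ), S ⊆ Finset.range (M^k) → Pref M j S →
      (∀ cc, emb q' cc ∉ RC M k q' φ ψ S) →
      (∀ e, spA q' e ∉ RC M k q' φ ψ S) →
      S.card ≤ j + 1 := by
  intro j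
  induction j with
  | zero =>
    intro S hSr hpref _ _
    exact Finset.card_le_one.2 (fun a ha b hb => by
      have := hpref a ha b hb
      simpa using this)
  | succ j ih =>
    intro S hSr hpref hNoPhi hNoA
    rcases S.eq_empty_or_nonempty with rfl | hSe
    · simp only [Finset.card_empty]
      exact Nat.zero_le _
    have hDne : (S.image (dg M j)).Nonempty := hSe.image _
    have hD2 : (S.image (dg M j)).card ≤ 2 := dset_le_two hM hSr hpref hNoPhi
    set dmax := (S.image (dg M j)).max' hDne with hdmax
    obtain ⟨c1, hc1S, hc1dg⟩ := Finset.mem_image.1 ((S.image (dg M j)).max'_mem hDne)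
    set Smax := S.filter (fun a => dg M j a = dmax) with hSmaxdef
    set SlowN := S.filter (fun a => ¬ dg M j a = dmax) with hSlowNdef
    have hsplit : Smax.card + SlowN.card = S.card :=
      Finset.card_filter_add_card_filter_not _
    have hSmaxS : Smax ⊆ S := Finset.filter_subset _ _
    have hSlowNS : SlowN ⊆ S := Finset.filter_subset _ _
    have hdgmax : ∀ a ∈ S, dg M j a ≤ dmax := fun a ha =>
      (S.image (dg M j)).le_max' _ (Finset.mem_image_of_mem _ ha)
    have hinj : Set.InjOn (dg M j) SlowN := by
      intro a ha b hb hdg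
      by_contra hne
      have haS := hSlowNS ha
      have hbS := hSlowNS hb
      have hamax : dg M j a < dmax := lt_of_le_of_ne (hdgmax a haS)
        (Finset.mem_filter.1 ha).2
      rcases lt_or_gt_of_ne hne with hlt | hlt
      · exact hNoA _ (real_A (φ := φ) (ψ := ψ) hM hSr hpref haS hbS hc1S hlt hdg
          (by rw [hc1dg]; omega)).1
      · exact hNoA _ (real_A (φ := φ) (ψ := ψ) hM hSr hpref hbS haS hc1S hlt hdg.symm
          (by rw [hc1dg, ← hdg]; omega)).1
    have hSlowNcard : SlowN.card ≤ 1 := by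
      have h1 : (SlowN.image (dg M j)).card = SlowN.card := Finset.card_image_of_injOn hinj
      have h2' : SlowN.image (dg M j) ⊆ (S.image (dg M j)).erase dmax := by
        intro d hd
        obtain ⟨a, ha, rfl⟩ := Finset.mem_image.1 hd
        exact Finset.mem_erase.2 ⟨(Finset.mem_filter.1 ha).2,
          Finset.mem_image_of_mem _ (hSlowNS ha)⟩
      have h3' := Finset.card_le_card h2'
      have h4' : ((S.image (dg M j)).erase dmax).card = (S.image (dg M j)).card - 1 :=
        Finset.card_erase_of_mem ((S.image (dg M j)).max'_mem hDne)
      omega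
    have hprefSmax : Pref M j Smax := fun a ha b hb =>
      pref_step (hpref a (hSmaxS ha) b (hSmaxS hb))
        (by rw [(Finset.mem_filter.1 ha).2, (Finset.mem_filter.1 hb).2])
    have hrec := ih Smax (hSmaxS.trans hSr) hprefSmax
      (fun cc hc => hNoPhi cc (RC_mono M k q' φ ψ hSmaxS hc))
      (fun e he => hNoA e (RC_mono M k q' φ ψ hSmaxS he))
    omega

lemma bin (hM : 1 ≤ M)
    (hpsi : ∀ T ⊆ Finset.range k, ∀ x : Fin 3,
      (∀ s ∈ T, ∀ t ∈ T, t < s → ψ s t = x) → T.card ≤ d1k)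
    (x y : Fin 3) :
    ∀ j (S X Y : Finset ℕ), S ⊆ Finset.range (M^k) → Pref M j S →
      (∀ cc, emb q' cc ∉ RC M k q' φ ψ S) →
      (∀ e, spA q' e ∈ RC M k q' φ ψ S → e = x) →
      (∀ e, spB q' e ∈ RC M k q' φ ψ S → e = y) →
      X ⊆ Finset.range k → (∀ t ∈ X, j ≤ t) →
      (∀ s ∈ X, ∀ t ∈ X, t < s → ψ s t = x) →
      (∀ t ∈ X, ∀ a ∈ S, ∀ b ∈ S, a < b → ψ t (DD M k a b) = x) →
      Y ⊆ Finset.range k → (∀ t ∈ Y, j ≤ t) →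
      (∀ s ∈ Y, ∀ t ∈ Y, t < s → ψ s t = y) →
      (∀ t ∈ Y, ∀ a ∈ S, ∀ b ∈ S, a < b → ψ t (DD M k a b) = y) →
      S.card ≤ 2 ^ ((d1k - X.card) + (d1k - Y.card) + 1) := by
  intro j
  induction j with
  | zero =>
    intro S X Y hSr hpref _ _ _ _ _ _ _ _ _ _ _
    have h1 : S.card ≤ 1 := Finset.card_le_one.2 (fun a ha b hb => by
      have := hpref a ha b hb
      simpa using this)
    exact le_trans h1 Nat.one_le_two_pow
  | succ j ih =>
    intro S X Y hSr hpref hNoPhi hA hB hXr hXge hXcl hXlink hYr hYge hYcl hYlink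
    rcases S.eq_empty_or_nonempty with rfl | hSe
    · simp only [Finset.card_empty]
      exact Nat.zero_le _
    have hDne : (S.image (dg M j)).Nonempty := hSe.image _
    have hD2 : (S.image (dg M j)).card ≤ 2 := dset_le_two hM hSr hpref hNoPhi
    set dmin := (S.image (dg M j)).min' hDne with hdmin
    obtain ⟨a0, ha0S, ha0dg⟩ := Finset.mem_image.1 ((S.image (dg M j)).min'_mem hDne)
    set Slow := S.filter (fun a => dg M j a = dmin) with hSlowdef
    set Shigh := S.filter (fun a => ¬ dg M j a = dmin) with hShighdef
    have hsplit : Slow.card + Shigh.card = S.card :=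
      Finset.card_filter_add_card_filter_not _
    have hSlowS : Slow ⊆ S := Finset.filter_subset _ _
    have hShighS : Shigh ⊆ S := Finset.filter_subset _ _
    have hdgmin : ∀ a ∈ S, dmin ≤ dg M j a := fun a ha =>
      (S.image (dg M j)).min'_le _ (Finset.mem_image_of_mem _ ha)
    have ha0low : a0 ∈ Slow := Finset.mem_filter.2 ⟨ha0S, ha0dg⟩
    have hprefSlow : Pref M j Slow := fun a ha b hb =>
      pref_step (hpref a (hSlowS ha) b (hSlowS hb))
        (by rw [(Finset.mem_filter.1 ha).2, (Finset.mem_filter.1 hb).2])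
    rcases Shigh.eq_empty_or_nonempty with hSh0 | hShne
    · have hall : ∀ a ∈ S, dg M j a = dmin := by
        intro a ha
        by_contra hne
        have : a ∈ Shigh := Finset.mem_filter.2 ⟨ha, hne⟩
        rw [hSh0] at this
        exact absurd this (Finset.notMem_empty a)
      have hprefS : Pref M j S := fun a ha b hb =>
        pref_step (hpref a ha b hb) (by rw [hall a ha, hall b hb])
      exact ih S X Y hSr hprefS hNoPhi hA hB hXr
        (fun t ht => le_trans (Nat.le_succ j) (hXge t ht)) hXcl hXlink hYr
        (fun t ht => le_trans (Nat.le_succ j) (hYge t ht)) hYcl hYlink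
    obtain ⟨c0, hc0⟩ := hShne
    have hc0S := hShighS hc0
    have hc0dg : dmin < dg M j c0 := lt_of_le_of_ne (hdgmin c0 hc0S)
      (fun h => (Finset.mem_filter.1 hc0).2 h.symm)
    have hdgShigh : ∀ a ∈ Shigh, ∀ b ∈ Shigh, dg M j a = dg M j b := by
      intro a ha b hb
      have hcard1 : ((S.image (dg M j)).erase dmin).card ≤ 1 := by
        have h4' : ((S.image (dg M j)).erase dmin).card = (S.image (dg M j)).card - 1 :=
          Finset.card_erase_of_mem ((S.image (dg M j)).min'_mem hDne)
        omega
      have h1 : dg M j a ∈ (S.image (dg M j)).erase dmin :=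
        Finset.mem_erase.2 ⟨(Finset.mem_filter.1 ha).2,
          Finset.mem_image_of_mem _ (hShighS ha)⟩
      have h2 : dg M j b ∈ (S.image (dg M j)).erase dmin :=
        Finset.mem_erase.2 ⟨(Finset.mem_filter.1 hb).2,
          Finset.mem_image_of_mem _ (hShighS hb)⟩
      exact Finset.card_le_one.1 hcard1 _ h1 _ h2
    have hprefShigh : Pref M j Shigh := fun a ha b hb =>
      pref_step (hpref a (hShighS ha) b (hShighS hb)) (hdgShigh a ha b hb)
    have hjk : j < k := jk_lt hM hSr ha0S hc0S (by omega)
    have hDDa0c0 : DD M k a0 c0 = j := dd_compute hjk (hpref a0 ha0S c0 hc0S)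
      (div_ne_of_dg (hpref a0 ha0S c0 hc0S) (by omega))
    have ha0c0 : a0 < c0 := lt_of_dg_lt (hpref a0 ha0S c0 hc0S) (by omega)
    -- bound on Slow
    have hLB : Slow.card ≤ 2 ^ ((d1k - X.card) + (d1k - Y.card)) := by
      rcases le_or_gt Slow.card 1 with h | h
      · exact le_trans h Nat.one_le_two_pow
      · have hpair : ∀ a ∈ Slow, ∀ b ∈ Slow, a < b → ψ j (DD M k a b) = x := by
          intro a ha b hb hab
          have hr := real_A (φ := φ) (ψ := ψ) hM hSr hpref (hSlowS ha) (hSlowS hb) hc0S hab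
            (by rw [(Finset.mem_filter.1 ha).2, (Finset.mem_filter.1 hb).2])
            (by rw [(Finset.mem_filter.1 ha).2]; exact hc0dg)
          exact hA _ hr.1
        have hjX : j ∉ X := fun hh => by have := hXge j hh; omega
        have hX'card : (insert j X).card = X.card + 1 := Finset.card_insert_of_notMem hjX
        have hX'r : insert j X ⊆ Finset.range k :=
          Finset.insert_subset (Finset.mem_range.2 hjk) hXr
        have hX'cl : ∀ s ∈ insert j X, ∀ t ∈ insert j X, t < s → ψ s t = x := by
          intro s hs t ht hts
          rcases Finset.mem_insert.1 hs with hsj | hs'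
          · exfalso
            rcases Finset.mem_insert.1 ht with htj | ht'
            · omega
            · have := hXge t ht'; omega
          · rcases Finset.mem_insert.1 ht with htj | ht'
            · rw [htj]
              have := hXlink s hs' a0 ha0S c0 hc0S ha0c0
              rwa [hDDa0c0] at this
            · exact hXcl s hs' t ht' hts
        have hX'le : (insert j X).card ≤ d1k := hpsi (insert j X) hX'r x hX'cl
        have hlink' : ∀ t ∈ insert j X, ∀ a ∈ Slow, ∀ b ∈ Slow, a < b →
            ψ t (DD M k a b) = x := by
          intro t ht a ha b hb hab
          rcases Finset.mem_insert.1 ht with htj | ht'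
          · rw [htj]
            exact hpair a ha b hb hab
          · exact hXlink t ht' a (hSlowS ha) b (hSlowS hb) hab
        have hrec := ih Slow (insert j X) Y (hSlowS.trans hSr) hprefSlow
          (fun cc hc => hNoPhi cc (RC_mono M k q' φ ψ hSlowS hc))
          (fun e he => hA e (RC_mono M k q' φ ψ hSlowS he))
          (fun e he => hB e (RC_mono M k q' φ ψ hSlowS he))
          hX'r
          (fun t ht => by
            rcases Finset.mem_insert.1 ht with htj | ht'
            · omega
            · have := hXge t ht'; omega)
          hX'cl hlink' hYr
          (fun t ht => le_trans (Nat.le_succ j) (hYge t ht)) hYcl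
          (fun t ht a ha b hb hab => hYlink t ht a (hSlowS ha) b (hSlowS hb) hab)
        rw [hX'card] at hrec
        have hXle : X.card + 1 ≤ d1k := by rw [← hX'card]; exact hX'le
        have e : (d1k - (X.card + 1)) + (d1k - Y.card) + 1
            = (d1k - X.card) + (d1k - Y.card) := by omega
        rwa [e] at hrec
    -- bound on Shigh
    have hHB : Shigh.card ≤ 2 ^ ((d1k - X.card) + (d1k - Y.card)) := by
      rcases le_or_gt Shigh.card 1 with h | h
      · exact le_trans h Nat.one_le_two_pow
      · have hpair : ∀ b ∈ Shigh, ∀ c ∈ Shigh, b < c → ψ j (DD M k b c) = y := by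
          intro b hb c hc hbc
          have hr := real_B (φ := φ) (ψ := ψ) hM hSr hpref ha0S (hShighS hb) (hShighS hc) hbc
            (hdgShigh b hb c hc)
            (by rw [ha0dg]
                have : dmin < dg M j b := lt_of_le_of_ne (hdgmin b (hShighS hb))
                  (fun hh => (Finset.mem_filter.1 hb).2 hh.symm)
                exact this)
          exact hB _ hr.1
        have hjY : j ∉ Y := fun hh => by have := hYge j hh; omega
        have hY'card : (insert j Y).card = Y.card + 1 := Finset.card_insert_of_notMem hjY
        have hY'r : insert j Y ⊆ Finset.range k :=
          Finset.insert_subset (Finset.mem_range.2 hjk) hYr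
        have hY'cl : ∀ s ∈ insert j Y, ∀ t ∈ insert j Y, t < s → ψ s t = y := by
          intro s hs t ht hts
          rcases Finset.mem_insert.1 hs with hsj | hs'
          · exfalso
            rcases Finset.mem_insert.1 ht with htj | ht'
            · omega
            · have := hYge t ht'; omega
          · rcases Finset.mem_insert.1 ht with htj | ht'
            · rw [htj]
              have := hYlink s hs' a0 ha0S c0 hc0S ha0c0
              rwa [hDDa0c0] at this
            · exact hYcl s hs' t ht' hts
        have hY'le : (insert j Y).card ≤ d1k := hpsi (insert j Y) hY'r y hY'cl
        have hlink' : ∀ t ∈ insert j Y, ∀ a ∈ Shigh, ∀ b ∈ Shigh, a < b →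
            ψ t (DD M k a b) = y := by
          intro t ht a ha b hb hab
          rcases Finset.mem_insert.1 ht with htj | ht'
          · rw [htj]
            exact hpair a ha b hb hab
          · exact hYlink t ht' a (hShighS ha) b (hShighS hb) hab
        have hrec := ih Shigh X (insert j Y) (hShighS.trans hSr) hprefShigh
          (fun cc hc => hNoPhi cc (RC_mono M k q' φ ψ hShighS hc))
          (fun e he => hA e (RC_mono M k q' φ ψ hShighS he))
          (fun e he => hB e (RC_mono M k q' φ ψ hShighS he))
          hXr (fun t ht => le_trans (Nat.le_succ j) (hXge t ht)) hXcl
          (fun t ht a ha b hb hab => hXlink t ht a (hShighS ha) b (hShighS hb) hab)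
          hY'r
          (fun t ht => by
            rcases Finset.mem_insert.1 ht with htj | ht'
            · omega
            · have := hYge t ht'; omega)
          hY'cl hlink'
        rw [hY'card] at hrec
        have hYle : Y.card + 1 ≤ d1k := by rw [← hY'card]; exact hY'le
        have e : (d1k - X.card) + (d1k - (Y.card + 1)) + 1
            = (d1k - X.card) + (d1k - Y.card) := by omega
        rwa [e] at hrec
    have hp := pow_succ 2 ((d1k - X.card) + (d1k - Y.card))
    omega

lemma main_coloring (hM : 1 ≤ M) (hm : 3 ≤ m) {n : ℕ}
    (hphi : ∀ A ⊆ Finset.range M, A.card = m → 3 ≤ ((Finset.powersetCard 3 A).image φ).card)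
    (hpsi : ∀ T ⊆ Finset.range k, ∀ x : Fin 3,
      (∀ s ∈ T, ∀ t ∈ T, t < s → ψ s t = x) → T.card ≤ d1k)
    (hnk : k + 2 ≤ n) (hbinb : 2 ^ (2 * d1k + 1) < n)
    (hspnb : d1k * (m - 2) + (m - 1) < n)
    (S : Finset ℕ) (hSr : S ⊆ Finset.range (M^k)) (hcard : S.card = n) :
    3 ≤ (RC M k q' φ ψ S).card := by
  by_contra h3
  have h2 : (RC M k q' φ ψ S).card ≤ 2 := by omega
  have hprefk : Pref M k S := by
    intro a ha b hb
    rw [Nat.div_eq_of_lt (Finset.mem_range.1 (hSr ha)),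
      Nat.div_eq_of_lt (Finset.mem_range.1 (hSr hb))]
  by_cases hBex : ∃ e, spB q' e ∈ RC M k q' φ ψ S
  · obtain ⟨yB, hyB⟩ := hBex
    by_cases hAex : ∃ e, spA q' e ∈ RC M k q' φ ψ S
    · obtain ⟨xA, hxA⟩ := hAex
      have hNoPhi : ∀ cc, emb q' cc ∉ RC M k q' φ ψ S := by
        intro cc hcc
        have := three_le_card hcc hxA hyB (emb_ne_spA q' cc xA) (emb_ne_spB q' cc yB)
          (spA_ne_spB q' xA yB)
        omega
      have hA1 : ∀ e, spA q' e ∈ RC M k q' φ ψ S → e = xA := by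
        intro e he
        by_contra hne
        have := three_le_card he hxA hyB (fun hh => hne (spA_inj q' hh))
          (spA_ne_spB q' e yB) (spA_ne_spB q' xA yB)
        omega
      have hB1 : ∀ e, spB q' e ∈ RC M k q' φ ψ S → e = yB := by
        intro e he
        by_contra hne
        have := three_le_card hxA he hyB (spA_ne_spB q' xA e) (spA_ne_spB q' xA yB)
          (fun hh => hne (spB_inj q' hh))
        omega
      have hb := bin hM hpsi xA yB k S ∅ ∅ hSr hprefk hNoPhi hA1 hB1
        (Finset.empty_subset _) (by simp) (by simp) (by simp)
        (Finset.empty_subset _) (by simp) (by simp) (by simp)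
      simp only [Finset.card_empty, Nat.sub_zero] at hb
      have e : (d1k + d1k + 1) = 2 * d1k + 1 := by omega
      rw [e] at hb
      omega
    · by_cases hB2 : ∃ e, e ≠ yB ∧ spB q' e ∈ RC M k q' φ ψ S
      · obtain ⟨e2, hne2, he2⟩ := hB2
        have hNoPhi : ∀ cc, emb q' cc ∉ RC M k q' φ ψ S := by
          intro cc hcc
          have := three_le_card hcc he2 hyB (emb_ne_spB q' cc e2) (emb_ne_spB q' cc yB)
            (fun hh => hne2 (spB_inj q' hh))
          omega
        have hNoA : ∀ e, spA q' e ∉ RC M k q' φ ψ S := fun e he => hAex ⟨e, he⟩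
        have := spn2' hM k S hSr hprefk hNoPhi hNoA
        omega
      · have hB1 : ∀ e, spB q' e ∈ RC M k q' φ ψ S → e = yB := by
          intro e he
          by_contra hne
          exact hB2 ⟨e, hne, he⟩
        have hNoA : ∀ e, spA q' e ∉ RC M k q' φ ψ S := fun e he => hAex ⟨e, he⟩
        have hs := spn' hM hm hphi hpsi yB k S ∅ hSr hprefk h2 hB1 hNoA
          (Finset.empty_subset _) (by simp) (by simp) (by simp)
        simp only [Finset.card_empty, Nat.sub_zero] at hs
        omega
  · have hNoB : ∀ e, spB q' e ∉ RC M k q' φ ψ S := fun e he => hBex ⟨e, he⟩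
    by_cases hA2 : ∃ e e', e ≠ e' ∧ spA q' e ∈ RC M k q' φ ψ S ∧ spA q' e' ∈ RC M k q' φ ψ S
    · obtain ⟨e1, e2, hne, he1, he2⟩ := hA2
      have hNoPhi : ∀ cc, emb q' cc ∉ RC M k q' φ ψ S := by
        intro cc hcc
        have := three_le_card hcc he1 he2 (emb_ne_spA q' cc e1) (emb_ne_spA q' cc e2)
          (fun hh => hne (spA_inj q' hh))
        omega
      have := spn2 hM k S hSr hprefk hNoPhi hNoB
      omega
    · by_cases hAex : ∃ e, spA q' e ∈ RC M k q' φ ψ S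
      · obtain ⟨xA, hxA⟩ := hAex
        have hA1 : ∀ e, spA q' e ∈ RC M k q' φ ψ S → e = xA := by
          intro e he
          by_contra hne
          exact hA2 ⟨e, xA, hne, he, hxA⟩
        have hs := spn hM hm hphi hpsi xA k S ∅ hSr hprefk h2 hA1 hNoB
          (Finset.empty_subset _) (by simp) (by simp) (by simp)
        simp only [Finset.card_empty, Nat.sub_zero] at hs
        omega
      · have hA1 : ∀ e, spA q' e ∈ RC M k q' φ ψ S → e = 0 := fun e he => absurd ⟨e, he⟩ hAex
        have hs := spn hM hm hphi hpsi 0 k S ∅ hSr hprefk h2 hA1 hNoB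
          (Finset.empty_subset _) (by simp) (by simp) (by simp)
        simp only [Finset.card_empty, Nat.sub_zero] at hs
        omega

end MainLemmas

lemma cube_le_pow : ∀ n : ℕ, 10 ≤ n → n^3 ≤ 2^n := by
  intro n hn
  induction n with
  | zero => omega
  | succ n ih =>
    rcases Nat.lt_or_ge n 10 with h | h
    · have hn9 : n = 9 := by omega
      subst hn9
      norm_num
    · have h2 := ih (by omega)
      have h3 : (n+1)^3 ≤ 2*n^3 := by
        have h1 : n^2 * 10 ≤ n^2 * n := Nat.mul_le_mul_left _ h
        have h2' : n * 10 ≤ n * n := Nat.mul_le_mul_left _ h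
        nlinarith [h1, h2']
      calc (n+1)^3 ≤ 2*n^3 := h3
        _ ≤ 2*2^n := by omega
        _ = 2^(n+1) := by ring

end EH

/-- for n > q ≥ 9, f(n;q,3) ≥ f(⌊n/log₂ n⌋; q-6, 3)^{⌊n^{1/4}/2⌋}. -/
theorem stmt_10 (n q : ℕ) (hq : 9 ≤ q) (hn : q < n) :
    (f ⌊(n : ℝ) / Real.logb 2 (n : ℝ)⌋₊ (q - 6) 3) ^ ⌊(n : ℝ) ^ ((1 : ℝ) / 4) / 2⌋₊
      ≤ f n q 3 := by
  have hq0 : 0 < q := by omega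
  have hn10 : 10 ≤ n := by omega
  have hn3 : 3 ≤ n := by omega
  set q' := q - 6 with hq'
  have hq'0 : 0 < q' := by omega
  set m := ⌊(n : ℝ) / Real.logb 2 (n : ℝ)⌋₊ with hmdef
  set k := ⌊(n : ℝ) ^ ((1 : ℝ) / 4) / 2⌋₊ with hkdef
  rcases Nat.eq_zero_or_pos k with hk0 | hk1
  · rw [hk0, pow_zero]
    exact EH.le_f hq0 hn3 (EH.hasColoring_vac hq0 (by omega))
  · have hnR : (0:ℝ) ≤ (n:ℝ) := Nat.cast_nonneg n
    have hn0R : (0:ℝ) < (n:ℝ) := by exact_mod_cast (show 0 < n by omega)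
    have hL0 : 0 < Real.logb 2 n :=
      Real.logb_pos (by norm_num) (by exact_mod_cast (show 1 < n by omega))
    have hF1 : (2 * (k:ℝ)) ≤ (n:ℝ) ^ ((1:ℝ)/4) := by
      have h1 : (k:ℝ) ≤ (n:ℝ) ^ ((1:ℝ)/4) / 2 := Nat.floor_le (by positivity)
      linarith
    have hpow4 : ((n:ℝ) ^ ((1:ℝ)/4)) ^ (4:ℕ) = (n:ℝ) := by
      rw [← Real.rpow_natCast ((n:ℝ) ^ ((1:ℝ)/4)) 4, ← Real.rpow_mul hnR]
      norm_num
    have hF2 : 16 * k^4 ≤ n := by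
      have h1 : ((2*k:ℕ):ℝ) ^ (4:ℕ) ≤ ((n:ℝ) ^ ((1:ℝ)/4)) ^ (4:ℕ) := by
        apply pow_le_pow_left₀ (by positivity) (by push_cast; linarith)
      rw [hpow4] at h1
      have h2 : ((2*k)^4 : ℕ) ≤ n := by exact_mod_cast h1
      calc 16 * k^4 = (2*k)^4 := by ring
        _ ≤ n := h2
    have hk4pos : 0 < k^4 := pow_pos hk1 4
    have hn16 : 16 ≤ n := by omega
    have hL4 : (4:ℝ) ≤ Real.logb 2 n := by
      have hle : ((2:ℝ))^(4:ℕ) ≤ (n:ℝ) := by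
        norm_num
        exact_mod_cast hn16
      have h1 : Real.logb 2 ((2:ℝ)^(4:ℕ)) ≤ Real.logb 2 n :=
        (Real.logb_le_logb (by norm_num) (by norm_num) hn0R).2 hle
      rw [Real.logb_pow, Real.logb_self_eq_one (by norm_num)] at h1
      push_cast at h1
      linarith
    have hcube : (n:ℕ)^3 ≤ 2^n := EH.cube_le_pow n hn10
    have h3L : 3 * Real.logb 2 n ≤ (n:ℝ) := by
      have h1 : Real.logb 2 ((n:ℝ)^(3:ℕ)) ≤ Real.logb 2 ((2:ℝ)^(n:ℕ)) := by
        refine (Real.logb_le_logb (by norm_num) (by positivity) (by positivity)).2 ?_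
        exact_mod_cast hcube
      rw [Real.logb_pow, Real.logb_pow, Real.logb_self_eq_one (by norm_num)] at h1
      push_cast at h1
      linarith
    have hm3 : 3 ≤ m := by
      apply Nat.le_floor
      rw [le_div_iff₀ hL0]
      push_cast
      linarith
    have hmR : (m:ℝ) ≤ (n:ℝ) / Real.logb 2 n := Nat.floor_le (by positivity)
    set M := f m q' 3 with hMdef
    have hM2 : 2 ≤ M := EH.two_le_f q' m hq'0 hm3
    obtain ⟨φ, hφ⟩ := EH.f_mem q' m hq'0 hm3
    obtain ⟨ψ, hψ⟩ := EH.psi_exists k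
    set b := Nat.log 2 k with hb
    set d1k := EH.d1 k with hd1k
    have hkR1 : (1:ℝ) ≤ (k:ℝ) := by exact_mod_cast hk1
    have hbR : (b:ℝ) ≤ Real.logb 2 k := by
      have h1 : ((2:ℕ)^b : ℕ) ≤ k := by
        rw [hb]
        exact Nat.pow_log_le_self 2 (by omega)
      have h2 : Real.logb 2 (((2:ℕ)^b : ℕ):ℝ) ≤ Real.logb 2 k := by
        refine (Real.logb_le_logb (by norm_num) (by positivity) (by linarith)).2 ?_
        exact_mod_cast h1
      rw [show (((2:ℕ)^b : ℕ):ℝ) = ((2:ℝ))^(b:ℕ) by push_cast; ring] at h2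
      rwa [Real.logb_pow, Real.logb_self_eq_one (by norm_num), mul_one] at h2
    have hlogk : Real.logb 2 (k:ℝ) + 1 ≤ Real.logb 2 n / 4 := by
      have h1 : Real.logb 2 (2 * (k:ℝ)) ≤ Real.logb 2 ((n:ℝ) ^ ((1:ℝ)/4)) := by
        refine (Real.logb_le_logb (by norm_num) (by linarith) (by positivity)).2 hF1
      have h2 : Real.logb 2 (2 * (k:ℝ)) = 1 + Real.logb 2 k := by
        rw [Real.logb_mul (by norm_num) (by linarith), Real.logb_self_eq_one (by norm_num)]
      have h3 : Real.logb 2 ((n:ℝ) ^ ((1:ℝ)/4)) = (1/4) * Real.logb 2 n := by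
        unfold Real.logb
        rw [Real.log_rpow hn0R]
        ring
      rw [h2, h3] at h1
      linarith
    have hd1cast : (d1k:ℝ) = 2*(b:ℝ) + 1 := by
      rw [hd1k]
      simp only [EH.d1]
      push_cast
      rw [← hb]
    have hd1R : (d1k:ℝ) ≤ Real.logb 2 n / 2 - 1 := by
      rw [hd1cast]
      linarith
    have hbinb : 2 ^ (2 * d1k + 1) < n := by
      have h1 : (2:ℕ)^b ≤ k := by
        rw [hb]
        exact Nat.pow_log_le_self 2 (by omega)
      have e : 2 * d1k + 1 = 4*b + 3 := by
        rw [hd1k]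
        simp only [EH.d1]
        omega
      rw [e]
      have h2 : (2:ℕ)^(4*b+3) = ((2:ℕ)^b)^4 * 8 := by
        rw [show 4*b+3 = b*4+3 by ring, pow_add, pow_mul]
        norm_num
      have h3 : ((2:ℕ)^b)^4 ≤ k^4 := Nat.pow_le_pow_left h1 4
      omega
    have hnk : k + 2 ≤ n := by
      have h1 : k ≤ k^4 := Nat.le_self_pow (by norm_num) k
      omega
    have hspnb : d1k * (m - 2) + (m - 1) < n := by
      have hc1 : ((d1k * (m-2) + (m-1) : ℕ) : ℝ) = (d1k:ℝ)*((m:ℝ)-2) + ((m:ℝ)-1) := by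
        push_cast [Nat.cast_sub (show 2 ≤ m by omega), Nat.cast_sub (show 1 ≤ m by omega)]
        ring
      have hm3R : (3:ℝ) ≤ (m:ℝ) := by exact_mod_cast hm3
      have hm2 : ((m:ℝ) - 2) ≤ (n:ℝ)/Real.logb 2 n - 2 := by linarith
      have hm2nn : (0:ℝ) ≤ (m:ℝ) - 2 := by linarith
      have hmul : (d1k:ℝ)*((m:ℝ)-2) ≤ (Real.logb 2 n/2 - 1) * ((n:ℝ)/Real.logb 2 n - 2) :=
        mul_le_mul hd1R hm2 hm2nn (by linarith)
      have hprod : (Real.logb 2 n/2 - 1) * ((n:ℝ)/Real.logb 2 n - 2)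
          = (n:ℝ)/2 - Real.logb 2 n - (n:ℝ)/Real.logb 2 n + 2 := by
        field_simp
        ring
      have hfin : (d1k:ℝ)*((m:ℝ)-2) + ((m:ℝ)-1) < (n:ℝ) := by
        rw [hprod] at hmul
        have h16R : (16:ℝ) ≤ (n:ℝ) := by exact_mod_cast hn16
        linarith
      have hlt : ((d1k * (m-2) + (m-1) : ℕ) : ℝ) < (n:ℝ) := by
        rw [hc1]
        exact hfin
      exact_mod_cast hlt
    have hcol : hasColoring (M^k) n (q'+6) 3 := by
      refine ⟨EH.col M k q' φ ψ, ?_⟩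
      intro A hA hcard
      exact EH.main_coloring (by omega : 1 ≤ M) hm3 hφ hψ hnk hbinb hspnb A hA hcard
    have hq6 : q' + 6 = q := by omega
    rw [hq6] at hcol
    exact EH.le_f hq0 hn3 hcol
end

section
/- For all integers n > 3, f(n;3,3) > 2^{n²/24}; that is, there exists a 3-coloring of the triples of a set of size greater than 2^{n²/24} such that every n-element subset contains triples of at least three distinct colors. -/
open Finset

/-- Counting functions avoiding a color on a prescribed part of the domain. -/
lemma count_bound {α : Type*} [Fintype α] [DecidableEq α]
    (Q : α → Prop) [DecidablePred Q] (c : Fin 3) :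
    (Finset.univ.filter (fun g : α → Fin 3 => ∀ x, Q x → g x ≠ c)).card
      ≤ 2 ^ (Fintype.card {x // Q x}) * 3 ^ (Fintype.card α - Fintype.card {x // Q x}) := by
  rw [← Fintype.card_subtype]
  have hinj : Function.Injective
      (fun gp : {g : α → Fin 3 // ∀ x, Q x → g x ≠ c} =>
        ((fun x : {x // Q x} => (⟨gp.1 x.1, gp.2 x.1 x.2⟩ : {y : Fin 3 // y ≠ c})),
         (fun x : {x // ¬ Q x} => gp.1 x.1))) := by
    rintro ⟨g, hg⟩ ⟨g', hg'⟩ h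
    simp only [Prod.mk.injEq] at h
    apply Subtype.ext
    funext x
    by_cases hx : Q x
    · exact congrArg Subtype.val (congrFun h.1 ⟨x, hx⟩)
    · exact congrFun h.2 ⟨x, hx⟩
  have hle := Fintype.card_le_of_injective _ hinj
  have h2 : Fintype.card {y : Fin 3 // y ≠ c} = 2 := by
    rw [Fintype.card_subtype_compl, Fintype.card_subtype_eq, Fintype.card_fin]
  calc Fintype.card {g : α → Fin 3 // ∀ x, Q x → g x ≠ c}
      ≤ _ := hle
    _ = 2 ^ (Fintype.card {x // Q x}) * 3 ^ (Fintype.card α - Fintype.card {x // Q x}) := by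
        rw [Fintype.card_prod, Fintype.card_fun, Fintype.card_fun, h2,
          Fintype.card_subtype_compl, Fintype.card_fin]

/-- The union bound: if bad colorings are fewer than all colorings, a good coloring exists. -/
lemma exists_good (N n : ℕ)
    (h : N.choose n * 3 * 2 ^ n.choose 3 < 3 ^ n.choose 3) :
    hasColoring N n 3 3 := by
  by_cases hNn : N < n
  · refine ⟨fun _ => 0, fun A hA hcard => absurd ?_ (Nat.not_le.mpr hNn)⟩
    calc n = A.card := hcard.symm
      _ ≤ (Finset.range N).card := card_le_card hA
      _ = N := card_range N
  push_neg at hNn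
  set T : Finset (Finset ℕ) := (Finset.range N).powersetCard 3 with hT
  set α := {s // s ∈ T}
  have hTcard : Fintype.card α = N.choose 3 := by
    rw [Fintype.card_coe, hT, card_powersetCard, card_range]
  set Bad : (α → Fin 3) → Prop := fun g =>
    ∃ A ∈ (Finset.range N).powersetCard n, ∃ c : Fin 3,
      ∀ x : α, (x : Finset ℕ) ∈ A.powersetCard 3 → g x ≠ c with hBad
  classical
  set B : Finset (α → Fin 3) := Finset.univ.filter Bad with hB
  have hsub : ∀ A ∈ (Finset.range N).powersetCard n, A.powersetCard 3 ⊆ T := by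
    intro A hA s hs
    rw [mem_powersetCard] at hA hs ⊢
    exact ⟨hs.1.trans hA.1, hs.2⟩
  have hQcard : ∀ A ∈ (Finset.range N).powersetCard n,
      Fintype.card {x : α // (x : Finset ℕ) ∈ A.powersetCard 3} = n.choose 3 := by
    intro A hA
    have e : {x : α // (x : Finset ℕ) ∈ A.powersetCard 3} ≃ {s // s ∈ A.powersetCard 3} :=
      { toFun := fun x => ⟨x.1.1, x.2⟩
        invFun := fun s => ⟨⟨s.1, hsub A hA s.2⟩, s.2⟩
        left_inv := fun x => by ext; rfl
        right_inv := fun s => by ext; rfl }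
    rw [Fintype.card_congr e, Fintype.card_coe, card_powersetCard,
      (mem_powersetCard.mp hA).2]
  have hBsub : B ⊆ ((Finset.range N).powersetCard n).biUnion (fun A =>
      (Finset.univ : Finset (Fin 3)).biUnion (fun c =>
        Finset.univ.filter (fun g : α → Fin 3 =>
          ∀ x : α, (x : Finset ℕ) ∈ A.powersetCard 3 → g x ≠ c))) := by
    intro g hg
    rw [hB, mem_filter] at hg
    obtain ⟨-, A, hA, c, hc⟩ := hg
    rw [mem_biUnion]
    exact ⟨A, hA, mem_biUnion.mpr ⟨c, mem_univ c, mem_filter.mpr ⟨mem_univ g, hc⟩⟩⟩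
  have hDle : n.choose 3 ≤ N.choose 3 := Nat.choose_le_choose 3 hNn
  have hBcard : B.card < Fintype.card (α → Fin 3) := by
    have step : B.card ≤ N.choose n * (3 * (2 ^ n.choose 3 * 3 ^ (N.choose 3 - n.choose 3))) := by
      calc B.card ≤ _ := card_le_card hBsub
        _ ≤ ∑ A ∈ (Finset.range N).powersetCard n, (((Finset.univ : Finset (Fin 3)).biUnion
              (fun c => Finset.univ.filter (fun g : α → Fin 3 =>
                ∀ x : α, (x : Finset ℕ) ∈ A.powersetCard 3 → g x ≠ c))).card) :=
            card_biUnion_le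
        _ ≤ ∑ A ∈ (Finset.range N).powersetCard n,
              (3 * (2 ^ n.choose 3 * 3 ^ (N.choose 3 - n.choose 3))) := by
            apply Finset.sum_le_sum
            intro A hA
            calc ((Finset.univ : Finset (Fin 3)).biUnion (fun c =>
                  Finset.univ.filter (fun g : α → Fin 3 =>
                    ∀ x : α, (x : Finset ℕ) ∈ A.powersetCard 3 → g x ≠ c))).card
                ≤ ∑ c : Fin 3, (Finset.univ.filter (fun g : α → Fin 3 =>
                    ∀ x : α, (x : Finset ℕ) ∈ A.powersetCard 3 → g x ≠ c)).card :=
                  card_biUnion_le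
              _ ≤ ∑ _c : Fin 3, (2 ^ n.choose 3 * 3 ^ (N.choose 3 - n.choose 3)) := by
                  apply Finset.sum_le_sum
                  intro c _
                  have := count_bound (fun x : α => (x : Finset ℕ) ∈ A.powersetCard 3) c
                  rwa [hQcard A hA, hTcard] at this
              _ = 3 * (2 ^ n.choose 3 * 3 ^ (N.choose 3 - n.choose 3)) := by
                  simp [Finset.sum_const, Finset.card_univ]
        _ = N.choose n * (3 * (2 ^ n.choose 3 * 3 ^ (N.choose 3 - n.choose 3))) := by
            rw [Finset.sum_const, card_powersetCard, card_range, smul_eq_mul]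
    have hfin : N.choose n * (3 * (2 ^ n.choose 3 * 3 ^ (N.choose 3 - n.choose 3)))
        < 3 ^ N.choose 3 := by
      have h3 : (0:ℕ) < 3 ^ (N.choose 3 - n.choose 3) := Nat.pow_pos (by norm_num)
      calc N.choose n * (3 * (2 ^ n.choose 3 * 3 ^ (N.choose 3 - n.choose 3)))
          = (N.choose n * 3 * 2 ^ n.choose 3) * 3 ^ (N.choose 3 - n.choose 3) := by ring
        _ < 3 ^ n.choose 3 * 3 ^ (N.choose 3 - n.choose 3) := (Nat.mul_lt_mul_right h3).mpr h
        _ = 3 ^ N.choose 3 := by rw [← pow_add, Nat.add_sub_cancel' hDle]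
    rw [Fintype.card_fun, Fintype.card_fin, hTcard]
    exact lt_of_le_of_lt step hfin
  obtain ⟨g, -, hg⟩ : ∃ g ∈ (Finset.univ : Finset (α → Fin 3)), g ∉ B := by
    apply Finset.not_subset.mp
    intro hsub'
    have := card_le_card hsub'
    rw [Finset.card_univ] at this
    exact absurd (lt_of_le_of_lt this hBcard) (lt_irrefl _)
  have hgood : ¬ Bad g := fun hb => hg (mem_filter.mpr ⟨mem_univ g, hb⟩)
  refine ⟨fun s => if hs : s ∈ T then g ⟨s, hs⟩ else 0, ?_⟩
  intro A hA hcard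
  by_contra hlt
  push_neg at hlt
  have hnotsub : ¬ (Finset.univ : Finset (Fin 3)) ⊆
      ((A.powersetCard 3).image (fun s => if hs : s ∈ T then g ⟨s, hs⟩ else 0)) := by
    intro hsub'
    have := card_le_card hsub'
    simp only [Finset.card_univ, Fintype.card_fin] at this
    omega
  obtain ⟨c, -, hc⟩ := Finset.not_subset.mp hnotsub
  apply hgood
  refine ⟨A, mem_powersetCard.mpr ⟨hA, hcard⟩, c, ?_⟩
  intro x hx hgx
  apply hc
  rw [Finset.mem_image]
  refine ⟨x.1, hx, ?_⟩
  rw [dif_pos x.2]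
  rw [← hgx]

/-- The numeric inequality making the union bound work for `N = 2^(n²/24 + 1)`. -/
lemma numeric (n : ℕ) (hn : 3 < n) :
    (2 ^ (n ^ 2 / 24 + 1)).choose n * 3 * 2 ^ n.choose 3 < 3 ^ n.choose 3 := by
  by_cases h9 : n < 9
  · interval_cases n
    · norm_num [show (2:ℕ) ^ (4 ^ 2 / 24 + 1) = 2 by norm_num,
        Nat.choose_eq_zero_of_lt (by norm_num : (2:ℕ) < 4)]
    · norm_num [show (2:ℕ) ^ (5 ^ 2 / 24 + 1) = 4 by norm_num,
        Nat.choose_eq_zero_of_lt (by norm_num : (4:ℕ) < 5)]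
    · norm_num [show (2:ℕ) ^ (6 ^ 2 / 24 + 1) = 4 by norm_num,
        Nat.choose_eq_zero_of_lt (by norm_num : (4:ℕ) < 6)]
    · have h1 : (2:ℕ) ^ (7 ^ 2 / 24 + 1) = 8 := by norm_num
      have h2 : (8:ℕ).choose 7 = 8 := by rfl
      have h3 : (7:ℕ).choose 3 = 35 := by rfl
      rw [h1, h2, h3]; norm_num
    · have h1 : (2:ℕ) ^ (8 ^ 2 / 24 + 1) = 8 := by norm_num
      have h2 : (8:ℕ).choose 8 = 1 := Nat.choose_self 8
      have h3 : (8:ℕ).choose 3 = 56 := by rfl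
      rw [h1, h2, h3]; norm_num
  · push_neg at h9
    obtain ⟨k, rfl⟩ := Nat.exists_eq_add_of_le h9  -- n = 9 + k
    set m := (9 + k) ^ 2 / 24 + 1 with hm
    set t := (9 + k).choose 3 with ht
    have h6t : 6 * t = (7 + k) * ((8 + k) * (9 + k)) := by
      have h := Nat.descFactorial_eq_factorial_mul_choose (9 + k) 3
      simp [Nat.descFactorial_succ, Nat.descFactorial_zero, Nat.factorial,
        show 9 + k - 2 = 7 + k by omega, show 9 + k - 1 = 8 + k by omega] at h
      omega
    have hm24 : 24 * m ≤ (9 + k) ^ 2 + 24 := by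
      have : 24 * ((9 + k) ^ 2 / 24) ≤ (9 + k) ^ 2 := Nat.mul_div_le _ _
      omega
    have key1 : 7 * (m * (9 + k)) + 38 ≤ 4 * t := by
      nlinarith [Nat.mul_le_mul_left (7 * (9 + k)) hm24, h6t, sq_nonneg k]
    have hpow : 2 ^ (t + 4 * (t / 7)) ≤ 3 ^ t := by
      have hdm : 7 * (t / 7) + t % 7 = t := Nat.div_add_mod t 7
      calc 2 ^ (t + 4 * (t / 7)) = 2 ^ (11 * (t / 7) + t % 7) := by congr 1; omega
        _ = (2 ^ 11) ^ (t / 7) * 2 ^ (t % 7) := by rw [pow_add, pow_mul]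
        _ ≤ (3 ^ 7) ^ (t / 7) * 3 ^ (t % 7) :=
            Nat.mul_le_mul (Nat.pow_le_pow_left (by norm_num) _)
              (Nat.pow_le_pow_left (by norm_num) _)
        _ = 3 ^ (7 * (t / 7) + t % 7) := by rw [pow_add, pow_mul]
        _ = 3 ^ t := by rw [hdm]
    calc (2 ^ m).choose (9 + k) * 3 * 2 ^ t
        ≤ (2 ^ m) ^ (9 + k) * 3 * 2 ^ t :=
          Nat.mul_le_mul_right _ (Nat.mul_le_mul_right _ (Nat.choose_le_pow _ _))
      _ = 2 ^ (m * (9 + k)) * 3 * 2 ^ t := by rw [← pow_mul]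
      _ < 2 ^ (m * (9 + k)) * 4 * 2 ^ t := by
          have h1 : (0:ℕ) < 2 ^ (m * (9 + k)) := Nat.pow_pos (by norm_num)
          have h2 : (0:ℕ) < 2 ^ t := Nat.pow_pos (by norm_num)
          exact (Nat.mul_lt_mul_right h2).mpr (by nlinarith)
      _ = 2 ^ (m * (9 + k) + 2 + t) := by ring
      _ ≤ 2 ^ (t + 4 * (t / 7)) := Nat.pow_le_pow_right (by norm_num) (by omega)
      _ ≤ 3 ^ t := hpow

/-- for n > 3, f(n;3,3) > 2^{n²/24}. -/
theorem stmt_13 (n : ℕ) (hn : 3 < n) :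
    ∃ N : ℕ, (2 : ℝ) ^ ((n : ℝ) ^ 2 / 24) < N ∧ hasColoring N n 3 3 := by
  refine ⟨2 ^ (n ^ 2 / 24 + 1), ?_, exists_good _ _ (numeric n hn)⟩
  have hmn : n ^ 2 < 24 * (n ^ 2 / 24 + 1) := by
    have := Nat.div_add_mod (n ^ 2) 24
    have := Nat.mod_lt (n ^ 2) (show 0 < 24 by norm_num)
    omega
  have hlt : (n : ℝ) ^ 2 / 24 < ((n ^ 2 / 24 + 1 : ℕ) : ℝ) := by
    rw [div_lt_iff₀ (by norm_num : (0:ℝ) < 24)]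
    have : ((n ^ 2 : ℕ) : ℝ) < ((24 * (n ^ 2 / 24 + 1) : ℕ) : ℝ) := by
      exact_mod_cast hmn
    push_cast at this ⊢
    linarith
  calc (2 : ℝ) ^ ((n : ℝ) ^ 2 / 24)
      < (2 : ℝ) ^ (((n ^ 2 / 24 + 1 : ℕ) : ℝ)) :=
        (Real.rpow_lt_rpow_left_iff (by norm_num)).mpr hlt
    _ = ((2 ^ (n ^ 2 / 24 + 1) : ℕ) : ℝ) := by
        rw [Real.rpow_natCast]; push_cast; ring
end

section
/- Let M ≥ 1, V = {0,…,2^M-1}, and δ(u,v) the most significant binary bit where u,v differ. Suppose A = {v₁ < ⋯ < v_n} ⊆ V with n = 2^s and φ₂ is a 3-coloring of pairs of {0,…,M-1} such that φ₂(δ(v_i,v_j), δ(v_j,v_k)) = α for some fixed color α for every triple v_i < v_j < v_k in A. Then there is a set S of s distinct elements of {0,…,M-1} such that φ₂ assigns the color α to every pair from S. -/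
/-- Auxiliary: if `x ≤ y ≤ z` and `x, z` agree on all bits above `D`, then `y` also
agrees with `x` on all bits above `D`. -/
lemma stmt_17_sandwich {x y z D : ℕ} (hxy : x ≤ y) (hyz : y ≤ z)
    (h : ∀ i, D < i → x.testBit i = z.testBit i) :
    ∀ i, D < i → y.testBit i = x.testBit i := by
  have hxz : x >>> (D+1) = z >>> (D+1) := by
    apply Nat.eq_of_testBit_eq
    intro i
    simp only [Nat.testBit_shiftRight]
    exact h _ (by omega)
  have h1 : x >>> (D+1) ≤ y >>> (D+1) := by
    simp only [Nat.shiftRight_eq_div_pow]; exact Nat.div_le_div_right hxy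
  have h2 : y >>> (D+1) ≤ z >>> (D+1) := by
    simp only [Nat.shiftRight_eq_div_pow]; exact Nat.div_le_div_right hyz
  have hxy' : y >>> (D+1) = x >>> (D+1) := le_antisymm (hxz ▸ h2) h1
  intro i hi
  have key : (y >>> (D+1)).testBit (i - (D+1)) = (x >>> (D+1)).testBit (i - (D+1)) := by
    rw [hxy']
  simp only [Nat.testBit_shiftRight] at key
  have : (D+1) + (i - (D+1)) = i := by omega
  rwa [this] at key

/-- if A = {v₁ < ⋯ < v_n} ⊆ {0,…,2^M-1} with n = 2^s and every triple of A
gets the same φ₂-color α on the pair of most-significant-differing-bit values, then there are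
s distinct elements of {0,…,M-1} all of whose pairs get color α under φ₂. -/
theorem stmt_17 (M : ℕ) (hM : 1 ≤ M) (δ : ℕ → ℕ → ℕ)
    (hδ : ∀ u v : ℕ, u ≠ v →
      (Nat.testBit u (δ u v) ≠ Nat.testBit v (δ u v) ∧
        ∀ i, Nat.testBit u i ≠ Nat.testBit v i → i ≤ δ u v))
    (s n : ℕ) (hs : 2 ≤ s) (hn : n = 2 ^ s)
    (v : ℕ → ℕ) (hmono : ∀ i j, i < j → j < n → v i < v j)
    (hbound : ∀ i, i < n → v i < 2 ^ M)
    (φ₂ : Finset ℕ → Fin 3) (α : Fin 3)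
    (hcol : ∀ i j k, i < j → j < k → k < n →
      φ₂ {δ (v i) (v j), δ (v j) (v k)} = α) :
    ∃ S : Finset ℕ, S ⊆ Finset.range M ∧ S.card = s ∧
      ∀ a ∈ S, ∀ b ∈ S, a ≠ b → φ₂ {a, b} = α := by
  -- non-strict monotonicity
  have hmono' : ∀ i j, i ≤ j → j < n → v i ≤ v j := by
    intro i j hij hj
    rcases eq_or_lt_of_le hij with h | h
    · rw [h]
    · exact le_of_lt (hmono i j h hj)
  have hne : ∀ i j, i < j → j < n → v i ≠ v j := fun i j h1 h2 =>
    Nat.ne_of_lt (hmono i j h1 h2)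
  -- δ of a valid pair is < M
  have hδM : ∀ i j, i < j → j < n → δ (v i) (v j) < M := by
    intro i j h1 h2
    obtain ⟨hd, _⟩ := hδ (v i) (v j) (hne i j h1 h2)
    by_contra h
    push_neg at h
    rw [Nat.testBit_lt_two_pow (lt_of_lt_of_le (hbound i (h1.trans h2)) (Nat.pow_le_pow_right (by norm_num) h)),
        Nat.testBit_lt_two_pow (lt_of_lt_of_le (hbound j h2) (Nat.pow_le_pow_right (by norm_num) h))] at hd
    exact hd rfl
  have key : ∀ t, 1 ≤ t → ∀ lo, lo + 2^t ≤ n →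
      ∃ S : Finset ℕ, S ⊆ Finset.range M ∧ S.card = t ∧
        (∀ a ∈ S, ∀ b ∈ S, a ≠ b → φ₂ {a, b} = α) ∧
        (∀ b ∈ S, ∃ i j, lo ≤ i ∧ i < j ∧ j < lo + 2^t ∧ δ (v i) (v j) = b) := by
    intro t
    induction t with
    | zero => omega
    | succ t ih =>
      intro _ lo hle
      have h2t : 2^(t+1) = 2^t + 2^t := by rw [pow_succ]; ring
      by_cases ht : t = 0
      · -- base case t+1 = 1
        subst ht
        have hp : (2:ℕ)^1 = 2 := pow_one 2
        refine ⟨{δ (v lo) (v (lo+1))}, ?_, by simp, ?_, ?_⟩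
        · intro x hx
          simp only [Finset.mem_singleton] at hx
          subst hx
          exact Finset.mem_range.mpr (hδM lo (lo+1) (by omega) (by omega))
        · intro a ha b hb hab
          simp only [Finset.mem_singleton] at ha hb
          exact absurd (ha.trans hb.symm) hab
        · intro b hb
          simp only [Finset.mem_singleton] at hb
          exact ⟨lo, lo+1, le_refl _, by omega, by omega, hb.symm⟩
      · have ht1 : 1 ≤ t := by omega
        set a := lo with ha_def
        set c := lo + 2^(t+1) - 1 with hc_def
        have hac : a < c := by
          have : 2 ≤ 2^(t+1) := by
            calc 2 = 2^1 := by norm_num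
            _ ≤ 2^(t+1) := Nat.pow_le_pow_right (by norm_num) (by omega)
          omega
        have hcn : c < n := by omega
        have hvac : v a < v c := hmono a c hac hcn
        set D := δ (v a) (v c) with hD_def
        obtain ⟨hdiff, hmax⟩ := hδ (v a) (v c) (Nat.ne_of_lt hvac)
        have habove : ∀ i, D < i → (v a).testBit i = (v c).testBit i := by
          intro i hi
          by_contra h
          exact absurd (hmax i h) (by omega)
        -- bit D of v a is false, of v c is true
        have hbitac : (v a).testBit D = false ∧ (v c).testBit D = true := by
          cases hab : (v a).testBit D <;> cases hcb : (v c).testBit D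
          · rw [hab, hcb] at hdiff; exact absurd rfl hdiff
          · exact ⟨rfl, rfl⟩
          · exfalso
            have : v c < v a := Nat.lt_of_testBit D hcb hab
              (fun j hj => (habove j hj).symm)
            omega
          · rw [hab, hcb] at hdiff; exact absurd rfl hdiff
        -- all elements in [a,c] share the prefix above D
        have hprefix : ∀ j, a ≤ j → j ≤ c → ∀ i, D < i →
            (v j).testBit i = (v a).testBit i := by
          intro j h1 h2 i hi
          exact stmt_17_sandwich (hmono' a j h1 (lt_of_le_of_lt h2 hcn))
            (hmono' j c h2 hcn) habove i hi
        -- the first index whose bit D is set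
        have hex : ∃ k, a < k ∧ k ≤ c ∧ (v k).testBit D = true :=
          ⟨c, hac, le_refl _, hbitac.2⟩
        set m := Nat.find hex with hm_def
        obtain ⟨ham, hmc, hmbit⟩ := Nat.find_spec hex
        have hleft : ∀ k, a ≤ k → k < m → (v k).testBit D = false := by
          intro k h1 h2
          rcases eq_or_lt_of_le h1 with h | h
          · rw [← h]; exact hbitac.1
          · have := Nat.find_min hex h2
            push_neg at this
            cases hkb : (v k).testBit D
            · rfl
            · exact absurd hkb (by simpa using this h (by omega))
        have hright : ∀ k, m ≤ k → k ≤ c → (v k).testBit D = true := by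
          intro k h1 h2
          by_contra h
          have hkb : (v k).testBit D = false := by
            cases hkb : (v k).testBit D
            · rfl
            · exact absurd hkb h
          have : v k < v m := Nat.lt_of_testBit D hkb hmbit (by
            intro j hj
            rw [hprefix k (by omega) h2 j hj, hprefix m (by omega) hmc j hj])
          have := hmono' m k h1 (lt_of_le_of_lt h2 hcn)
          omega
        -- δ across the split equals D
        have hcross : ∀ i j, a ≤ i → i < m → m ≤ j → j ≤ c → δ (v i) (v j) = D := by
          intro i j h1 h2 h3 h4
          have hij : i < j := by omega
          have hjn : j < n := lt_of_le_of_lt h4 hcn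
          obtain ⟨hd, hmx⟩ := hδ (v i) (v j) (hne i j hij hjn)
          have hDle : D ≤ δ (v i) (v j) := by
            apply hmx
            rw [hleft i h1 h2, hright j h3 h4]
            simp
          have hle' : δ (v i) (v j) ≤ D := by
            by_contra hgt
            push_neg at hgt
            rw [hprefix i h1 (by omega) _ hgt, hprefix j (by omega) h4 _ hgt] at hd
            exact hd rfl
          omega
        -- δ within a half is < D
        have hsame : ∀ i j, a ≤ i → i < j → j ≤ c →
            (v i).testBit D = (v j).testBit D → δ (v i) (v j) < D := by
          intro i j h1 h2 h3 heq
          have hjn : j < n := lt_of_le_of_lt h3 hcn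
          obtain ⟨hd, _⟩ := hδ (v i) (v j) (hne i j h2 hjn)
          rcases lt_trichotomy (δ (v i) (v j)) D with h | h | h
          · exact h
          · rw [h] at hd; exact absurd heq hd
          · rw [hprefix i h1 (by omega) _ h, hprefix j (by omega) h3 _ h] at hd
            exact absurd rfl hd
        have hDM : D < M := hδM a c hac hcn
        by_cases hhalf : lo + 2^t ≤ m
        · -- left half has ≥ 2^t elements
          obtain ⟨S, hS1, hS2, hS3, hS4⟩ := ih ht1 lo (by omega)
          have hDS : ∀ b ∈ S, b < D := by
            intro b hb
            obtain ⟨i, j, h1, h2, h3, h4⟩ := hS4 b hb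
            rw [← h4]
            exact hsame i j h1 h2 (by omega)
              (by rw [hleft i h1 (by omega), hleft j (by omega) (by omega)])
          have hDnS : D ∉ S := fun h => absurd (hDS D h) (lt_irrefl D)
          refine ⟨insert D S, ?_, ?_, ?_, ?_⟩
          · exact Finset.insert_subset (Finset.mem_range.mpr hDM) hS1
          · rw [Finset.card_insert_of_notMem hDnS, hS2]
          · intro x hx y hy hxy
            rcases Finset.mem_insert.mp hx with hx' | hx' <;>
              rcases Finset.mem_insert.mp hy with hy' | hy'
            · exact absurd (hx'.trans hy'.symm) hxy
            · -- x = D, y ∈ S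
              obtain ⟨i, j, h1, h2, h3, h4⟩ := hS4 y hy'
              have hjc : j < c := by omega
              have := hcol i j c h2 hjc hcn
              rw [h4, hcross j c (by omega) (by omega) hmc (le_refl _)] at this
              rw [hx', Finset.pair_comm]
              exact this
            · -- x ∈ S, y = D
              obtain ⟨i, j, h1, h2, h3, h4⟩ := hS4 x hx'
              have hjc : j < c := by omega
              have := hcol i j c h2 hjc hcn
              rw [h4, hcross j c (by omega) (by omega) hmc (le_refl _)] at this
              rw [hy']
              exact this
            · exact hS3 x hx' y hy' hxy
          · intro b hb
            rcases Finset.mem_insert.mp hb with hb' | hb'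
            · exact ⟨a, c, le_refl _, hac, by omega, hb'.symm⟩
            · obtain ⟨i, j, h1, h2, h3, h4⟩ := hS4 b hb'
              exact ⟨i, j, h1, h2, by omega, h4⟩
        · -- right half has ≥ 2^t elements
          push_neg at hhalf
          have hm2t : m + 2^t ≤ n := by omega
          obtain ⟨S, hS1, hS2, hS3, hS4⟩ := ih ht1 m hm2t
          have hSc : m + 2^t ≤ c + 1 := by omega
          have hDS : ∀ b ∈ S, b < D := by
            intro b hb
            obtain ⟨i, j, h1, h2, h3, h4⟩ := hS4 b hb
            rw [← h4]
            exact hsame i j (by omega) h2 (by omega)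
              (by rw [hright i h1 (by omega), hright j (by omega) (by omega)])
          have hDnS : D ∉ S := fun h => absurd (hDS D h) (lt_irrefl D)
          refine ⟨insert D S, ?_, ?_, ?_, ?_⟩
          · exact Finset.insert_subset (Finset.mem_range.mpr hDM) hS1
          · rw [Finset.card_insert_of_notMem hDnS, hS2]
          · intro x hx y hy hxy
            rcases Finset.mem_insert.mp hx with hx' | hx' <;>
              rcases Finset.mem_insert.mp hy with hy' | hy'
            · exact absurd (hx'.trans hy'.symm) hxy
            · -- x = D, y ∈ S
              obtain ⟨i, j, h1, h2, h3, h4⟩ := hS4 y hy'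
              have hai : a < i := by omega
              have := hcol a i j hai h2 (by omega)
              rw [h4, hcross a i (le_refl _) (by omega) h1 (by omega)] at this
              rw [hx']
              exact this
            · -- x ∈ S, y = D
              obtain ⟨i, j, h1, h2, h3, h4⟩ := hS4 x hx'
              have hai : a < i := by omega
              have := hcol a i j hai h2 (by omega)
              rw [h4, hcross a i (le_refl _) (by omega) h1 (by omega)] at this
              rw [hy', Finset.pair_comm]
              exact this
            · exact hS3 x hx' y hy' hxy
          · intro b hb
            rcases Finset.mem_insert.mp hb with hb' | hb'
            · exact ⟨a, c, le_refl _, hac, by omega, hb'.symm⟩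
            · obtain ⟨i, j, h1, h2, h3, h4⟩ := hS4 b hb'
              exact ⟨i, j, by omega, h2, by omega, h4⟩
  obtain ⟨S, h1, h2, h3, _⟩ := key s (by omega) 0 (by omega)
  exact ⟨S, h1, h2, h3⟩
end

section
/- Let δ be any function on pairs of distinct elements of a linearly ordered finite set V satisfying: for all u < v < w, δ(u,v) ≠ δ(v,w), and for v₁ < ⋯ < v_r, δ(v₁,v_r) = max_j δ(v_j,v_{j+1}). Then for any v₁ < ⋯ < v_n, if δ_w = max_{1≤i≤n-1} δ(v_i, v_{i+1}), then δ_w > δ(v_i, v_{i+1}) for all i ≠ w, i.e., the maximum among consecutive δ-values is attained exactly once. -/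
/-- if δ satisfies Properties I and II of the stepping-up construction, then
for any increasing sequence the maximum among consecutive δ-values is attained exactly once,
and it strictly dominates all the other consecutive δ-values. -/
theorem stmt_19 {V L : Type*} [LinearOrder V] [Fintype V] [LinearOrder L]
    (δ : V → V → L)
    (hI : ∀ u v w : V, u < v → v < w → δ u v ≠ δ v w)
    (hII : ∀ (r : ℕ) (x : ℕ → V), 2 ≤ r → (∀ i j, i < j → j < r → x i < x j) →
      (∀ j, j < r - 1 → δ (x j) (x (j + 1)) ≤ δ (x 0) (x (r - 1))) ∧
        ∃ j, j < r - 1 ∧ δ (x 0) (x (r - 1)) = δ (x j) (x (j + 1)))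
    (n : ℕ) (hn : 2 ≤ n) (v : ℕ → V)
    (hmono : ∀ i j, i < j → j < n → v i < v j) :
    ∃! w : ℕ, w < n - 1 ∧ ∀ i, i < n - 1 → i ≠ w →
      δ (v i) (v (i + 1)) < δ (v w) (v (w + 1)) := by
  -- key : two indices a < b both attaining the maximum is impossible
  have key : ∀ a b, a < b → b < n - 1 →
      (∀ m, m < n - 1 → δ (v m) (v (m + 1)) ≤ δ (v a) (v (a + 1))) →
      δ (v a) (v (a + 1)) = δ (v b) (v (b + 1)) → False := by
    intro a b hab hb hmax heq
    set x : ℕ → V := fun k => v (a + 1 + k) with hx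
    have hr : 2 ≤ b - a + 1 := by omega
    have hxm : ∀ i j, i < j → j < b - a + 1 → x i < x j := by
      intro i j hij hj
      exact hmono _ _ (by omega) (by omega)
    obtain ⟨hle, k, hk, hkeq⟩ := hII (b - a + 1) x hr hxm
    have h1 : b - a + 1 - 1 = b - a := by omega
    -- δ (v b) (v (b+1)) ≤ δ (v (a+1)) (v (b+1))
    have h2 := hle (b - a - 1) (by omega)
    have e1 : a + 1 + (b - a - 1) = b := by omega
    have e2 : a + 1 + (b - a - 1 + 1) = b + 1 := by omega
    have e3 : a + 1 + 0 = a + 1 := by omega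
    have e4 : a + 1 + (b - a + 1 - 1) = b + 1 := by omega
    rw [hx] at h2 hkeq
    simp only [e1, e2, e3, e4] at h2 hkeq
    -- δ (v (a+1)) (v (b+1)) = δ (v (a+1+k)) (v (a+1+k+1)) ≤ max
    have h3 : a + 1 + k < n - 1 := by omega
    have h4 : δ (v (a + 1)) (v (b + 1)) ≤ δ (v a) (v (a + 1)) := by
      rw [hkeq]; exact hmax _ h3
    have h5 : δ (v a) (v (a + 1)) = δ (v (a + 1)) (v (b + 1)) :=
      le_antisymm (heq ▸ h2) h4
    exact hI (v a) (v (a + 1)) (v (b + 1))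
      (hmono _ _ (by omega) (by omega)) (hmono _ _ (by omega) (by omega)) h5
  obtain ⟨w, hw, hwmax⟩ := Finset.exists_max_image (Finset.range (n - 1))
    (fun i => δ (v i) (v (i + 1))) ⟨0, by simp; omega⟩
  rw [Finset.mem_range] at hw
  have hwmax' : ∀ m, m < n - 1 → δ (v m) (v (m + 1)) ≤ δ (v w) (v (w + 1)) := by
    intro m hm; exact hwmax m (Finset.mem_range.mpr hm)
  refine ⟨w, ⟨hw, fun i hi hiw => ?_⟩, ?_⟩
  · rcases lt_or_gt_of_ne hiw with h | h
    · refine lt_of_le_of_ne (hwmax' i hi) fun he => ?_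
      exact key i w h hw (fun m hm => he ▸ hwmax' m hm) he
    · exact lt_of_le_of_ne (hwmax' i hi) fun he =>
        key w i h hi hwmax' he.symm
  · rintro w' ⟨hw', hdom⟩
    by_contra hne
    exact absurd (hdom w hw (Ne.symm hne)) (not_lt.mpr (hwmax' w' hw'))
end
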